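/- arXiv:2003.13134 — 6 statements merged into one kernel-verified Lean document; each statement's English description precedes it below -/
import Mathlib

section
/- If X is a suborderable Hausdorff space, then the quotient space C[X] of connected components of X is strongly zero-dimensional. In particular, if C is a connected component of X and U ⊆ X is an open set containing C, then there exists a clopen set V ⊆ X with C ⊆ V ⊆ U. -/
open Topology

/-- A Hausdorff space is suborderable (Čech) if it admits a linear order whose
open-interval topology is coarser than its topology and which has a base of
order-convex open sets. -/
def Suborderable (X : Type*) [TopologicalSpace X] : Prop :=
  ∃ l : LinearOrder X,
    (∀ a : X, IsOpen {x | l.lt x a}) ∧ (∀ a : X, IsOpen {x | l.lt a x}) ∧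
    (∀ (x : X) (U : Set X), IsOpen U → x ∈ U →
      ∃ V : Set X, IsOpen V ∧ x ∈ V ∧ V ⊆ U ∧
        ∀ a ∈ V, ∀ b ∈ V, ∀ c : X, l.le a c → l.le c b → c ∈ V)

/-- A space is strongly zero-dimensional (covering dimension `≤ 0`): every
finite open cover has a finite refinement by pairwise disjoint open sets. -/
def StronglyZeroDimensional (X : Type*) [TopologicalSpace X] : Prop :=
  ∀ 𝒰 : Set (Set X), 𝒰.Finite → (∀ U ∈ 𝒰, IsOpen U) → ⋃₀ 𝒰 = Set.univ →
    ∃ 𝒱 : Set (Set X), 𝒱.Finite ∧ (∀ V ∈ 𝒱, IsOpen V) ∧ ⋃₀ 𝒱 = Set.univ ∧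
      (∀ V ∈ 𝒱, ∃ U ∈ 𝒰, V ⊆ U) ∧
      ∀ V ∈ 𝒱, ∀ W ∈ 𝒱, V ≠ W → V ∩ W = ∅

open Set
set_option linter.unusedSectionVars false
set_option linter.unusedVariables false
set_option linter.unnecessarySimpa false
attribute [local instance] Classical.propDecidable

section Dev
variable {X : Type*} [TopologicalSpace X] [LinearOrder X]

/-- order-convexity -/
def Cvx (S : Set X) : Prop := ∀ ⦃a⦄, a ∈ S → ∀ ⦃b⦄, b ∈ S → ∀ ⦃c⦄, a ≤ c → c ≤ b → c ∈ S

/-- saturated: union of connected components -/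
def Sat (S : Set X) : Prop := ∀ ⦃x⦄, x ∈ S → connectedComponent x ⊆ S

/-- global down-set -/
def Dwn (D : Set X) : Prop := ∀ ⦃u⦄, u ∈ D → ∀ ⦃v⦄, v ≤ u → v ∈ D

lemma cvx_inter {S T : Set X} (hS : Cvx S) (hT : Cvx T) : Cvx (S ∩ T) :=
  fun _ ha _ hb _ h1 h2 => ⟨hS ha.1 hb.1 h1 h2, hT ha.2 hb.2 h1 h2⟩

lemma cvx_union_overlap {S T : Set X} (hS : Cvx S) (hT : Cvx T) (hne : (S ∩ T).Nonempty) :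
    Cvx (S ∪ T) := by
  obtain ⟨p, hpS, hpT⟩ := hne
  rintro a (ha | ha) b (hb | hb) c h1 h2
  · exact Or.inl (hS ha hb h1 h2)
  · rcases le_total c p with h | h
    · exact Or.inl (hS ha hpS h1 h)
    · exact Or.inr (hT hpT hb h h2)
  · rcases le_total c p with h | h
    · exact Or.inr (hT ha hpT h1 h)
    · exact Or.inl (hS hpS hb h h2)
  · exact Or.inr (hT ha hb h1 h2)

lemma cvx_dwn {D : Set X} (hD : Dwn D) : Cvx D := fun _ _ _ hb _ _ h2 => hD hb h2

lemma sat_inter {S T : Set X} (hS : Sat S) (hT : Sat T) : Sat (S ∩ T) :=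
  fun _ hx => subset_inter (hS hx.1) (hT hx.2)

lemma sat_sUnion {𝒮 : Set (Set X)} (h : ∀ S ∈ 𝒮, Sat S) : Sat (⋃₀ 𝒮) := by
  rintro x ⟨S, hS, hxS⟩ y hy
  exact ⟨S, hS, h S hS hxS hy⟩

lemma sat_compl {S : Set X} (hS : Sat S) : Sat Sᶜ := by
  intro x hx y hy hyS
  have : x ∈ connectedComponent y := by
    rw [← connectedComponent_eq hy]; exact mem_connectedComponent
  exact hx (hS hyS this)

lemma IsClopen.sat {S : Set X} (h : IsClopen S) : Sat S := fun _ hx => h.connectedComponent_subset hx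

variable (h1 : ∀ a : X, IsOpen {x | x < a}) (h2 : ∀ a : X, IsOpen {x | a < x})
variable (h3 : ∀ (x : X) (U : Set X), IsOpen U → x ∈ U → ∃ V, IsOpen V ∧ x ∈ V ∧ V ⊆ U ∧ Cvx V)

include h1 h2 in
lemma comp_cvx (x : X) : Cvx (connectedComponent x) := by
  intro a ha b hb c hac hcb
  by_contra hc
  have hpre := (isConnected_connectedComponent (x := x)).isPreconnected
  rw [isPreconnected_iff_subset_of_disjoint] at hpre
  have hsub : connectedComponent x ⊆ {y | y < c} ∪ {y | c < y} := by
    intro y hy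
    rcases lt_trichotomy y c with h | h | h
    · exact Or.inl h
    · exact absurd (h ▸ hy) hc
    · exact Or.inr h
  have hdisj : connectedComponent x ∩ ({y | y < c} ∩ {y | c < y}) = ∅ := by
    ext y; simp only [mem_inter_iff, mem_setOf_eq, mem_empty_iff_false, iff_false]
    rintro ⟨_, hy1, hy2⟩; exact absurd (hy1.trans hy2) (lt_irrefl y)
  rcases hpre _ _ (h1 c) (h2 c) hsub hdisj with h | h
  · exact absurd (hcb.trans_lt (h hb)) (lt_irrefl c)
  · exact absurd ((h ha).trans_le hac) (lt_irrefl c)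

include h1 h2 h3 in
/-- The key separation lemma: if `a < b` are in different components, some clopen
down-set contains `a` but not `b`. -/
lemma sep_downset {a b : X} (hab : a < b) (hb : b ∉ connectedComponent a) :
    ∃ D : Set X, IsClopen D ∧ Dwn D ∧ a ∈ D ∧ b ∉ D := by
  by_contra hno
  push_neg at hno
  set E : Set X := {y | ∀ D : Set X, IsClopen D → Dwn D → (a ∈ D ↔ y ∈ D)} with hE
  have haE : a ∈ E := fun D _ _ => Iff.rfl
  have hbE : b ∈ E := by
    intro D hD hDd
    constructor
    · intro haD
      by_contra hbD
      exact hbD (hno D hD hDd haD)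
    · intro hbD
      exact hDd hbD hab.le
  have hEcvx : Cvx E := by
    intro y1 hy1 y2 hy2 c hc1 hc2
    intro D hD hDd
    constructor
    · intro haD
      exact hDd ((hy2 D hD hDd).1 haD) hc2
    · intro hcD
      exact (hy1 D hD hDd).2 (hDd hcD hc1)
  -- E is preconnected
  have hEpre : IsPreconnected E := by
    rw [isPreconnected_iff_subset_of_disjoint]
    intro u v hu hv hcov hdisj
    by_contra hcon
    push_neg at hcon
    obtain ⟨hnu, hnv⟩ := hcon
    rw [not_subset] at hnu hnv
    obtain ⟨p, hpE, hpu⟩ := hnu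
    obtain ⟨q, hqE, hqv⟩ := hnv
    have hpv : p ∈ v := (hcov hpE).resolve_left hpu
    have hqu : q ∈ u := (hcov hqE).resolve_right hqv
    -- wlog a₀ < b₀ with a₀ on the u side, b₀ on the v side
    have key : ∀ a₀ b₀ : X, a₀ ∈ E → b₀ ∈ E → a₀ < b₀ →
        ∀ u' v' : Set X, IsOpen u' → IsOpen v' → E ⊆ u' ∪ v' → E ∩ (u' ∩ v') = ∅ →
        a₀ ∈ u' → a₀ ∉ v' → b₀ ∈ v' → b₀ ∉ u' → False := by
      intro a₀ b₀ ha₀E hb₀E hlt u' v' hu' hv' hcov' hdisj' ha₀u ha₀v hb₀v hb₀u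
      set A : Set X := {y | a₀ ≤ y ∧ y ≤ b₀ ∧ y ∉ v'} with hA
      set B : Set X := {y | a₀ ≤ y ∧ y ≤ b₀ ∧ y ∉ u'} with hB
      have hIntE : ∀ y, a₀ ≤ y → y ≤ b₀ → y ∈ E := fun y hy1 hy2 => hEcvx ha₀E hb₀E hy1 hy2
      have hAB : ∀ y, a₀ ≤ y → y ≤ b₀ → y ∈ A ∨ y ∈ B := by
        intro y hy1 hy2
        have hyE := hIntE y hy1 hy2
        by_cases hyv : y ∈ v'
        · right
          refine ⟨hy1, hy2, fun hyu => ?_⟩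
          have : y ∈ E ∩ (u' ∩ v') := ⟨hyE, hyu, hyv⟩
          rw [hdisj'] at this; exact this
        · left; exact ⟨hy1, hy2, hyv⟩
      have hABdisj : ∀ y, y ∈ A → y ∈ B → False := by
        rintro y ⟨hy1, hy2, hyv⟩ ⟨_, _, hyu⟩
        rcases hcov' (hIntE y hy1 hy2) with h | h
        exacts [hyu h, hyv h]
      have hAclosed : IsClosed A := by
        have : A = {y | a₀ ≤ y} ∩ ({y | y ≤ b₀} ∩ v'ᶜ) := by
          ext y; simp [hA, mem_setOf_eq, and_assoc]
        rw [this]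
        refine IsClosed.inter ?_ (IsClosed.inter ?_ hv'.isClosed_compl)
        · have : {y : X | a₀ ≤ y} = {y | y < a₀}ᶜ := by ext y; simp [not_lt]
          rw [this]; exact (h1 a₀).isClosed_compl
        · have : {y : X | y ≤ b₀} = {y | b₀ < y}ᶜ := by ext y; simp [not_lt]
          rw [this]; exact (h2 b₀).isClosed_compl
      have hBclosed : IsClosed B := by
        have : B = {y | a₀ ≤ y} ∩ ({y | y ≤ b₀} ∩ u'ᶜ) := by
          ext y; simp [hB, mem_setOf_eq, and_assoc]
        rw [this]
        refine IsClosed.inter ?_ (IsClosed.inter ?_ hu'.isClosed_compl)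
        · have : {y : X | a₀ ≤ y} = {y | y < a₀}ᶜ := by ext y; simp [not_lt]
          rw [this]; exact (h1 a₀).isClosed_compl
        · have : {y : X | y ≤ b₀} = {y | b₀ < y}ᶜ := by ext y; simp [not_lt]
          rw [this]; exact (h2 b₀).isClosed_compl
      have ha₀A : a₀ ∈ A := ⟨le_refl _, hlt.le, ha₀v⟩
      have hb₀B : b₀ ∈ B := ⟨hlt.le, le_refl _, hb₀u⟩
      set D : Set X := {z | ∀ y, a₀ ≤ y → y ≤ z → y ∉ B} with hD
      have hDdwn : Dwn D := fun z hz w hw y hy1 hy2 => hz y hy1 (hy2.trans hw)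
      have ha₀D : a₀ ∈ D := by
        intro y hy1 hy2
        have : y = a₀ := le_antisymm hy2 hy1
        rw [this]; intro hyB; exact hABdisj a₀ ha₀A hyB
      have hb₀D : b₀ ∉ D := fun h => h b₀ hlt.le (le_refl _) hb₀B
      have hDopen : IsOpen D := by
        rw [isOpen_iff_mem_nhds]
        intro z hzD
        rcases lt_or_ge z a₀ with hza | haz
        · refine Filter.mem_of_superset ((h1 a₀).mem_nhds hza) ?_
          intro w hw y hy1 hy2
          exact absurd (hy1.trans hy2) (not_le.mpr hw)
        · have hzb : z ≤ b₀ := by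
            by_contra hzb
            exact hb₀D (fun y hy1 hy2 => hzD y hy1 (hy2.trans (not_le.mp hzb).le))
          have hzB : z ∉ B := fun hB' => hzD z haz (le_refl _) hB'
          have hzA : z ∈ A := (hAB z haz hzb).resolve_right hzB
          obtain ⟨N, hNopen, hzN, hNsub, hNcvx⟩ := h3 z Bᶜ hBclosed.isOpen_compl hzB
          have hzb' : z < b₀ := lt_of_le_of_ne hzb (fun h => hABdisj b₀ (h ▸ hzA) hb₀B)
          refine Filter.mem_of_superset ((hNopen.inter (h1 b₀)).mem_nhds ⟨hzN, hzb'⟩) ?_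
          rintro w ⟨hwN, hwb⟩ y hy1 hy2 hyB
          rcases le_or_gt y z with hyz | hzy
          · exact hzD y hy1 hyz hyB
          · have hyN : y ∈ N ∩ {t | t < b₀} :=
              cvx_inter hNcvx (cvx_dwn (fun u' hu' v' hv' => hv'.trans_lt hu'))
                ⟨hzN, hzb'⟩ ⟨hwN, hwb⟩ hzy.le hy2
            exact hNsub hyN.1 hyB
      have hDclosed : IsClosed D := by
        rw [← isOpen_compl_iff, isOpen_iff_mem_nhds]
        intro z hzD
        simp only [mem_compl_iff, hD, mem_setOf_eq, not_forall] at hzD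
        obtain ⟨y, hy1, hy2, hyB⟩ := hzD
        push_neg at hyB
        rcases lt_or_eq_of_le hy2 with hyz | hyz
        · refine Filter.mem_of_superset ((h2 y).mem_nhds hyz) ?_
          intro w hw
          simp only [mem_compl_iff, hD, mem_setOf_eq, not_forall]
          exact ⟨y, hy1, le_of_lt hw, fun h => h hyB⟩
        · subst hyz
          rename_i hzD'
          -- now the old z is y; y ∈ B
          have hzA : y ∉ A := fun h => hABdisj y h hyB
          obtain ⟨N, hNopen, hzN, hNsub, hNcvx⟩ := h3 y Aᶜ hAclosed.isOpen_compl hzA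
          have ha₀z : a₀ < y := lt_of_le_of_ne hy1 (fun h => hABdisj a₀ ha₀A (h ▸ hyB))
          refine Filter.mem_of_superset ((hNopen.inter (h2 a₀)).mem_nhds ⟨hzN, ha₀z⟩) ?_
          rintro w ⟨hwN, hwa⟩
          simp only [mem_compl_iff, hD, mem_setOf_eq, not_forall]
          rcases le_or_gt y w with hzw | hwz
          · exact ⟨y, hy1, hzw, fun h => h hyB⟩
          · have hwa' : a₀ ≤ w := le_of_lt hwa
            have hwb : w ≤ b₀ := hwz.le.trans hyB.2.1
            have hwB : w ∈ B := by
              rcases hAB w hwa' hwb with h | h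
              · exact absurd h (hNsub hwN)
              · exact h
            exact ⟨w, hwa', le_refl _, fun h => h hwB⟩
      -- contradiction
      have ha' : a ∈ D := (ha₀E D ⟨hDclosed, hDopen⟩ hDdwn).2 ha₀D
      exact hb₀D ((hb₀E D ⟨hDclosed, hDopen⟩ hDdwn).1 ha')
    have hdisj2 : E ∩ (v ∩ u) = ∅ := by rwa [Set.inter_comm u v] at hdisj
    rcases lt_trichotomy p q with hpq | hpq | hpq
    · exact key p q hpE hqE hpq v u hv hu (fun y hy => (hcov hy).symm) hdisj2 hpv hpu hqu hqv
    · subst hpq; exact hpu hqu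
    · exact key q p hqE hpE hpq u v hu hv hcov hdisj hqu hqv hpv hpu
  exact hb (hEpre.subset_connectedComponent haE hbE)

lemma comp_symm_not {x y : X} (h : y ∉ connectedComponent x) : x ∉ connectedComponent y := by
  intro hx
  exact h ((connectedComponent_eq hx) ▸ mem_connectedComponent)

lemma cvx_up {E : Set X} (hE : ∀ ⦃u⦄, u ∈ E → ∀ ⦃v⦄, u ≤ v → v ∈ E) : Cvx E :=
  fun _ ha _ _ _ h1 _ => hE ha h1

include h1 h2 h3 in
/-- Lemma A: between a connected component and an open superset there is a clopen convex set. -/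
lemma clopen_cvx_between {x : X} {W : Set X} (hW : IsOpen W)
    (hsub : connectedComponent x ⊆ W) :
    ∃ V : Set X, IsClopen V ∧ Cvx V ∧ connectedComponent x ⊆ V ∧ V ⊆ W := by
  classical
  set 𝒪 : Set (Set X) := {O | IsOpen O ∧ Cvx O ∧ O ⊆ W ∧ (O ∩ connectedComponent x).Nonempty}
    with h𝒪
  set V₀ : Set X := ⋃₀ 𝒪 with hV₀
  have hcs : connectedComponent x ⊆ V₀ := by
    intro c hc
    obtain ⟨N, hNo, hcN, hNW, hNc⟩ := h3 c W hW (hsub hc)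
    exact ⟨N, ⟨hNo, hNc, hNW, ⟨c, hcN, hc⟩⟩, hcN⟩
  have hxV₀ : x ∈ V₀ := hcs mem_connectedComponent
  have hV₀W : V₀ ⊆ W := fun y => fun ⟨O, hO, hyO⟩ => hO.2.2.1 hyO
  have hV₀o : IsOpen V₀ := isOpen_sUnion (fun O hO => hO.1)
  have hcompcvx : Cvx (connectedComponent x) := comp_cvx h1 h2 x
  have hOc : ∀ O ∈ 𝒪, Cvx (O ∪ connectedComponent x) := by
    intro O hO
    exact cvx_union_overlap hO.2.1 hcompcvx hO.2.2.2
  have hV₀cvx : Cvx V₀ := by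
    rintro a ⟨Oa, hOa, haO⟩ b ⟨Ob, hOb, hbO⟩ c h1' h2'
    rcases le_total c x with h | h
    · have : c ∈ Oa ∪ connectedComponent x :=
        hOc Oa hOa (Or.inl haO) (Or.inr mem_connectedComponent) h1' h
      rcases this with h' | h'
      · exact ⟨Oa, hOa, h'⟩
      · exact hcs h'
    · have : c ∈ Ob ∪ connectedComponent x :=
        hOc Ob hOb (Or.inr mem_connectedComponent) (Or.inl hbO) h h2'
      rcases this with h' | h'
      · exact ⟨Ob, hOb, h'⟩
      · exact hcs h'
  have habs : ∀ N : Set X, IsOpen N → Cvx N → N ⊆ W → (N ∩ V₀).Nonempty → N ⊆ V₀ := by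
    rintro N hNo hNc hNW ⟨p, hpN, O, hO, hpO⟩
    intro n hn
    refine ⟨N ∪ O, ⟨hNo.union hO.1, cvx_union_overlap hNc hO.2.1 ⟨p, hpN, hpO⟩,
      union_subset hNW hO.2.2.1, ?_⟩, Or.inl hn⟩
    obtain ⟨q, hq1, hq2⟩ := hO.2.2.2
    exact ⟨q, Or.inr hq1, hq2⟩
  have hbadW : ∀ y, y ∈ closure V₀ → y ∉ V₀ → y ∉ W := by
    intro y hy1 hy2 hyW
    obtain ⟨N, hNo, hyN, hNW, hNc⟩ := h3 y W hW hyW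
    have : (N ∩ V₀).Nonempty := by
      rw [mem_closure_iff] at hy1
      exact hy1 N hNo hyN
    exact hy2 (habs N hNo hNc hNW this hyN)
  set BadU : X → Prop := fun y => y ∈ closure V₀ ∧ y ∉ V₀ ∧ ∀ v ∈ V₀, v < y with hBadU
  set BadL : X → Prop := fun y => y ∈ closure V₀ ∧ y ∉ V₀ ∧ ∀ v ∈ V₀, y < v with hBadL
  have hbadUuniq : ∀ y₁ y₂, BadU y₁ → BadU y₂ → y₁ = y₂ := by
    intro y₁ y₂ hb1 hb2
    rcases lt_trichotomy y₁ y₂ with h | h | h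
    · have hcl := hb2.1; rw [mem_closure_iff] at hcl
      obtain ⟨v, hv1, hv2⟩ := hcl _ (h2 y₁) h
      exact absurd hv1 (not_lt.mpr (hb1.2.2 v hv2).le)
    · exact h
    · have hcl := hb1.1; rw [mem_closure_iff] at hcl
      obtain ⟨v, hv1, hv2⟩ := hcl _ (h2 y₂) h
      exact absurd hv1 (not_lt.mpr (hb2.2.2 v hv2).le)
  have hbadLuniq : ∀ y₁ y₂, BadL y₁ → BadL y₂ → y₁ = y₂ := by
    intro y₁ y₂ hb1 hb2
    rcases lt_trichotomy y₁ y₂ with h | h | h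
    · have hcl := hb1.1; rw [mem_closure_iff] at hcl
      obtain ⟨v, hv1, hv2⟩ := hcl _ (h1 y₂) h
      exact absurd hv1 (not_lt.mpr (hb2.2.2 v hv2).le)
    · exact h
    · have hcl := hb2.1; rw [mem_closure_iff] at hcl
      obtain ⟨v, hv1, hv2⟩ := hcl _ (h1 y₁) h
      exact absurd hv1 (not_lt.mpr (hb1.2.2 v hv2).le)
  -- choose the clopen down-set guard for the possible upper bad point
  have hDU : ∃ DU : Set X, IsClopen DU ∧ Dwn DU ∧ x ∈ DU ∧ ∀ y, BadU y → y ∉ DU := by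
    by_cases hex : ∃ y, BadU y
    · obtain ⟨y, hy⟩ := hex
      have hyW : y ∉ W := hbadW y hy.1 hy.2.1
      have hyc : y ∉ connectedComponent x := fun h => hyW (hsub h)
      have hxy : x < y := hy.2.2 x hxV₀
      obtain ⟨D, hD1, hD2, hD3, hD4⟩ := sep_downset h1 h2 h3 hxy hyc
      exact ⟨D, hD1, hD2, hD3, fun y' hy' => (hbadUuniq y' y hy' hy) ▸ hD4⟩
    · exact ⟨univ, isClopen_univ, fun _ _ _ _ => trivial, trivial,
        fun y hy => absurd ⟨y, hy⟩ hex⟩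
  have hEL : ∃ EL : Set X, IsClopen EL ∧ (∀ ⦃u⦄, u ∈ EL → ∀ ⦃v⦄, u ≤ v → v ∈ EL) ∧ x ∈ EL ∧
      ∀ y, BadL y → y ∉ EL := by
    by_cases hex : ∃ y, BadL y
    · obtain ⟨y, hy⟩ := hex
      have hyW : y ∉ W := hbadW y hy.1 hy.2.1
      have hyc : y ∉ connectedComponent x := fun h => hyW (hsub h)
      have hxy : y < x := hy.2.2 x hxV₀
      obtain ⟨D, hD1, hD2, hD3, hD4⟩ := sep_downset h1 h2 h3 hxy (comp_symm_not hyc)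
      refine ⟨Dᶜ, hD1.compl, ?_, hD4, fun y' hy' => (hbadLuniq y' y hy' hy) ▸ (by simpa using hD3)⟩
      intro u hu v huv hvD
      exact hu (hD2 hvD huv)
    · exact ⟨univ, isClopen_univ, fun _ _ _ _ => trivial, trivial,
        fun y hy => absurd ⟨y, hy⟩ hex⟩
  obtain ⟨DU, hDU1, hDU2, hDU3, hDU4⟩ := hDU
  obtain ⟨EL, hEL1, hEL2, hEL3, hEL4⟩ := hEL
  set V : Set X := V₀ ∩ DU ∩ EL with hV
  have hVsub : V ⊆ V₀ := fun y hy => hy.1.1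
  have hcV : connectedComponent x ⊆ V := by
    intro c hc
    exact ⟨⟨hcs hc, hDU1.connectedComponent_subset hDU3 hc⟩,
      hEL1.connectedComponent_subset hEL3 hc⟩
  have hVo : IsOpen V := (hV₀o.inter hDU1.2).inter hEL1.2
  have hVclosed : IsClosed V := by
    rw [← closure_subset_iff_isClosed]
    intro y hy
    have hyDU : y ∈ DU := hDU1.1.closure_subset_iff.mpr (fun z hz => hz.1.2) hy
    have hyEL : y ∈ EL := hEL1.1.closure_subset_iff.mpr (fun z hz => hz.2) hy
    have hyV₀cl : y ∈ closure V₀ := closure_mono hVsub hy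
    by_cases hyV₀ : y ∈ V₀
    · exact ⟨⟨hyV₀, hyDU⟩, hyEL⟩
    · exfalso
      have hbad : BadU y ∨ BadL y := by
        by_cases hall : ∀ v ∈ V₀, v < y
        · exact Or.inl ⟨hyV₀cl, hyV₀, hall⟩
        · push_neg at hall
          obtain ⟨v₁, hv₁, hv₁y⟩ := hall
          have hyv₁ : y < v₁ := lt_of_le_of_ne hv₁y (fun h => hyV₀ (h ▸ hv₁))
          refine Or.inr ⟨hyV₀cl, hyV₀, fun v hv => ?_⟩
          rcases lt_trichotomy y v with h | h | h
          · exact h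
          · exact absurd (h ▸ hv) hyV₀
          · exact absurd (hV₀cvx hv hv₁ h.le hyv₁.le) hyV₀
      rcases hbad with h | h
      · exact hDU4 y h hyDU
      · exact hEL4 y h hyEL
  exact ⟨V, ⟨hVclosed, hVo⟩, cvx_inter (cvx_inter hV₀cvx (cvx_dwn hDU2)) (cvx_up hEL2),
    hcV, fun y hy => hV₀W hy.1.1⟩

/-- union of all clopen convex sets containing `z` and avoiding `A` -/
def Bset (A : Set X) (z : X) : Set X :=
  ⋃₀ {C : Set X | IsClopen C ∧ Cvx C ∧ z ∈ C ∧ C ∩ A = ∅}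

lemma Bset_open (A : Set X) (z : X) : IsOpen (Bset A z) :=
  isOpen_sUnion (fun C hC => hC.1.2)

lemma Bset_sat (A : Set X) (z : X) : Sat (Bset A z) :=
  sat_sUnion (fun C hC => hC.1.sat)

lemma Bset_avoid (A : Set X) (z : X) : Bset A z ∩ A = ∅ := by
  ext y
  simp only [mem_inter_iff, mem_empty_iff_false, iff_false, not_and]
  rintro ⟨C, hC, hyC⟩ hyA
  have : y ∈ C ∩ A := ⟨hyC, hyA⟩
  rw [hC.2.2.2] at this
  exact this

lemma Bset_cvx (A : Set X) (z : X) : Cvx (Bset A z) := by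
  rintro a ⟨Ca, hCa, haC⟩ b ⟨Cb, hCb, hbC⟩ c hac hcb
  rcases le_total c z with h | h
  · exact ⟨Ca, hCa, hCa.2.1 haC hCa.2.2.1 hac h⟩
  · exact ⟨Cb, hCb, hCb.2.1 hCb.2.2.1 hbC h hcb⟩

lemma Bset_absorb {A : Set X} {z : X} {C : Set X} (hC : IsClopen C) (hCc : Cvx C)
    (hCA : C ∩ A = ∅) (hne : (C ∩ Bset A z).Nonempty) : C ⊆ Bset A z := by
  obtain ⟨p, hpC, C', hC', hpC'⟩ := hne
  intro c hc
  refine ⟨C ∪ C', ⟨hC.union hC'.1, cvx_union_overlap hCc hC'.2.1 ⟨p, hpC, hpC'⟩,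
    Or.inr hC'.2.2.1, ?_⟩, Or.inl hc⟩
  rw [union_inter_distrib_right, hCA, hC'.2.2.2, union_empty]

lemma Bset_mono_of_mem {A : Set X} {z z' : X} (h : z' ∈ Bset A z) : Bset A z' ⊆ Bset A z := by
  rintro y ⟨C', hC', hyC'⟩
  exact Bset_absorb hC'.1 hC'.2.1 hC'.2.2.2 ⟨z', hC'.2.2.1, h⟩ hyC'

lemma Bset_eq_of_mem {A : Set X} {z z' : X} (h : z' ∈ Bset A z) : Bset A z' = Bset A z := by
  refine Subset.antisymm (Bset_mono_of_mem h) ?_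
  obtain ⟨C, hC, hz'C⟩ := h
  have hzB : z ∈ Bset A z' := ⟨C, ⟨hC.1, hC.2.1, hz'C, hC.2.2.2⟩, hC.2.2.1⟩
  exact Bset_mono_of_mem hzB

lemma Bset_disj_or_eq {A : Set X} (z z' : X) :
    Bset A z ∩ Bset A z' = ∅ ∨ Bset A z = Bset A z' := by
  by_cases h : (Bset A z ∩ Bset A z').Nonempty
  · obtain ⟨p, hp, hp'⟩ := h
    exact Or.inr ((Bset_eq_of_mem hp).symm.trans (Bset_eq_of_mem hp'))
  · exact Or.inl (not_nonempty_iff_eq_empty.mp h)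

lemma comp_disjoint_of_not_mem {A : Set X} (hAs : Sat A) {z : X} (hz : z ∉ A) :
    connectedComponent z ⊆ Aᶜ := by
  intro c hc hcA
  exact hz (hAs hcA ((connectedComponent_eq hc) ▸ mem_connectedComponent))

include h1 h2 h3 in
lemma mem_Bset {A : Set X} (hA : IsClosed A) (hAs : Sat A) {z : X} (hz : z ∉ A) :
    z ∈ Bset A z := by
  obtain ⟨C, hC1, hC2, hC3, hC4⟩ :=
    clopen_cvx_between h1 h2 h3 hA.isOpen_compl (comp_disjoint_of_not_mem hAs hz)
  refine ⟨C, ⟨hC1, hC2, hC3 mem_connectedComponent,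
    eq_empty_iff_forall_notMem.mpr (fun y hy => hC4 hy.1 hy.2)⟩, hC3 mem_connectedComponent⟩

include h1 h2 h3 in
lemma cut_exists {O : Set X} (hOo : IsOpen O) (hOc : Cvx O) (hOs : Sat O) (hOne : O.Nonempty) :
    ∃ D : Set X, D ⊆ O ∧ IsOpen D ∧ IsOpen (O \ D) ∧
      (∀ ⦃a⦄, a ∈ D → ∀ ⦃b⦄, b ∈ O → b ≤ a → b ∈ D) ∧
      D.Nonempty ∧ ((O \ D).Nonempty ∨ IsClosed O) := by
  by_cases hex : ∃ z₁ ∈ O, ∃ z₂ ∈ O, z₂ ∉ connectedComponent z₁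
  · obtain ⟨w1, hw1, w2, hw2, hw⟩ := hex
    obtain ⟨z₁, hz₁, z₂, hz₂, hlt, hcomp⟩ :
        ∃ z₁ ∈ O, ∃ z₂ ∈ O, z₁ < z₂ ∧ z₂ ∉ connectedComponent z₁ := by
      rcases lt_trichotomy w1 w2 with h | h | h
      · exact ⟨w1, hw1, w2, hw2, h, hw⟩
      · exact absurd (h ▸ mem_connectedComponent) hw
      · exact ⟨w2, hw2, w1, hw1, h, comp_symm_not hw⟩
    have hsubc : connectedComponent z₁ ⊆ O ∩ {t | t < z₂} := by
      intro c hc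
      refine ⟨hOs hz₁ hc, ?_⟩
      by_contra hcz
      simp only [mem_setOf_eq, not_lt] at hcz
      exact hcomp (comp_cvx h1 h2 z₁ mem_connectedComponent hc hlt.le hcz)
    obtain ⟨N, hN1, hN2, hN3, hN4⟩ :=
      clopen_cvx_between h1 h2 h3 (hOo.inter (h1 z₂)) hsubc
    refine ⟨{y | y ∈ O ∧ ∃ n ∈ N, y ≤ n}, fun y hy => hy.1, ?_, ?_, ?_, ?_, ?_⟩
    · rw [isOpen_iff_mem_nhds]
      rintro y ⟨hyO, n, hnN, hyn⟩
      by_cases hyN : y ∈ N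
      · refine Filter.mem_of_superset (hN1.2.mem_nhds hyN) ?_
        intro m hm
        exact ⟨(hN4 hm).1, m, hm, le_refl _⟩
      · have hylt : y < n := lt_of_le_of_ne hyn (fun h => hyN (h ▸ hnN))
        refine Filter.mem_of_superset ((hOo.inter (h1 n)).mem_nhds ⟨hyO, hylt⟩) ?_
        rintro m ⟨hmO, hmn⟩
        exact ⟨hmO, n, hnN, hmn.le⟩
    · rw [isOpen_iff_mem_nhds]
      rintro y ⟨hyO, hyD⟩
      simp only [mem_setOf_eq, not_and, not_exists, not_le] at hyD
      have hally : ∀ n ∈ N, n < y := hyD hyO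
      have hyN : y ∉ N := fun h => absurd (hally y h) (lt_irrefl y)
      obtain ⟨M, hMo, hyM, hMsub, hMcvx⟩ := h3 y Nᶜ hN1.1.isOpen_compl hyN
      refine Filter.mem_of_superset ((hMo.inter hOo).mem_nhds ⟨hyM, hyO⟩) ?_
      rintro m ⟨hmM, hmO⟩
      refine ⟨hmO, ?_⟩
      simp only [mem_setOf_eq, not_and, not_exists, not_le]
      intro _ n hnN
      by_contra hmn
      push_neg at hmn
      exact hMsub (hMcvx hmM hyM hmn (hally n hnN).le) hnN
    · rintro a ⟨haO, n, hnN, han⟩ b hbO hba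
      exact ⟨hbO, n, hnN, hba.trans han⟩
    · exact ⟨z₁, hz₁, z₁, hN3 mem_connectedComponent, le_refl _⟩
    · left
      refine ⟨z₂, hz₂, ?_⟩
      rintro ⟨_, n, hnN, hzn⟩
      exact absurd ((hN4 hnN).2) (not_lt.mpr hzn)
  · push_neg at hex
    obtain ⟨u, hu⟩ := id hOne
    have hOeq : O = connectedComponent u :=
      Subset.antisymm (fun z hz => hex u hu z hz) (hOs hu)
    exact ⟨O, Subset.rfl, hOo, by simp, fun a _ b hb _ => hb, hOne,
      Or.inr (hOeq ▸ isClosed_connectedComponent)⟩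

def AboveS (Q P : Set X) : Prop := ∃ w ∈ Q, ∀ p ∈ P, p < w

def BelowS (Q P : Set X) : Prop := ∃ w ∈ Q, ∀ p ∈ P, w < p

lemma stick_side {P : Set X} (hPc : Cvx P) {Q : Set X} {w : X} (hw : w ∈ Q) (hwP : w ∉ P) :
    (∀ p ∈ P, p < w) ∨ (∀ p ∈ P, w < p) := by
  by_cases hl : ∀ p ∈ P, p < w
  · exact Or.inl hl
  · push_neg at hl
    obtain ⟨p₂, hp₂, hwp₂⟩ := hl
    right
    intro p hp
    rcases lt_trichotomy w p with h | h | h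
    · exact h
    · exact absurd (h ▸ hp) hwP
    · exact absurd (hPc hp hp₂ h.le hwp₂) hwP

lemma not_above_below {P Q : Set X} (hQc : Cvx Q) (ha : AboveS Q P) (hb : BelowS Q P) :
    P ⊆ Q := by
  obtain ⟨w, hwQ, hwa⟩ := ha
  obtain ⟨w', hw'Q, hwb⟩ := hb
  intro p hp
  exact hQc hw'Q hwQ (hwb p hp).le (hwa p hp).le

lemma above_final_seg {P Q : Set X} (hQc : Cvx Q) (ha : AboveS Q P) {o p : X}
    (ho : o ∈ P ∩ Q) (hp : p ∈ P) (hop : o ≤ p) : p ∈ Q := by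
  obtain ⟨w, hwQ, hwa⟩ := ha
  exact hQc ho.2 hwQ hop (hwa p hp).le

lemma below_initial_seg {P Q : Set X} (hQc : Cvx Q) (hb : BelowS Q P) {o p : X}
    (ho : o ∈ P ∩ Q) (hp : p ∈ P) (hop : p ≤ o) : p ∈ Q := by
  obtain ⟨w, hwQ, hwb⟩ := hb
  exact hQc hwQ ho.2 (hwb p hp).le hop

lemma above_partner_unique {P Q₁ Q₂ : Set X} (hQ₁c : Cvx Q₁) (hQ₂c : Cvx Q₂)
    (hdisj : Q₁ ∩ Q₂ = ∅ ∨ Q₁ = Q₂) (h₁ : (Q₁ ∩ P).Nonempty) (h₂ : (Q₂ ∩ P).Nonempty)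
    (ha₁ : AboveS Q₁ P) (ha₂ : AboveS Q₂ P) : Q₁ = Q₂ := by
  rcases hdisj with hdisj | hdisj
  · exfalso
    obtain ⟨p₁, hp₁Q, hp₁P⟩ := h₁
    obtain ⟨p₂, hp₂Q, hp₂P⟩ := h₂
    obtain ⟨w₁, hw₁Q, hw₁⟩ := ha₁
    obtain ⟨w₂, hw₂Q, hw₂⟩ := ha₂
    rcases le_total p₁ p₂ with h | h
    · have : p₂ ∈ Q₁ := hQ₁c hp₁Q hw₁Q h (hw₁ p₂ hp₂P).le
      rw [← mem_empty_iff_false p₂, ← hdisj]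
      exact ⟨this, hp₂Q⟩
    · have : p₁ ∈ Q₂ := hQ₂c hp₂Q hw₂Q h (hw₂ p₁ hp₁P).le
      rw [← mem_empty_iff_false p₁, ← hdisj]
      exact ⟨hp₁Q, this⟩
  · exact hdisj

lemma below_partner_unique {P Q₁ Q₂ : Set X} (hQ₁c : Cvx Q₁) (hQ₂c : Cvx Q₂)
    (hdisj : Q₁ ∩ Q₂ = ∅ ∨ Q₁ = Q₂) (h₁ : (Q₁ ∩ P).Nonempty) (h₂ : (Q₂ ∩ P).Nonempty)
    (hb₁ : BelowS Q₁ P) (hb₂ : BelowS Q₂ P) : Q₁ = Q₂ := by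
  rcases hdisj with hdisj | hdisj
  · exfalso
    obtain ⟨p₁, hp₁Q, hp₁P⟩ := h₁
    obtain ⟨p₂, hp₂Q, hp₂P⟩ := h₂
    obtain ⟨w₁, hw₁Q, hw₁⟩ := hb₁
    obtain ⟨w₂, hw₂Q, hw₂⟩ := hb₂
    rcases le_total p₁ p₂ with h | h
    · have : p₁ ∈ Q₂ := hQ₂c hw₂Q hp₂Q (hw₂ p₁ hp₁P).le h
      rw [← mem_empty_iff_false p₁, ← hdisj]
      exact ⟨hp₁Q, this⟩
    · have : p₂ ∈ Q₁ := hQ₁c hw₁Q hp₁Q (hw₁ p₂ hp₂P).le h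
      rw [← mem_empty_iff_false p₂, ← hdisj]
      exact ⟨this, hp₂Q⟩
  · exact hdisj

noncomputable def topP (F G P : Set X) : Set X :=
  if h : ∃ Q : Set X, (∃ g ∈ G, Q = Bset F g) ∧ (Q ∩ P).Nonempty ∧ AboveS Q P then h.choose
  else ∅

noncomputable def botP (F G P : Set X) : Set X :=
  if h : ∃ Q : Set X, (∃ g ∈ G, Q = Bset F g) ∧ (Q ∩ P).Nonempty ∧ BelowS Q P then h.choose
  else ∅

lemma topP_spec {F G P : Set X}
    (h : ∃ Q : Set X, (∃ g ∈ G, Q = Bset F g) ∧ (Q ∩ P).Nonempty ∧ AboveS Q P) :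
    (∃ g ∈ G, topP F G P = Bset F g) ∧ ((topP F G P) ∩ P).Nonempty ∧ AboveS (topP F G P) P := by
  rw [topP, dif_pos h]
  exact h.choose_spec

lemma topP_empty {F G P : Set X}
    (h : ¬ ∃ Q : Set X, (∃ g ∈ G, Q = Bset F g) ∧ (Q ∩ P).Nonempty ∧ AboveS Q P) :
    topP F G P = ∅ := by
  rw [topP, dif_neg h]

lemma botP_spec {F G P : Set X}
    (h : ∃ Q : Set X, (∃ g ∈ G, Q = Bset F g) ∧ (Q ∩ P).Nonempty ∧ BelowS Q P) :
    (∃ g ∈ G, botP F G P = Bset F g) ∧ ((botP F G P) ∩ P).Nonempty ∧ BelowS (botP F G P) P := by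
  rw [botP, dif_pos h]
  exact h.choose_spec

lemma botP_empty {F G P : Set X}
    (h : ¬ ∃ Q : Set X, (∃ g ∈ G, Q = Bset F g) ∧ (Q ∩ P).Nonempty ∧ BelowS Q P) :
    botP F G P = ∅ := by
  rw [botP, dif_neg h]

noncomputable def cutD (O : Set X) : Set X :=
  if h : IsOpen O ∧ Cvx O ∧ Sat O ∧ O.Nonempty then
    (cut_exists h1 h2 h3 h.1 h.2.1 h.2.2.1 h.2.2.2).choose
  else ∅

lemma cutD_spec {O : Set X} (hOo : IsOpen O) (hOc : Cvx O) (hOs : Sat O) (hne : O.Nonempty) :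
    cutD h1 h2 h3 O ⊆ O ∧ IsOpen (cutD h1 h2 h3 O) ∧ IsOpen (O \ cutD h1 h2 h3 O) ∧
      (∀ ⦃a⦄, a ∈ cutD h1 h2 h3 O → ∀ ⦃b⦄, b ∈ O → b ≤ a → b ∈ cutD h1 h2 h3 O) ∧
      (cutD h1 h2 h3 O).Nonempty ∧ ((O \ cutD h1 h2 h3 O).Nonempty ∨ IsClosed O) := by
  rw [cutD, dif_pos ⟨hOo, hOc, hOs, hne⟩]
  exact (cut_exists h1 h2 h3 hOo hOc hOs hne).choose_spec

lemma cutD_of_empty {O : Set X} (h : O = ∅) : cutD h1 h2 h3 O = ∅ := by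
  rw [cutD, dif_neg]
  rintro ⟨_, _, _, hne⟩
  rw [h] at hne
  exact not_nonempty_empty hne

lemma not_mem_closure_of_open {S V : Set X} {u : X} (hV : IsOpen V) (hu : u ∈ V)
    (hVS : V ∩ S = ∅) : u ∉ closure S := by
  intro h
  rw [mem_closure_iff] at h
  have := h V hV hu
  rw [hVS] at this
  exact not_nonempty_empty this

lemma exT_of_ne {F G P : Set X} (hne : (P ∩ topP F G P).Nonempty) :
    ∃ Q : Set X, (∃ g ∈ G, Q = Bset F g) ∧ (Q ∩ P).Nonempty ∧ AboveS Q P := by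
  by_contra h
  rw [topP_empty h, inter_empty] at hne
  exact not_nonempty_empty hne

lemma exB_of_ne {F G P : Set X} (hne : (P ∩ botP F G P).Nonempty) :
    ∃ Q : Set X, (∃ g ∈ G, Q = Bset F g) ∧ (Q ∩ P).Nonempty ∧ BelowS Q P := by
  by_contra h
  rw [botP_empty h, inter_empty] at hne
  exact not_nonempty_empty hne

lemma aboveS_flip {P Q : Set X} (hQc : Cvx Q) (ha : AboveS Q P) {f : X} (hf : f ∈ P)
    (hfQ : f ∉ Q) : BelowS P Q := by
  obtain ⟨w, hwQ, hwa⟩ := ha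
  rcases stick_side hQc (mem_singleton f) hfQ with h | h
  · exact absurd (hwa f hf) (not_lt.mpr (h w hwQ).le)
  · exact ⟨f, hf, h⟩

lemma belowS_flip {P Q : Set X} (hQc : Cvx Q) (hb : BelowS Q P) {f : X} (hf : f ∈ P)
    (hfQ : f ∉ Q) : AboveS P Q := by
  obtain ⟨w, hwQ, hwb⟩ := hb
  rcases stick_side hQc (mem_singleton f) hfQ with h | h
  · exact ⟨f, hf, h⟩
  · exact absurd (hwb f hf) (not_lt.mpr (h w hwQ).le)

/-- the trimmed piece: remove the upper part of the top overlap and the lower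
part of the bottom overlap -/
noncomputable def PfSet (F G P : Set X) : Set X :=
  P \ (((P ∩ topP F G P) \ cutD h1 h2 h3 (P ∩ topP F G P)) ∪ cutD h1 h2 h3 (P ∩ botP F G P))

/-- the separating set -/
noncomputable def Usep (F G : Set X) : Set X := ⋃ f ∈ F, PfSet h1 h2 h3 F G (Bset G f)

include h1 h2 h3 in
theorem clopen_sep {F G : Set X} (hF : IsClosed F) (hFs : Sat F) (hG : IsClosed G) (hGs : Sat G)
    (hd : F ∩ G = ∅) : ∃ U : Set X, IsClopen U ∧ F ⊆ U ∧ U ∩ G = ∅ := by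
  classical
  set U : Set X := Usep h1 h2 h3 F G with hU
  have hnotFG : ∀ z ∈ F, z ∉ G := fun z hz hzG => by
    rw [← mem_empty_iff_false z, ← hd]; exact ⟨hz, hzG⟩
  have hnotGF : ∀ z ∈ G, z ∉ F := fun z hz hzF => by
    rw [← mem_empty_iff_false z, ← hd]; exact ⟨hzF, hz⟩
  -- membership of the centers
  have hmemP : ∀ f ∈ F, f ∈ Bset G f := fun f hf => mem_Bset h1 h2 h3 hG hGs (hnotFG f hf)
  have hmemQ : ∀ g ∈ G, g ∈ Bset F g := fun g hg => mem_Bset h1 h2 h3 hF hFs (hnotGF g hg)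
  -- bundles for the top / bottom cut data
  have hTopBundle : ∀ P : Set X, IsOpen P → Cvx P → Sat P → (P ∩ topP F G P).Nonempty →
      (Cvx (topP F G P) ∧ (∃ g ∈ G, topP F G P = Bset F g) ∧
        AboveS (topP F G P) P ∧ ((topP F G P) ∩ P).Nonempty) ∧
      (cutD h1 h2 h3 (P ∩ topP F G P) ⊆ (P ∩ topP F G P) ∧
        IsOpen (cutD h1 h2 h3 (P ∩ topP F G P)) ∧
        IsOpen ((P ∩ topP F G P) \ cutD h1 h2 h3 (P ∩ topP F G P)) ∧
        (∀ ⦃a⦄, a ∈ cutD h1 h2 h3 (P ∩ topP F G P) → ∀ ⦃b⦄, b ∈ (P ∩ topP F G P) → b ≤ a →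
          b ∈ cutD h1 h2 h3 (P ∩ topP F G P)) ∧
        (cutD h1 h2 h3 (P ∩ topP F G P)).Nonempty ∧
        (((P ∩ topP F G P) \ cutD h1 h2 h3 (P ∩ topP F G P)).Nonempty ∨
          IsClosed (P ∩ topP F G P))) := by
    intro P hPo hPc hPs hne
    obtain ⟨⟨g₀, hg₀, hEq⟩, hQP, hAb⟩ := topP_spec (exT_of_ne hne)
    have hQo : IsOpen (topP F G P) := by rw [hEq]; exact Bset_open F g₀
    have hQc : Cvx (topP F G P) := by rw [hEq]; exact Bset_cvx F g₀
    have hQs : Sat (topP F G P) := by rw [hEq]; exact Bset_sat F g₀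
    exact ⟨⟨hQc, ⟨g₀, hg₀, hEq⟩, hAb, hQP⟩,
      cutD_spec h1 h2 h3 (hPo.inter hQo) (cvx_inter hPc hQc) (sat_inter hPs hQs) hne⟩
  have hBotBundle : ∀ P : Set X, IsOpen P → Cvx P → Sat P → (P ∩ botP F G P).Nonempty →
      (Cvx (botP F G P) ∧ (∃ g ∈ G, botP F G P = Bset F g) ∧
        BelowS (botP F G P) P ∧ ((botP F G P) ∩ P).Nonempty) ∧
      (cutD h1 h2 h3 (P ∩ botP F G P) ⊆ (P ∩ botP F G P) ∧
        IsOpen (cutD h1 h2 h3 (P ∩ botP F G P)) ∧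
        IsOpen ((P ∩ botP F G P) \ cutD h1 h2 h3 (P ∩ botP F G P)) ∧
        (∀ ⦃a⦄, a ∈ cutD h1 h2 h3 (P ∩ botP F G P) → ∀ ⦃b⦄, b ∈ (P ∩ botP F G P) → b ≤ a →
          b ∈ cutD h1 h2 h3 (P ∩ botP F G P)) ∧
        (cutD h1 h2 h3 (P ∩ botP F G P)).Nonempty ∧
        (((P ∩ botP F G P) \ cutD h1 h2 h3 (P ∩ botP F G P)).Nonempty ∨
          IsClosed (P ∩ botP F G P))) := by
    intro P hPo hPc hPs hne
    obtain ⟨⟨g₀, hg₀, hEq⟩, hQP, hBe⟩ := botP_spec (exB_of_ne hne)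
    have hQo : IsOpen (botP F G P) := by rw [hEq]; exact Bset_open F g₀
    have hQc : Cvx (botP F G P) := by rw [hEq]; exact Bset_cvx F g₀
    have hQs : Sat (botP F G P) := by rw [hEq]; exact Bset_sat F g₀
    exact ⟨⟨hQc, ⟨g₀, hg₀, hEq⟩, hBe, hQP⟩,
      cutD_spec h1 h2 h3 (hPo.inter hQo) (cvx_inter hPc hQc) (sat_inter hPs hQs) hne⟩
  -- the two closure-avoidance facts for points of the trimmed piece
  have hPfTop : ∀ f ∈ F, ∀ u ∈ PfSet h1 h2 h3 F G (Bset G f),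
      u ∉ closure ((Bset G f ∩ topP F G (Bset G f)) \ cutD h1 h2 h3 (Bset G f ∩ topP F G (Bset G f))) := by
    intro f hf u hu
    set P : Set X := Bset G f with hP
    by_cases hne : (P ∩ topP F G P).Nonempty
    · obtain ⟨⟨hQc, _, hAb, hQP⟩, hsub, hDo, hODo, hdown, hDne, _⟩ :=
        hTopBundle P (Bset_open G f) (Bset_cvx G f) (Bset_sat G f) hne
      have huP : u ∈ P := hu.1
      have hndiff : u ∉ (P ∩ topP F G P) \ cutD h1 h2 h3 (P ∩ topP F G P) :=
        fun h => hu.2 (Or.inl h)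
      by_cases huO : u ∈ P ∩ topP F G P
      · have huD : u ∈ cutD h1 h2 h3 (P ∩ topP F G P) := by
          by_contra h
          exact hndiff ⟨huO, h⟩
        exact not_mem_closure_of_open hDo huD
          (eq_empty_iff_forall_notMem.mpr (fun t ht => ht.2.2 ht.1))
      · rcases stick_side (cvx_inter (Bset_cvx G f) hQc) (mem_singleton u) huO with hside | hside
        · -- u above the top overlap: impossible (final segment)
          exfalso
          obtain ⟨o, hoQ, hoP⟩ := hQP
          have : u ∈ topP F G P := above_final_seg hQc hAb ⟨hoP, hoQ⟩ huP (hside o ⟨hoP, hoQ⟩).le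
          exact huO ⟨huP, this⟩
        · -- u below: use a point of the cut
          obtain ⟨d, hd'⟩ := hDne
          exact not_mem_closure_of_open (h1 d) (hside d (hsub hd'))
            (eq_empty_iff_forall_notMem.mpr (fun t ht => ht.2.2 (hdown hd' ht.2.1 ht.1.le)))
    · rw [not_nonempty_iff_eq_empty] at hne
      rw [hne, cutD_of_empty h1 h2 h3 rfl, empty_diff, closure_empty]
      exact notMem_empty u
  have hPfBot : ∀ f ∈ F, ∀ u ∈ PfSet h1 h2 h3 F G (Bset G f),
      u ∉ closure (cutD h1 h2 h3 (Bset G f ∩ botP F G (Bset G f))) := by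
    intro f hf u hu
    set P : Set X := Bset G f with hP
    by_cases hne : (P ∩ botP F G P).Nonempty
    · obtain ⟨⟨hQc, _, hBe, hQP⟩, hsub, hDo, hODo, hdown, hDne, hlast⟩ :=
        hBotBundle P (Bset_open G f) (Bset_cvx G f) (Bset_sat G f) hne
      have huP : u ∈ P := hu.1
      have hnD : u ∉ cutD h1 h2 h3 (P ∩ botP F G P) := fun h => hu.2 (Or.inr h)
      by_cases huO : u ∈ P ∩ botP F G P
      · exact not_mem_closure_of_open hODo ⟨huO, hnD⟩
          (eq_empty_iff_forall_notMem.mpr (fun t ht => ht.1.2 ht.2))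
      · rcases stick_side (cvx_inter (Bset_cvx G f) hQc) (mem_singleton u) huO with hside | hside
        · -- u above the bottom overlap
          rcases hlast with ⟨w, hw⟩ | hcl
          · exact not_mem_closure_of_open (h2 w) (hside w hw.1) (eq_empty_iff_forall_notMem.mpr
              (fun t ht => hw.2 (hdown ht.2 hw.1 ht.1.le)))
          · exact not_mem_closure_of_open hcl.isOpen_compl huO
              (eq_empty_iff_forall_notMem.mpr (fun t ht => ht.1 (hsub ht.2)))
        · -- u below the bottom overlap: impossible (initial segment)
          exfalso
          obtain ⟨o, hoQ, hoP⟩ := hQP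
          have : u ∈ botP F G P := below_initial_seg hQc hBe ⟨hoP, hoQ⟩ huP (hside o ⟨hoP, hoQ⟩).le
          exact huO ⟨huP, this⟩
    · rw [not_nonempty_iff_eq_empty] at hne
      rw [hne, cutD_of_empty h1 h2 h3 rfl, closure_empty]
      exact notMem_empty u
  -- U is open
  have hUopen : IsOpen U := by
    rw [isOpen_iff_mem_nhds]
    intro u huU
    rw [hU, Usep, mem_iUnion₂] at huU
    obtain ⟨f, hf, hu⟩ := huU
    have h1' := hPfTop f hf u hu
    have h2' := hPfBot f hf u hu
    have hop : IsOpen (Bset G f ∩ (closure ((Bset G f ∩ topP F G (Bset G f)) \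
        cutD h1 h2 h3 (Bset G f ∩ topP F G (Bset G f))))ᶜ ∩
        (closure (cutD h1 h2 h3 (Bset G f ∩ botP F G (Bset G f))))ᶜ) :=
      ((Bset_open G f).inter isClosed_closure.isOpen_compl).inter isClosed_closure.isOpen_compl
    refine Filter.mem_of_superset (hop.mem_nhds ⟨⟨hu.1, h1'⟩, h2'⟩) ?_
    rintro t ⟨⟨htP, ht1⟩, ht2⟩
    rw [hU, Usep, mem_iUnion₂]
    refine ⟨f, hf, htP, ?_⟩
    rintro (h | h)
    · exact ht1 (subset_closure h)
    · exact ht2 (subset_closure h)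
  -- F ⊆ U
  have hFU : F ⊆ U := by
    intro f hf
    rw [hU, Usep, mem_iUnion₂]
    refine ⟨f, hf, hmemP f hf, ?_⟩
    have hfget : ∀ S : Set X, (∃ g ∈ G, S = Bset F g) → f ∉ S := by
      rintro S ⟨g, hg, rfl⟩ hfS
      rw [← mem_empty_iff_false f, ← Bset_avoid F g]
      exact ⟨hfS, hf⟩
    rintro (h | h)
    · -- f in top overlap: f ∈ topP...
      have := h.1.2
      by_cases hne : (Bset G f ∩ topP F G (Bset G f)).Nonempty
      · obtain ⟨⟨_, hEx, _, _⟩, _⟩ :=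
          hTopBundle _ (Bset_open G f) (Bset_cvx G f) (Bset_sat G f) hne
        exact hfget _ hEx this
      · rw [not_nonempty_iff_eq_empty] at hne
        rw [hne] at h
        exact h.1
    · by_cases hne : (Bset G f ∩ botP F G (Bset G f)).Nonempty
      · obtain ⟨⟨_, hEx, _, _⟩, hsub, _⟩ :=
          hBotBundle _ (Bset_open G f) (Bset_cvx G f) (Bset_sat G f) hne
        exact hfget _ hEx (hsub h).2
      · rw [not_nonempty_iff_eq_empty] at hne
        rw [cutD_of_empty h1 h2 h3 hne] at h
        exact notMem_empty f h
  -- U avoids G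
  have hUG : U ∩ G = ∅ := by
    ext y
    simp only [mem_inter_iff, mem_empty_iff_false, iff_false, not_and]
    intro hyU hyG
    rw [hU, Usep, mem_iUnion₂] at hyU
    obtain ⟨f, hf, hy⟩ := hyU
    rw [← mem_empty_iff_false y, ← Bset_avoid G f]
    exact ⟨hy.1, hyG⟩
  -- pieces avoid G pointwise
  have hPG : ∀ f (y : X), y ∈ G → y ∉ Bset G f := by
    intro f y hyG hyP
    rw [← mem_empty_iff_false y, ← Bset_avoid G f]
    exact ⟨hyP, hyG⟩
  -- U is closed
  have hUclosed : IsClosed U := by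
    rw [← closure_subset_iff_isClosed]
    intro y hy
    by_cases hyG : y ∈ G
    · -- impossible: construct a neighborhood of y missing U
      exfalso
      set Q : Set X := Bset F y with hQdef
      have hyQ : y ∈ Q := hmemQ y hyG
      have hQF : Q ∩ F = ∅ := Bset_avoid F y
      have hnotF : ∀ t ∈ F, t ∉ Q := fun t ht htQ => by
        rw [← mem_empty_iff_false t, ← hQF]; exact ⟨htQ, ht⟩
      -- the guard against pieces sticking below Q (Q above them)
      have hMa : ∃ Ma : Set X, IsOpen Ma ∧ y ∈ Ma ∧
          ∀ f ∈ F, ((Bset G f) ∩ Q).Nonempty → AboveS Q (Bset G f) →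
            Ma ∩ (PfSet h1 h2 h3 F G (Bset G f) ∩ Q) = ∅ := by
        by_cases hA : ∃ f ∈ F, ((Bset G f) ∩ Q).Nonempty ∧ AboveS Q (Bset G f)
        · obtain ⟨fa, hfa, hfaQ, hfaAb⟩ := hA
          set Pa : Set X := Bset G fa with hPa
          -- y lies above all of Pa ∩ Q
          have hyPa : y ∉ Pa := hPG fa y hyG
          have hyAbove : ∀ p ∈ Pa, p < y := by
            rcases stick_side (Bset_cvx G fa) (mem_singleton y) hyPa with h | h
            · exact h
            · exfalso
              have hPaQ : Pa ⊆ Q := not_above_below (Bset_cvx F y) hfaAb ⟨y, hyQ, h⟩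
              exact hnotF fa hfa (hPaQ (hmemP fa hfa))
          -- top partner of Pa is Q
          have hExT : ∃ Q' : Set X, (∃ g ∈ G, Q' = Bset F g) ∧ (Q' ∩ Pa).Nonempty ∧
              AboveS Q' Pa := ⟨Q, ⟨y, hyG, rfl⟩, (by rwa [inter_comm] at hfaQ), hfaAb⟩
          have hne : (Pa ∩ topP F G Pa).Nonempty := by
            obtain ⟨⟨g₀, hg₀, hEq⟩, hQP, hAb⟩ := topP_spec hExT
            rwa [inter_comm]
          obtain ⟨⟨hQc', hEx', hAb', hQP'⟩, hsub, hDo, hODo, hdown, hDne, hlast⟩ :=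
            hTopBundle Pa (Bset_open G fa) (Bset_cvx G fa) (Bset_sat G fa) hne
          have hTopEq : topP F G Pa = Q := by
            obtain ⟨g₀, hg₀, hEq⟩ := hEx'
            refine above_partner_unique hQc' (Bset_cvx F y) ?_ hQP'
              (by rwa [inter_comm] at hfaQ) hAb' hfaAb
            rw [hEq]
            exact Bset_disj_or_eq (A := F) g₀ y
          -- construct the guard
          obtain ⟨Ma, hMao, hyMa, hMaD⟩ : ∃ Ma : Set X, IsOpen Ma ∧ y ∈ Ma ∧
              Ma ∩ cutD h1 h2 h3 (Pa ∩ topP F G Pa) = ∅ := by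
            rcases hlast with ⟨w, hw⟩ | hcl
            · exact ⟨{t | w < t}, h2 w, hyAbove w (hw.1).1, eq_empty_iff_forall_notMem.mpr
                (fun t ht => hw.2 (hdown ht.2 hw.1 ht.1.le))⟩
            · exact ⟨(Pa ∩ topP F G Pa)ᶜ, hcl.isOpen_compl, fun h => hyPa h.1,
                eq_empty_iff_forall_notMem.mpr (fun t ht => ht.1 (hsub ht.2))⟩
          refine ⟨Ma, hMao, hyMa, ?_⟩
          intro f hf hfQ' hfAb'
          -- this piece must be Pa
          have hPeq : Bset G f = Pa := by
            refine below_partner_unique (Bset_cvx G f) (Bset_cvx G fa)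
              (Bset_disj_or_eq (A := G) f fa) hfQ' (by exact hfaQ) ?_ ?_
            · exact aboveS_flip (Bset_cvx F y) hfAb' (hmemP f hf) (hnotF f hf)
            · exact aboveS_flip (Bset_cvx F y) hfaAb (hmemP fa hfa) (hnotF fa hfa)
          rw [hPeq]
          -- PfSet Pa ∩ Q ⊆ cutD (Pa ∩ topP Pa)
          refine eq_empty_iff_forall_notMem.mpr ?_
          rintro t ⟨htMa, htPf, htQ⟩
          have htO : t ∈ Pa ∩ topP F G Pa := ⟨htPf.1, by rw [hTopEq]; exact htQ⟩
          have htD : t ∈ cutD h1 h2 h3 (Pa ∩ topP F G Pa) := by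
            by_contra h
            exact htPf.2 (Or.inl ⟨htO, h⟩)
          rw [← mem_empty_iff_false t, ← hMaD]
          exact ⟨htMa, htD⟩
        · refine ⟨univ, isOpen_univ, trivial, ?_⟩
          intro f hf hfQ' hfAb'
          exact absurd ⟨f, hf, hfQ', hfAb'⟩ hA
      -- the guard against pieces sticking above Q (Q below them)
      have hMb : ∃ Mb : Set X, IsOpen Mb ∧ y ∈ Mb ∧
          ∀ f ∈ F, ((Bset G f) ∩ Q).Nonempty → BelowS Q (Bset G f) →
            Mb ∩ (PfSet h1 h2 h3 F G (Bset G f) ∩ Q) = ∅ := by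
        by_cases hB : ∃ f ∈ F, ((Bset G f) ∩ Q).Nonempty ∧ BelowS Q (Bset G f)
        · obtain ⟨fb, hfb, hfbQ, hfbBe⟩ := hB
          set Pb : Set X := Bset G fb with hPb
          have hyPb : y ∉ Pb := hPG fb y hyG
          have hyBelow : ∀ p ∈ Pb, y < p := by
            rcases stick_side (Bset_cvx G fb) (mem_singleton y) hyPb with h | h
            · exfalso
              have hPbQ : Pb ⊆ Q := not_above_below (Bset_cvx F y) ⟨y, hyQ, h⟩ hfbBe
              exact hnotF fb hfb (hPbQ (hmemP fb hfb))
            · exact h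
          have hExB : ∃ Q' : Set X, (∃ g ∈ G, Q' = Bset F g) ∧ (Q' ∩ Pb).Nonempty ∧
              BelowS Q' Pb := ⟨Q, ⟨y, hyG, rfl⟩, (by rwa [inter_comm] at hfbQ), hfbBe⟩
          have hne : (Pb ∩ botP F G Pb).Nonempty := by
            obtain ⟨⟨g₀, hg₀, hEq⟩, hQP, hBe⟩ := botP_spec hExB
            rwa [inter_comm]
          obtain ⟨⟨hQc', hEx', hBe', hQP'⟩, hsub, hDo, hODo, hdown, hDne, hlast⟩ :=
            hBotBundle Pb (Bset_open G fb) (Bset_cvx G fb) (Bset_sat G fb) hne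
          have hBotEq : botP F G Pb = Q := by
            obtain ⟨g₀, hg₀, hEq⟩ := hEx'
            refine below_partner_unique hQc' (Bset_cvx F y) ?_ hQP'
              (by rwa [inter_comm] at hfbQ) hBe' hfbBe
            rw [hEq]
            exact Bset_disj_or_eq (A := F) g₀ y
          obtain ⟨d, hd⟩ := hDne
          refine ⟨{t | t < d}, h1 d, hyBelow d (hsub hd).1, ?_⟩
          intro f hf hfQ' hfBe'
          have hPeq : Bset G f = Pb := by
            refine above_partner_unique (Bset_cvx G f) (Bset_cvx G fb)
              (Bset_disj_or_eq (A := G) f fb) hfQ' (by exact hfbQ) ?_ ?_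
            · exact belowS_flip (Bset_cvx F y) hfBe' (hmemP f hf) (hnotF f hf)
            · exact belowS_flip (Bset_cvx F y) hfbBe (hmemP fb hfb) (hnotF fb hfb)
          rw [hPeq]
          refine eq_empty_iff_forall_notMem.mpr ?_
          rintro t ⟨htd, htPf, htQ⟩
          have htO : t ∈ Pb ∩ botP F G Pb := ⟨htPf.1, by rw [hBotEq]; exact htQ⟩
          have htnD : t ∉ cutD h1 h2 h3 (Pb ∩ botP F G Pb) := fun h => htPf.2 (Or.inr h)
          exact htnD (hdown hd htO htd.le)
        · refine ⟨univ, isOpen_univ, trivial, ?_⟩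
          intro f hf hfQ' hfBe'
          exact absurd ⟨f, hf, hfQ', hfBe'⟩ hB
      obtain ⟨Ma, hMao, hyMa, hMaP⟩ := hMa
      obtain ⟨Mb, hMbo, hyMb, hMbP⟩ := hMb
      -- the neighborhood Q ∩ Ma ∩ Mb misses U
      have hmeet : ((Q ∩ Ma ∩ Mb) ∩ U).Nonempty := by
        rw [mem_closure_iff] at hy
        exact hy _ (((Bset_open F y).inter hMao).inter hMbo) ⟨⟨hyQ, hyMa⟩, hyMb⟩
      obtain ⟨u, ⟨⟨huQ, huMa⟩, huMb⟩, huU⟩ := hmeet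
      rw [hU, Usep, mem_iUnion₂] at huU
      obtain ⟨f, hf, huPf⟩ := huU
      have huP : u ∈ Bset G f := huPf.1
      have hfQne : ((Bset G f) ∩ Q).Nonempty := ⟨u, huP, huQ⟩
      have hyP : y ∉ Bset G f := hPG f y hyG
      rcases stick_side (Bset_cvx G f) (mem_singleton y) hyP with hside | hside
      · -- Q is above the piece
        have : Ma ∩ (PfSet h1 h2 h3 F G (Bset G f) ∩ Q) = ∅ :=
          hMaP f hf hfQne ⟨y, hyQ, hside⟩
        rw [← mem_empty_iff_false u, ← this]
        exact ⟨huMa, huPf, huQ⟩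
      · have : Mb ∩ (PfSet h1 h2 h3 F G (Bset G f) ∩ Q) = ∅ :=
          hMbP f hf hfQne ⟨y, hyQ, hside⟩
        rw [← mem_empty_iff_false u, ← this]
        exact ⟨huMb, huPf, huQ⟩
    · -- y ∉ G : y belongs to a piece and in fact to the trimmed piece
      set P : Set X := Bset G y with hPdef
      have hyP : y ∈ P := mem_Bset h1 h2 h3 hG hGs hyG
      -- find f₀ ∈ F with Bset G f₀ = P
      have hmeet : (P ∩ U).Nonempty := by
        rw [mem_closure_iff] at hy
        exact hy _ (Bset_open G y) hyP
      obtain ⟨u, huP, huU⟩ := hmeet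
      rw [hU, Usep, mem_iUnion₂] at huU
      obtain ⟨f₀, hf₀, huPf⟩ := huU
      have hPeq : Bset G f₀ = P := by
        have e1 : Bset G u = Bset G f₀ := Bset_eq_of_mem huPf.1
        have e2 : Bset G u = Bset G y := Bset_eq_of_mem huP
        rw [← e1, e2]
      -- U ∩ P = PfSet P
      have hUP : U ∩ P = PfSet h1 h2 h3 F G P := by
        apply Subset.antisymm
        · rintro t ⟨htU, htP⟩
          rw [hU, Usep, mem_iUnion₂] at htU
          obtain ⟨f', hf', htPf⟩ := htU
          have : Bset G f' = P := by
            have e1 : Bset G t = Bset G f' := Bset_eq_of_mem htPf.1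
            have e2 : Bset G t = Bset G y := Bset_eq_of_mem htP
            rw [← e1, e2]
          rwa [this] at htPf
        · intro t ht
          refine ⟨?_, ht.1⟩
          rw [hU, Usep, mem_iUnion₂]
          exact ⟨f₀, hf₀, by rwa [hPeq]⟩
      have hyPf : y ∈ closure (PfSet h1 h2 h3 F G P) := by
        rw [mem_closure_iff]
        intro V hV hyV
        rw [mem_closure_iff] at hy
        obtain ⟨t, ⟨htV, htP⟩, htU⟩ := hy (V ∩ P) (hV.inter (Bset_open G y)) ⟨hyV, hyP⟩
        exact ⟨t, htV, hUP ▸ ⟨htU, htP⟩⟩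
      -- y is in the trimmed piece
      have hyin : y ∈ PfSet h1 h2 h3 F G P := by
        refine ⟨hyP, ?_⟩
        rintro (h | h)
        · -- y in the removed top part: that part is open and disjoint from PfSet
          have hne : (P ∩ topP F G P).Nonempty := ⟨y, h.1⟩
          obtain ⟨_, _, _, hODo, _, _, _⟩ :=
            hTopBundle P (Bset_open G y) (Bset_cvx G y) (Bset_sat G y) hne
          exact absurd hyPf (not_mem_closure_of_open hODo h
            (eq_empty_iff_forall_notMem.mpr (fun t ht => ht.2.2 (Or.inl ht.1))))
        · have hne : (P ∩ botP F G P).Nonempty := by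
            by_contra hne
            rw [not_nonempty_iff_eq_empty] at hne
            rw [cutD_of_empty h1 h2 h3 hne] at h
            exact notMem_empty y h
          obtain ⟨_, _, hDo, _, _, _, _⟩ :=
            hBotBundle P (Bset_open G y) (Bset_cvx G y) (Bset_sat G y) hne
          exact absurd hyPf (not_mem_closure_of_open hDo h
            (eq_empty_iff_forall_notMem.mpr (fun t ht => ht.2.2 (Or.inr ht.1))))
      rw [hU, Usep, mem_iUnion₂]
      exact ⟨f₀, hf₀, by rwa [hPeq]⟩
  exact ⟨U, ⟨hUclosed, hUopen⟩, hFU, hUG⟩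

include h1 h2 h3 in
lemma shrink_cover : ∀ (n : ℕ) (W : Fin n → Set X) (C : Set X), IsClopen C →
    (∀ i, IsOpen (W i) ∧ Sat (W i)) → (C ∪ ⋃ i, W i) = univ →
    ∃ A : Fin n → Set X, (∀ i, IsClopen (A i) ∧ A i ⊆ W i) ∧ (C ∪ ⋃ i, A i) = univ := by
  intro n
  induction n with
  | zero =>
    intro W C hC hW hcov
    refine ⟨fun i => ∅, fun i => i.elim0, ?_⟩
    rw [iUnion_of_empty] at hcov ⊢
    exact hcov
  | succ n ih =>
    intro W C hC hW hcov
    set Rest : Set X := C ∪ ⋃ i : Fin n, W i.succ with hRest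
    have hRestOpen : IsOpen Rest := hC.2.union (isOpen_iUnion fun i => (hW _).1)
    have hRestSat : Sat Rest := by
      intro x hx y hy
      rcases hx with hx | hx
      · exact Or.inl (hC.sat hx hy)
      · obtain ⟨i, hxi⟩ := mem_iUnion.mp hx
        exact Or.inr (mem_iUnion.mpr ⟨i, (hW i.succ).2 hxi hy⟩)
    have hFsub : Restᶜ ⊆ W 0 := by
      intro x hx
      have hxu : x ∈ C ∪ ⋃ i, W i := by rw [hcov]; exact mem_univ x
      rcases hxu with hxu | hxu
      · exact absurd (Or.inl hxu : x ∈ Rest) hx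
      · obtain ⟨i, hxi⟩ := mem_iUnion.mp hxu
        rcases Fin.eq_zero_or_eq_succ i with rfl | ⟨j, rfl⟩
        · exact hxi
        · exact absurd (Or.inr (mem_iUnion.mpr ⟨j, hxi⟩) : x ∈ Rest) hx
    obtain ⟨A0, hA0c, hA0sub, hA0G⟩ :=
      clopen_sep h1 h2 h3 (isClosed_compl_iff.mpr hRestOpen) (sat_compl hRestSat)
        (hW 0).1.isClosed_compl (sat_compl (hW 0).2)
        (eq_empty_iff_forall_notMem.mpr (fun x hx => hx.2 (hFsub hx.1)))
    have hA0W : A0 ⊆ W 0 := by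
      intro x hx
      by_contra hxW
      rw [← mem_empty_iff_false x, ← hA0G]
      exact ⟨hx, hxW⟩
    obtain ⟨A', hA'p, hA'cov⟩ := ih (fun i => W i.succ) (C ∪ A0)
      (hC.union hA0c) (fun i => hW i.succ)
      (by
        rw [eq_univ_iff_forall]
        intro x
        by_cases hx : x ∈ Rest
        · rcases hx with hx | hx
          · exact Or.inl (Or.inl hx)
          · exact Or.inr hx
        · exact Or.inl (Or.inr (hA0sub hx)))
    refine ⟨Fin.cases A0 A', ?_, ?_⟩
    · intro i
      rcases Fin.eq_zero_or_eq_succ i with rfl | ⟨j, rfl⟩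
      · simpa using ⟨hA0c, hA0W⟩
      · simpa using hA'p j
    · rw [eq_univ_iff_forall]
      intro x
      have hx : x ∈ (C ∪ A0) ∪ ⋃ i, A' i := by rw [hA'cov]; exact mem_univ x
      rcases hx with (hx | hx) | hx
      · exact Or.inl hx
      · exact Or.inr (mem_iUnion.mpr ⟨0, by simpa using hx⟩)
      · obtain ⟨i, hxi⟩ := mem_iUnion.mp hx
        exact Or.inr (mem_iUnion.mpr ⟨i.succ, by simpa using hxi⟩)

include h1 h2 h3 in
theorem szd_components :
    ∀ 𝒰 : Set (Set (ConnectedComponents X)), 𝒰.Finite → (∀ u ∈ 𝒰, IsOpen u) →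
    ⋃₀ 𝒰 = univ →
    ∃ 𝒱 : Set (Set (ConnectedComponents X)), 𝒱.Finite ∧ (∀ v ∈ 𝒱, IsOpen v) ∧
      ⋃₀ 𝒱 = univ ∧ (∀ v ∈ 𝒱, ∃ u ∈ 𝒰, v ⊆ u) ∧
      ∀ v ∈ 𝒱, ∀ w ∈ 𝒱, v ≠ w → v ∩ w = ∅ := by
  classical
  intro 𝒰 hfin hop hcov
  obtain ⟨n, u, humem, husurj⟩ : ∃ (n : ℕ) (u : Fin n → Set (ConnectedComponents X)),
      (∀ i, u i ∈ 𝒰) ∧ ∀ v ∈ 𝒰, ∃ i, u i = v := by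
    refine ⟨hfin.toFinset.toList.length, fun i => hfin.toFinset.toList.get i, ?_, ?_⟩
    · intro i
      have h : hfin.toFinset.toList.get i ∈ hfin.toFinset.toList := by
        have := hfin.toFinset.toList.get_mem i
        simpa using this
      rwa [Finset.mem_toList, Set.Finite.mem_toFinset] at h
    · intro v hv
      have h : v ∈ hfin.toFinset.toList := by
        rw [Finset.mem_toList, Set.Finite.mem_toFinset]; exact hv
      obtain ⟨i, hi⟩ := List.get_of_mem h
      exact ⟨i, hi⟩
  set mk : X → ConnectedComponents X := ConnectedComponents.mk with hmk
  set W : Fin n → Set X := fun i => mk ⁻¹' (u i) with hW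
  have hWo : ∀ i, IsOpen (W i) ∧ Sat (W i) := by
    intro i
    constructor
    · exact (hop (u i) (humem i)).preimage continuous_quot_mk
    · intro x hx y hy
      have : mk y = mk x :=
        ConnectedComponents.coe_eq_coe.mpr (connectedComponent_eq hy).symm
      show mk y ∈ u i
      rw [this]
      exact hx
  have hcov' : (∅ ∪ ⋃ i, W i) = univ := by
    rw [empty_union, eq_univ_iff_forall]
    intro x
    have : mk x ∈ ⋃₀ 𝒰 := by rw [hcov]; exact mem_univ _
    obtain ⟨v, hv, hxv⟩ := this
    obtain ⟨i, rfl⟩ := husurj v hv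
    exact mem_iUnion.mpr ⟨i, hxv⟩
  obtain ⟨A, hAp, hAcov⟩ := shrink_cover h1 h2 h3 n W ∅ isClopen_empty hWo hcov'
  rw [empty_union] at hAcov
  -- disjointize
  set V : Fin n → Set X := fun i => A i \ ⋃ j ∈ Finset.univ.filter (fun j : Fin n => j < i), A j
    with hV
  have hVclopen : ∀ i, IsClopen (V i) :=
    fun i => (hAp i).1.diff ((Finset.univ.filter (fun j : Fin n => j < i)).finite_toSet.isClopen_biUnion
      (fun j _ => (hAp j).1))
  have hVsub : ∀ i, V i ⊆ A i := fun i => diff_subset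
  have hVdisj : ∀ i j, i ≠ j → V i ∩ V j = ∅ := by
    intro i j hij
    rcases lt_or_gt_of_ne hij with h | h
    · refine eq_empty_iff_forall_notMem.mpr ?_
      rintro x ⟨hxi, hxj⟩
      exact hxj.2 (mem_biUnion (Finset.mem_filter.mpr ⟨Finset.mem_univ i, h⟩) (hVsub i hxi))
    · refine eq_empty_iff_forall_notMem.mpr ?_
      rintro x ⟨hxi, hxj⟩
      exact hxi.2 (mem_biUnion (Finset.mem_filter.mpr ⟨Finset.mem_univ j, h⟩) (hVsub j hxj))
  have hVcov : ∀ x : X, ∃ i, x ∈ V i := by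
    intro x
    have hxA : ∃ k : ℕ, ∃ h : k < n, x ∈ A ⟨k, h⟩ := by
      have : x ∈ ⋃ i, A i := by rw [hAcov]; exact mem_univ x
      obtain ⟨i, hxi⟩ := mem_iUnion.mp this
      exact ⟨i.val, i.isLt, by simpa using hxi⟩
    classical
    obtain ⟨hlt, hmem⟩ := Nat.find_spec hxA
    refine ⟨⟨Nat.find hxA, hlt⟩, hmem, ?_⟩
    intro hxu
    simp only [Finset.mem_filter, mem_iUnion] at hxu
    obtain ⟨j, ⟨_, hj⟩, hxj⟩ := hxu
    exact Nat.find_min hxA (show j.val < Nat.find hxA from hj) ⟨j.isLt, by simpa using hxj⟩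
  -- saturation of clopen V i, hence images behave well
  have hVsat : ∀ i, Sat (V i) := fun i => (hVclopen i).sat
  have hVpre : ∀ i, mk ⁻¹' (mk '' (V i)) = V i := by
    intro i
    apply Subset.antisymm
    · rintro x ⟨v, hv, hvx⟩
      have : connectedComponent v = connectedComponent x := ConnectedComponents.coe_eq_coe.mp hvx
      exact hVsat i hv (this ▸ mem_connectedComponent)
    · exact subset_preimage_image mk (V i)
  refine ⟨Set.range (fun i : Fin n => mk '' (V i)), finite_range _, ?_, ?_, ?_, ?_⟩
  · rintro v ⟨i, rfl⟩
    rw [← ConnectedComponents.isQuotientMap_coe.isOpen_preimage]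
    show IsOpen (mk ⁻¹' (mk '' (V i)))
    rw [hVpre i]
    exact (hVclopen i).2
  · rw [eq_univ_iff_forall]
    intro z
    obtain ⟨x, rfl⟩ := ConnectedComponents.surjective_coe z
    obtain ⟨i, hxi⟩ := hVcov x
    exact ⟨mk '' (V i), ⟨i, rfl⟩, mem_image_of_mem mk hxi⟩
  · rintro v ⟨i, rfl⟩
    refine ⟨u i, humem i, ?_⟩
    rintro z ⟨x, hx, rfl⟩
    exact (hAp i).2 (hVsub i hx)
  · rintro v ⟨i, rfl⟩ w ⟨j, rfl⟩ hvw
    have hij : i ≠ j := fun h => hvw (by rw [h])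
    refine eq_empty_iff_forall_notMem.mpr ?_
    rintro z ⟨⟨x, hx, rfl⟩, ⟨x', hx', hx'e⟩⟩
    have : x' ∈ V i := by
      have hcc : connectedComponent x' = connectedComponent x :=
        ConnectedComponents.coe_eq_coe.mp hx'e
      exact hVsat i hx (hcc ▸ mem_connectedComponent)
    rw [← mem_empty_iff_false x', ← hVdisj i j hij]
    exact ⟨this, hx'⟩

end Dev

/-- Corollary 3.4: if `X` is a suborderable Hausdorff space, then the quotient
space of connected components is strongly zero-dimensional; in particular,
every open set containing a component contains a clopen set around it. -/
theorem stmt8 {X : Type*} [TopologicalSpace X] [T2Space X]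
    (hX : Suborderable X) :
    StronglyZeroDimensional (ConnectedComponents X) ∧
    ∀ (x : X) (U : Set X), IsOpen U → connectedComponent x ⊆ U →
      ∃ V : Set X, IsClopen V ∧ connectedComponent x ⊆ V ∧ V ⊆ U := by
  obtain ⟨l, hl1, hl2, hl3⟩ := hX
  letI := l
  have h1 : ∀ a : X, IsOpen {x | x < a} := hl1
  have h2 : ∀ a : X, IsOpen {x | a < x} := hl2
  have h3 : ∀ (x : X) (U : Set X), IsOpen U → x ∈ U →
      ∃ V, IsOpen V ∧ x ∈ V ∧ V ⊆ U ∧ Cvx V := by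
    intro x U hU hx
    obtain ⟨V, hVo, hxV, hVU, hVc⟩ := hl3 x U hU hx
    exact ⟨V, hVo, hxV, hVU, fun a ha b hb c hac hcb => hVc a ha b hb c hac hcb⟩
  constructor
  · intro 𝒰 hfin hop hcov
    exact szd_components h1 h2 h3 𝒰 hfin hop hcov
  · intro x U hU hsub
    obtain ⟨V, hV1, hV2, hV3, hV4⟩ := clopen_cvx_between h1 h2 h3 hU hsub
    exact ⟨V, hV1, hV3, hV4⟩
end

section
/- Every suborderable Hausdorff space X contains a closed subset Z ⊆ X such that Z ∩ C is a nonempty finite set for every connected component C of X. -/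
open Topology

/-- Proposition 3.5: every suborderable Hausdorff space contains a closed set
meeting every connected component in a nonempty finite set. -/
theorem stmt9 {X : Type*} [TopologicalSpace X] [T2Space X]
    (hX : Suborderable X) :
    ∃ Z : Set X, IsClosed Z ∧ ∀ x : X,
      (Z ∩ connectedComponent x).Nonempty ∧ (Z ∩ connectedComponent x).Finite := by
  rcases isEmpty_or_nonempty X with hE | hN
  · exact ⟨∅, isClosed_empty, fun x => isEmptyElim x⟩
  obtain ⟨l, hlo, hhi, -⟩ := hX
  letI : LinearOrder X := l
  classical
  -- a choice function picking one point per component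
  set zc : Set X → X := fun s => if h : s.Nonempty then h.some else Classical.arbitrary X
    with hzc
  set z : X → X := fun x => zc (connectedComponent x) with hz
  have hzmem : ∀ x : X, z x ∈ connectedComponent x := by
    intro x
    simp only [hz, hzc]
    rw [dif_pos ⟨x, mem_connectedComponent⟩]
    exact Set.Nonempty.some_mem _
  have hzconst : ∀ x w : X, connectedComponent w = connectedComponent x → z w = z x := by
    intro x w h
    simp only [hz, h]
  set T : Set X := Set.range z with hT
  refine ⟨closure T, isClosed_closure, fun x => ?_⟩
  set C := connectedComponent x with hC
  have hxC : x ∈ C := mem_connectedComponent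
  have hne : (closure T ∩ C).Nonempty := ⟨z x, subset_closure ⟨x, rfl⟩, hzmem x⟩
  refine ⟨hne, ?_⟩
  -- convexity of C
  have hconv : ∀ a ∈ C, ∀ b ∈ C, ∀ c : X, a ≤ c → c ≤ b → c ∈ C := by
    intro a ha b hb c hac hcb
    by_contra hc
    have hpc : IsPreconnected C := isPreconnected_connectedComponent
    have hac' : a < c := lt_of_le_of_ne hac (by rintro rfl; exact hc ha)
    have hcb' : c < b := lt_of_le_of_ne hcb (by rintro rfl; exact hc hb)
    obtain ⟨w, -, hw1, hw2⟩ := hpc {y | l.lt y c} {y | l.lt c y} (hlo c) (hhi c)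
      (fun y hy => (lt_or_gt_of_ne (show y ≠ c by rintro rfl; exact hc hy)).imp id id)
      ⟨a, ha, hac'⟩ ⟨b, hb, hcb'⟩
    exact absurd hw2 (not_lt.2 (le_of_lt hw1))
  -- comparability with outside points
  have hcomp : ∀ t : X, t ∉ C → (∀ c ∈ C, t < c) ∨ (∀ c ∈ C, c < t) := by
    intro t ht
    by_cases h : ∃ c0 ∈ C, t < c0
    · obtain ⟨c0, hc0, htc0⟩ := h
      left
      intro c hc
      by_contra hn
      exact ht (hconv c hc c0 hc0 t (not_lt.1 hn) (le_of_lt htc0))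
    · push_neg at h
      right
      intro c hc
      exact lt_of_le_of_ne (h c hc) (by rintro rfl; exact ht hc)
  -- T meets C exactly in z x
  have hTC : T ∩ C = {z x} := by
    ext t
    constructor
    · rintro ⟨⟨w, rfl⟩, htC⟩
      have h1 := connectedComponent_eq (hzmem w)
      have h2 := connectedComponent_eq (show z w ∈ connectedComponent x from htC)
      exact hzconst x w (h1.trans h2.symm)
    · rintro rfl
      exact ⟨⟨x, rfl⟩, hzmem x⟩
  -- split T into the point of C, lower part and upper part
  set Tlo : Set X := {t | t ∈ T ∧ ∀ c ∈ C, t < c} with hTlo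
  set Thi : Set X := {t | t ∈ T ∧ ∀ c ∈ C, c < t} with hThi
  have hsplit : T ⊆ {z x} ∪ Tlo ∪ Thi := by
    intro t ht
    by_cases htC : t ∈ C
    · left; left
      have : t ∈ T ∩ C := ⟨ht, htC⟩
      rw [hTC] at this
      exact this
    · rcases hcomp t htC with h | h
      · left; right; exact ⟨ht, h⟩
      · right; exact ⟨ht, h⟩
  -- closure of lower part meets C in at most one point
  have hlo1 : ∀ y1 ∈ C, ∀ y2 ∈ closure Tlo, ¬ y1 < y2 := by
    intro y1 hy1 y2 hy2 hlt
    obtain ⟨t, ht1, ht2, ht3⟩ := (mem_closure_iff.1 hy2) {w | l.lt y1 w} (hhi y1) hlt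
    exact absurd ht1 (not_lt.2 (le_of_lt (ht3 y1 hy1)))
  have hhi1 : ∀ y1 ∈ C, ∀ y2 ∈ closure Thi, ¬ y2 < y1 := by
    intro y1 hy1 y2 hy2 hlt
    obtain ⟨t, ht1, ht2, ht3⟩ := (mem_closure_iff.1 hy2) {w | l.lt w y1} (hlo y1) hlt
    exact absurd ht1 (not_lt.2 (le_of_lt (ht3 y1 hy1)))
  have hAlo : (closure Tlo ∩ C).Subsingleton := by
    intro y1 ⟨hy1c, hy1C⟩ y2 ⟨hy2c, hy2C⟩
    exact le_antisymm (not_lt.1 (hlo1 y2 hy2C y1 hy1c)) (not_lt.1 (hlo1 y1 hy1C y2 hy2c))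
  have hAhi : (closure Thi ∩ C).Subsingleton := by
    intro y1 ⟨hy1c, hy1C⟩ y2 ⟨hy2c, hy2C⟩
    exact le_antisymm (not_lt.1 (hhi1 y1 hy1C y2 hy2c)) (not_lt.1 (hhi1 y2 hy2C y1 hy1c))
  have hsub : closure T ∩ C ⊆ {z x} ∪ (closure Tlo ∩ C) ∪ (closure Thi ∩ C) := by
    intro y ⟨hyc, hyC⟩
    have : y ∈ closure ({z x} ∪ Tlo ∪ Thi) := closure_mono hsplit hyc
    rw [closure_union, closure_union, closure_singleton] at this
    rcases this with (h | h) | h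
    · left; left; exact h
    · left; right; exact ⟨h, hyC⟩
    · right; exact ⟨h, hyC⟩
  exact Set.Finite.subset
    (((Set.finite_singleton (z x)).union hAlo.finite).union hAhi.finite) hsub
end

section
/- Let (X,≤) be a metrizable suborderable Hausdorff space with compatible linear order ≤ and compatible convex metric ρ. If C is a connected component of X and U ⊆ X is an open set with C ⊆ U, then there exists ε > 0 such that Δ(C,ε) ⊆ U. -/
open Topology

section MetricSuborderable

variable {X : Type*} [MetricSpace X] [LinearOrder X]

/-- `(←, C)`: the points lying strictly below every point of `C`. -/
def leftOf (C : Set X) : Set X := {x | ∀ c ∈ C, x < c}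

/-- `(C, →)`: the points lying strictly above every point of `C`. -/
def rightOf (C : Set X) : Set X := {x | ∀ c ∈ C, c < x}

/-- `ℓ(C) = |cl((←, C)) ∩ C|`. -/
noncomputable def ell (C : Set X) : ℕ := (closure (leftOf C) ∩ C).ncard

/-- `r(C) = |C ∩ cl((C, →))|`. -/
noncomputable def rr (C : Set X) : ℕ := (C ∩ closure (rightOf C)).ncard

/-- The open `δ`-neighbourhood `O(C, δ)` of a set `C`. -/
def ballAround (C : Set X) (δ : ℝ) : Set X := {x | ∃ c ∈ C, dist x c < δ}

/-- The neighbourhood `Δ(C, ε)` of a component `C`; note that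
`(←, C] = (C, →)ᶜ` and `[C, →) = (←, C)ᶜ`. -/
noncomputable def Delta (C : Set X) (ε : ℝ) : Set X :=
  if ell C = 0 ∧ rr C = 0 then C
  else if ell C ≠ 0 ∧ rr C = 0 then ballAround C (ε / 2) ∩ (rightOf C)ᶜ
  else if ell C = 0 ∧ rr C ≠ 0 then ballAround C (ε / 2) ∩ (leftOf C)ᶜ
  else ballAround C (ε / 2)

/-- `D[X]`: the clopen sets that are a connected component or meet infinitely
many connected components. -/
def DD (X : Type*) [TopologicalSpace X] : Set (Set X) :=
  {U | IsClopen U ∧ ((∃ x : X, U = connectedComponent x) ∨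
    {C : Set X | ∃ x ∈ U, C = connectedComponent x}.Infinite)}

/-- `C_ε[U]`: the connected components of `U` of diameter at least `ε`. -/
noncomputable def compsGE (U : Set X) (ε : ℝ) : Set (Set X) :=
  {C | (∃ x ∈ U, C = connectedComponentIn U x) ∧
    ENNReal.ofReal ε ≤ EMetric.diam C}

/-- `D[X, ε]`: the members of `D[X]` of diameter `< ε`, or contained in
`Δ(C, ε)` for some component `C ∈ C_ε[U]`. -/
noncomputable def DXeps (X : Type*) [MetricSpace X] [LinearOrder X] (ε : ℝ) :
    Set (Set X) :=
  {U | U ∈ DD X ∧ (EMetric.diam U < ENNReal.ofReal ε ∨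
    ∃ C ∈ compsGE U ε, U ⊆ Delta C ε)}

/-- `κ[C]`: the least `n` with `diam C ≥ 2^(-n)`. -/
noncomputable def kappa (C : Set X) : ℕ :=
  sInf {n : ℕ | ENNReal.ofReal ((2 : ℝ) ^ (-(n : ℤ))) ≤ EMetric.diam C}

/-- `A < B` pointwise for subsets of a linear order. -/
def setBelow (A B : Set X) : Prop := ∀ a ∈ A, ∀ b ∈ B, a < b

end MetricSuborderable

/-- Proposition 4.1: in a metrizable suborderable space `(X, ≤)` with
compatible convex metric, every open set `U` containing a connected component
`C` contains `Δ(C, ε)` for some `ε > 0`. -/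
theorem stmt11 {X : Type*} [MetricSpace X] [LinearOrder X]
    (hconv : ∀ x a b y : X, x ≤ a → a ≤ b → b ≤ y → dist a b ≤ dist x y)
    (hIio : ∀ a : X, IsOpen (Set.Iio a)) (hIoi : ∀ a : X, IsOpen (Set.Ioi a))
    (hbase : ∀ (x : X) (U : Set X), IsOpen U → x ∈ U →
      ∃ V : Set X, IsOpen V ∧ x ∈ V ∧ V ⊆ U ∧ V.OrdConnected)
    (x₀ : X) (U : Set X) (hU : IsOpen U) (hCU : connectedComponent x₀ ⊆ U) :
    ∃ ε > (0 : ℝ), Delta (connectedComponent x₀) ε ⊆ U := by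

  set C := connectedComponent x₀ with hCdef
  have hconn : IsPreconnected C := isPreconnected_connectedComponent
  -- components are convex
  have hcvx : ∀ a ∈ C, ∀ b ∈ C, ∀ x : X, a ≤ x → x ≤ b → x ∈ C := by
    intro a ha b hb x hax hxb
    by_contra hx
    have hax' : a < x := lt_of_le_of_ne hax (by rintro rfl; exact hx ha)
    have hxb' : x < b := lt_of_le_of_ne hxb (by rintro rfl; exact hx hb)
    obtain ⟨y, hyC, hy1, hy2⟩ := hconn (Set.Iio x) (Set.Ioi x) (hIio x) (hIoi x)
      (by intro y hy
          rcases lt_trichotomy y x with h | h | h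
          · exact Or.inl h
          · exact absurd (h ▸ hy) hx
          · exact Or.inr h)
      ⟨a, ha, hax'⟩ ⟨b, hb, hxb'⟩
    exact absurd (hy1.trans hy2) (lt_irrefl y)
  have classifyL : ∀ x : X, x ∉ C → (∃ c ∈ C, ¬ c < x) → x ∈ leftOf C := by
    rintro x hx ⟨c'', hc'', hle⟩ c hc
    by_contra h
    exact hx (hcvx c hc c'' hc'' x (not_lt.mp h) (not_lt.mp hle))
  have classifyR : ∀ x : X, x ∉ C → (∃ c ∈ C, ¬ x < c) → x ∈ rightOf C := by
    rintro x hx ⟨c'', hc'', hle⟩ c hc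
    by_contra h
    exact hx (hcvx c'' hc'' c hc x (not_lt.mp hle) (not_lt.mp h))
  have left_lem : (closure (leftOf C) ∩ C).Nonempty →
      ∃ s > (0:ℝ), ∀ x ∈ leftOf C, (∃ c ∈ C, dist x c < s / 2) → x ∈ U := by
    rintro ⟨p, hpcl, hpC⟩
    obtain ⟨V, hVo, hpV, hVU, hVord⟩ := hbase p U hU (hCU hpC)
    obtain ⟨q, hqV, hqL⟩ := mem_closure_iff.mp hpcl V hVo hpV
    obtain ⟨s, hs, hball⟩ := Metric.isOpen_iff.mp hVo q hqV
    refine ⟨s, hs, ?_⟩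
    rintro x hxL ⟨c, hcC, hxc⟩
    rcases le_or_gt q x with hqx | hxq
    · exact hVU (hVord.out hqV hpV ⟨hqx, (hxL p hpC).le⟩)
    · have h1 : dist x q ≤ dist x c := hconv x x q c le_rfl hxq.le (hqL c hcC).le
      have h2 : dist x q < s := by linarith
      exact hVU (hball h2)
  have right_lem : (C ∩ closure (rightOf C)).Nonempty →
      ∃ s > (0:ℝ), ∀ x ∈ rightOf C, (∃ c ∈ C, dist x c < s / 2) → x ∈ U := by
    rintro ⟨p, hpC, hpcl⟩
    obtain ⟨V, hVo, hpV, hVU, hVord⟩ := hbase p U hU (hCU hpC)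
    obtain ⟨q, hqV, hqR⟩ := mem_closure_iff.mp hpcl V hVo hpV
    obtain ⟨s, hs, hball⟩ := Metric.isOpen_iff.mp hVo q hqV
    refine ⟨s, hs, ?_⟩
    rintro x hxR ⟨c, hcC, hxc⟩
    rcases le_or_gt x q with hxq | hqx
    · exact hVU (hVord.out hpV hqV ⟨(hxR p hpC).le, hxq⟩)
    · have h1 : dist q x ≤ dist c x := hconv c q x x (hqR c hcC).le hqx.le le_rfl
      have h2 : dist x q < s := by
        rw [dist_comm]
        rw [dist_comm] at hxc
        linarith
      exact hVU (hball h2)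
  rcases eq_or_ne (ell C) 0 with hl | hl <;> rcases eq_or_ne (rr C) 0 with hr | hr
  · refine ⟨1, one_pos, ?_⟩
    simp only [Delta, hl, hr, and_self, if_true]
    exact hCU
  · obtain ⟨s, hs, hsU⟩ := right_lem (Set.nonempty_of_ncard_ne_zero hr)
    refine ⟨s, hs, ?_⟩
    have : Delta C s = ballAround C (s / 2) ∩ (leftOf C)ᶜ := by
      simp [Delta, hl, hr]
    rw [this]
    rintro x ⟨⟨c, hcC, hxc⟩, hxnL⟩
    by_cases hxC : x ∈ C
    · exact hCU hxC
    · have hxL : ∃ c ∈ C, ¬ x < c := by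
        by_contra h
        push_neg at h
        exact hxnL h
      exact hsU x (classifyR x hxC hxL) ⟨c, hcC, hxc⟩
  · obtain ⟨s, hs, hsU⟩ := left_lem (Set.nonempty_of_ncard_ne_zero hl)
    refine ⟨s, hs, ?_⟩
    have : Delta C s = ballAround C (s / 2) ∩ (rightOf C)ᶜ := by
      simp [Delta, hl, hr]
    rw [this]
    rintro x ⟨⟨c, hcC, hxc⟩, hxnR⟩
    by_cases hxC : x ∈ C
    · exact hCU hxC
    · have hxR : ∃ c ∈ C, ¬ c < x := by
        by_contra h
        push_neg at h
        exact hxnR h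
      exact hsU x (classifyL x hxC hxR) ⟨c, hcC, hxc⟩
  · obtain ⟨s1, hs1, hs1U⟩ := left_lem (Set.nonempty_of_ncard_ne_zero hl)
    obtain ⟨s2, hs2, hs2U⟩ := right_lem (Set.nonempty_of_ncard_ne_zero hr)
    refine ⟨min s1 s2, lt_min hs1 hs2, ?_⟩
    have : Delta C (min s1 s2) = ballAround C (min s1 s2 / 2) := by
      simp [Delta, hl, hr]
    rw [this]
    rintro x ⟨c, hcC, hxc⟩
    have hxc1 : dist x c < s1 / 2 := lt_of_lt_of_le hxc (by
      have := min_le_left s1 s2; linarith)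
    have hxc2 : dist x c < s2 / 2 := lt_of_lt_of_le hxc (by
      have := min_le_right s1 s2; linarith)
    by_cases hxC : x ∈ C
    · exact hCU hxC
    by_cases hxL : x ∈ leftOf C
    · exact hs1U x hxL ⟨c, hcC, hxc1⟩
    · have : ∃ c ∈ C, ¬ x < c := by
        by_contra h
        push_neg at h
        exact hxL h
      exact hs2U x (classifyR x hxC this) ⟨c, hcC, hxc2⟩
end

section
/- Let (X,≤) be a metrizable suborderable Hausdorff space with compatible linear order ≤ and compatible convex metric ρ. If C is a connected component of X and ε > 0, then every connected component S of X with S ≠ C and S ⊆ Δ(C,ε) satisfies diam(S) ≤ ε/2. -/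
open Topology

/-- Proposition 4.2: in a metrizable suborderable space `(X, ≤)` with
compatible convex metric, for a connected component `C` and `ε > 0`, any other
connected component `S ⊆ Δ(C, ε)` has diameter at most `ε / 2`. -/
theorem stmt12 {X : Type*} [MetricSpace X] [LinearOrder X]
    (hconv : ∀ x a b y : X, x ≤ a → a ≤ b → b ≤ y → dist a b ≤ dist x y)
    (hIio : ∀ a : X, IsOpen (Set.Iio a)) (hIoi : ∀ a : X, IsOpen (Set.Ioi a))
    (hbase : ∀ (x : X) (U : Set X), IsOpen U → x ∈ U →
      ∃ V : Set X, IsOpen V ∧ x ∈ V ∧ V ⊆ U ∧ V.OrdConnected)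
    (x₀ y₀ : X) (ε : ℝ) (hε : 0 < ε)
    (hne : connectedComponent y₀ ≠ connectedComponent x₀)
    (hsub : connectedComponent y₀ ⊆ Delta (connectedComponent x₀) ε) :
    EMetric.diam (connectedComponent y₀) ≤ ENNReal.ofReal (ε / 2) := by
  classical
  have hdisj : Disjoint (connectedComponent y₀) (connectedComponent x₀) := by
    rw [Set.disjoint_left]
    intro z hzS hzC
    exact hne ((connectedComponent_eq hzS).trans (connectedComponent_eq hzC).symm)
  set C := connectedComponent x₀ with hCdef
  set S := connectedComponent y₀ with hSdef
  have hy : y₀ ∈ S := mem_connectedComponent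
  have hx : x₀ ∈ C := mem_connectedComponent
  have ordT : ∀ T : Set X, IsPreconnected T → T.OrdConnected := by
    intro T hT
    constructor
    intro a ha b hb z hz
    by_contra hzT
    have h1 : T ⊆ Set.Iio z ∪ Set.Ioi z := by
      intro t ht
      rcases lt_trichotomy t z with h | h | h
      · exact Or.inl h
      · exact absurd (h ▸ ht) hzT
      · exact Or.inr h
    obtain ⟨w, -, hw1, hw2⟩ := hT (Set.Iio z) (Set.Ioi z) (hIio z) (hIoi z) h1
      ⟨a, ha, lt_of_le_of_ne hz.1 (by rintro rfl; exact hzT ha)⟩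
      ⟨b, hb, lt_of_le_of_ne hz.2 (by rintro rfl; exact hzT hb)⟩
    exact absurd hw2 (not_lt.2 hw1.le)
  have hSo := ordT S isPreconnected_connectedComponent
  have hCo := ordT C isPreconnected_connectedComponent
  have hball : S ⊆ ballAround C (ε / 2) := by
    intro s hs
    have h := hsub hs
    unfold Delta at h
    split_ifs at h with h1 h2 h3
    · exact absurd h (Set.disjoint_left.mp hdisj hs)
    · exact h.1
    · exact h.1
    · exact h
  have hdir : (∀ s ∈ S, ∀ c ∈ C, s < c) ∨ (∀ s ∈ S, ∀ c ∈ C, c < s) := by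
    rcases lt_or_ge y₀ x₀ with h | h
    · left
      intro s hs c hc
      by_contra hcs
      push_neg at hcs
      rcases le_total s x₀ with h2 | h2
      · exact Set.disjoint_left.mp hdisj hs (hCo.out hc hx ⟨hcs, h2⟩)
      · exact Set.disjoint_left.mp hdisj (hSo.out hy hs ⟨h.le, h2⟩) hx
    · right
      intro s hs c hc
      by_contra hsc
      push_neg at hsc
      rcases le_total x₀ s with h2 | h2
      · exact Set.disjoint_left.mp hdisj hs (hCo.out hx hc ⟨h2, hsc⟩)
      · exact Set.disjoint_left.mp hdisj (hSo.out hs hy ⟨h2, h⟩) hx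
  have key : ∀ a b : X, a ∈ S → b ∈ S → a ≤ b → dist a b ≤ ε / 2 := by
    intro a b ha hb hab
    rcases hdir with hbelow | habove
    · obtain ⟨c, hc, hdc⟩ := hball ha
      exact le_trans (hconv a a b c le_rfl hab (hbelow b hb c hc).le) hdc.le
    · obtain ⟨c, hc, hdc⟩ := hball hb
      calc dist a b ≤ dist c b := hconv c a b b (habove a ha c hc).le hab le_rfl
        _ = dist b c := dist_comm c b
        _ ≤ ε / 2 := hdc.le
  apply EMetric.diam_le
  intro a ha b hb
  rcases le_total a b with hab | hab
  · rw [edist_dist]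
    exact ENNReal.ofReal_le_ofReal (key a b ha hb hab)
  · rw [edist_comm, edist_dist]
    exact ENNReal.ofReal_le_ofReal (key b a hb ha hab)
end

section
/- Let (X,≤) be a metrizable suborderable Hausdorff space with compatible linear order ≤ and compatible convex metric ρ, having infinitely many connected components. (1) If U ⊆ X is a clopen set such that C ⊆ U ⊆ Δ(C,ε) for some connected component C of X and some ε > 0, then U ∈ D[X]. (2) Every U ∈ D[X] that meets infinitely many components of X admits a partition into two sets U₁, U₂ ∈ D[X]. -/
open Topology

section Aux

variable {X : Type*} [TopologicalSpace X]

private lemma comp_eq_of_mem {p q : X} (h : q ∈ connectedComponent p) :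
    connectedComponent q = connectedComponent p := (connectedComponent_eq h).symm

/-- If `c ∈ U` open lies in the closure of a set `R` whose points are all in
components different from `c`'s, then `U` meets infinitely many components. -/
lemma aux_not_finite {U R : Set X} {c : X} (hU : IsOpen U) (hcU : c ∈ U)
    (hc : c ∈ closure R)
    (hR : ∀ y ∈ R, connectedComponent y ≠ connectedComponent c)
    (hfin : {C : Set X | ∃ x ∈ U, C = connectedComponent x}.Finite) : False := by
  classical
  set S := {C : Set X | ∃ x ∈ U, C = connectedComponent x} with hS
  set T := S \ {connectedComponent c} with hT
  have hTfin : T.Finite := hfin.diff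
  have hclosed : IsClosed (⋃ D ∈ T, D) := by
    refine hTfin.isClosed_biUnion ?_
    rintro D ⟨⟨z, -, rfl⟩, -⟩
    exact isClosed_connectedComponent
  have hVopen : IsOpen (U \ ⋃ D ∈ T, D) := hU.sdiff hclosed
  have hcV : c ∈ U \ ⋃ D ∈ T, D := by
    refine ⟨hcU, ?_⟩
    simp only [Set.mem_iUnion]
    rintro ⟨D, ⟨⟨z, -, rfl⟩, hne⟩, hcD⟩
    exact hne (Set.mem_singleton_iff.2 (comp_eq_of_mem hcD).symm)
  obtain ⟨y, hyV, hyR⟩ := (mem_closure_iff.1 hc) _ hVopen hcV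
  have hyT : connectedComponent y ∈ T :=
    ⟨⟨y, hyV.1, rfl⟩, fun h => hR y hyR (Set.mem_singleton_iff.1 h)⟩
  exact hyV.2 (Set.mem_iUnion.2 ⟨connectedComponent y,
    Set.mem_iUnion.2 ⟨hyT, mem_connectedComponent⟩⟩)

/-- If no component of a point of a nonempty clopen `W` is open, then `W`
meets infinitely many components. -/
lemma aux_infinite_comps {W : Set X} (hW : IsClopen W) (hne : W.Nonempty)
    (hnop : ∀ x ∈ W, ¬ IsOpen (connectedComponent x)) :
    {C : Set X | ∃ x ∈ W, C = connectedComponent x}.Infinite := by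
  by_contra hfin
  rw [Set.not_infinite] at hfin
  obtain ⟨x, hxW⟩ := hne
  set F := {C : Set X | ∃ x ∈ W, C = connectedComponent x} with hF
  have hsub : ∀ z ∈ W, connectedComponent z ⊆ W := fun z hz => hW.connectedComponent_subset hz
  have hclosed : IsClosed (⋃ D ∈ F \ {connectedComponent x}, D) := by
    refine (hfin.diff).isClosed_biUnion ?_
    rintro D ⟨⟨z, -, rfl⟩, -⟩
    exact isClosed_connectedComponent
  have heq : connectedComponent x = W \ ⋃ D ∈ F \ {connectedComponent x}, D := by
    ext z
    constructor
    · intro hz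
      refine ⟨hsub x hxW hz, ?_⟩
      simp only [Set.mem_iUnion]
      rintro ⟨D, ⟨⟨w, -, rfl⟩, hne'⟩, hzD⟩
      have e1 : connectedComponent z = connectedComponent w := comp_eq_of_mem hzD
      have e2 : connectedComponent z = connectedComponent x := comp_eq_of_mem hz
      exact hne' (Set.mem_singleton_iff.2 (e1.symm.trans e2))
    · rintro ⟨hzW, hz⟩
      by_contra hzx
      have hne' : connectedComponent z ≠ connectedComponent x := by
        intro h
        exact hzx (by rw [← h]; exact mem_connectedComponent)
      exact hz (Set.mem_iUnion.2 ⟨connectedComponent z,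
        Set.mem_iUnion.2 ⟨⟨⟨z, hzW, rfl⟩, hne'⟩, mem_connectedComponent⟩⟩)
  exact hnop x hxW (heq ▸ hW.2.sdiff hclosed)

end Aux

section Order

variable {X : Type*} [TopologicalSpace X] [LinearOrder X]

/-- Connected components are order-convex when rays are open. -/
lemma comp_ordConnected (hIio : ∀ a : X, IsOpen (Set.Iio a))
    (hIoi : ∀ a : X, IsOpen (Set.Ioi a)) (x : X) :
    (connectedComponent x).OrdConnected := by
  constructor
  intro a ha b hb z hz
  by_contra hzC
  have hz1 : a < z := lt_of_le_of_ne hz.1 (by rintro rfl; exact hzC ha)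
  have hz2 : z < b := lt_of_le_of_ne hz.2 (by rintro rfl; exact hzC hb)
  have hp : IsPreconnected (connectedComponent x) := isPreconnected_connectedComponent
  obtain ⟨w, -, hw1, hw2⟩ := hp (Set.Iio z) (Set.Ioi z) (hIio z) (hIoi z)
    (fun w hw => by
      rcases lt_trichotomy w z with h | h | h
      · exact Or.inl h
      · subst h; exact absurd hw hzC
      · exact Or.inr h)
    ⟨a, ha, hz1⟩ ⟨b, hb, hz2⟩
  exact absurd (hw1.trans hw2) (lt_irrefl w)

lemma comp_below (hIio : ∀ a : X, IsOpen (Set.Iio a))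
    (hIoi : ∀ a : X, IsOpen (Set.Ioi a)) {x y : X} (hxy : x < y)
    (h : connectedComponent x ≠ connectedComponent y) :
    ∀ a ∈ connectedComponent x, ∀ b ∈ connectedComponent y, a < b := by
  intro a ha b hb
  by_contra hab
  push_neg at hab
  rcases le_or_gt b x with hbx | hxb
  · have hx : x ∈ connectedComponent y :=
      (comp_ordConnected hIio hIoi y).out hb mem_connectedComponent ⟨hbx, hxy.le⟩
    exact h (connectedComponent_eq hx).symm
  · have hbC : b ∈ connectedComponent x :=
      (comp_ordConnected hIio hIoi x).out mem_connectedComponent ha ⟨hxb.le, hab⟩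
    have e1 : connectedComponent x = connectedComponent b := connectedComponent_eq hbC
    have e2 : connectedComponent y = connectedComponent b := connectedComponent_eq hb
    exact h (e1.trans e2.symm)

lemma comp_comparable (hIio : ∀ a : X, IsOpen (Set.Iio a))
    (hIoi : ∀ a : X, IsOpen (Set.Ioi a)) {x y : X}
    (h : connectedComponent x ≠ connectedComponent y) :
    (∀ a ∈ connectedComponent x, ∀ b ∈ connectedComponent y, a < b) ∨
      (∀ a ∈ connectedComponent y, ∀ b ∈ connectedComponent x, a < b) := by
  rcases lt_trichotomy x y with hxy | rfl | hyx
  · exact Or.inl (comp_below hIio hIoi hxy h)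
  · exact absurd rfl h
  · exact Or.inr (comp_below hIio hIoi hyx h.symm)

end Order

/-- Proposition 4.3: in a metrizable suborderable space `(X, ≤)` with
compatible convex metric and infinitely many connected components:
(1) every clopen `U` with `C ⊆ U ⊆ Δ(C, ε)` for a component `C` and `ε > 0`
belongs to `D[X]`; (2) every `U ∈ D[X]` meeting infinitely many components can
be partitioned into two members of `D[X]`. -/
theorem stmt13 {X : Type*} [MetricSpace X] [LinearOrder X]
    (hconv : ∀ x a b y : X, x ≤ a → a ≤ b → b ≤ y → dist a b ≤ dist x y)
    (hIio : ∀ a : X, IsOpen (Set.Iio a)) (hIoi : ∀ a : X, IsOpen (Set.Ioi a))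
    (hbase : ∀ (x : X) (U : Set X), IsOpen U → x ∈ U →
      ∃ V : Set X, IsOpen V ∧ x ∈ V ∧ V ⊆ U ∧ V.OrdConnected)
    (hinf : (Set.range fun x : X => connectedComponent x).Infinite) :
    (∀ (U : Set X), IsClopen U → ∀ (x₀ : X) (ε : ℝ), 0 < ε →
      connectedComponent x₀ ⊆ U → U ⊆ Delta (connectedComponent x₀) ε →
        U ∈ DD X) ∧
    (∀ U ∈ DD X, {C : Set X | ∃ x ∈ U, C = connectedComponent x}.Infinite →
      ∃ U₁ U₂ : Set X, U₁ ∈ DD X ∧ U₂ ∈ DD X ∧ U₁ ∩ U₂ = ∅ ∧ U₁ ∪ U₂ = U) := by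
  constructor
  · -- Part (1)
    intro U hU x₀ ε hε hCU hUD
    refine ⟨hU, ?_⟩
    rcases Set.finite_or_infinite {C : Set X | ∃ x ∈ U, C = connectedComponent x}
      with hfin | hinfS
    swap
    · exact Or.inr hinfS
    left
    refine ⟨x₀, Set.Subset.antisymm ?_ hCU⟩
    intro x hx
    by_contra hxC
    have hne : connectedComponent x ≠ connectedComponent x₀ := by
      intro h
      exact hxC (by rw [← h]; exact mem_connectedComponent)
    rcases comp_comparable hIio hIoi hne with hbel | hbel
    · -- x's component below C : x ∈ leftOf C
      have hxL : x ∈ leftOf (connectedComponent x₀) :=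
        fun c hc => hbel x mem_connectedComponent c hc
      have hxD := hUD hx
      unfold Delta at hxD
      by_cases h1 : ell (connectedComponent x₀) = 0 ∧ rr (connectedComponent x₀) = 0
      · rw [if_pos h1] at hxD
        exact hne (connectedComponent_eq hxD).symm
      by_cases h3 : ell (connectedComponent x₀) = 0 ∧ rr (connectedComponent x₀) ≠ 0
      · have h2 : ¬(ell (connectedComponent x₀) ≠ 0 ∧ rr (connectedComponent x₀) = 0) := by
          intro h2; exact h2.1 h3.1
        rw [if_neg h1, if_neg h2, if_pos h3] at hxD
        exact hxD.2 hxL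
      -- here ell ≠ 0
      have hell : ell (connectedComponent x₀) ≠ 0 := by
        intro h
        rcases eq_or_ne (rr (connectedComponent x₀)) 0 with hr | hr
        · exact h1 ⟨h, hr⟩
        · exact h3 ⟨h, hr⟩
      obtain ⟨c, hcCl, hcC⟩ := Set.nonempty_of_ncard_ne_zero hell
      refine aux_not_finite hU.2 (hCU hcC) hcCl ?_ hfin
      intro y hy h
      have hyC : y ∈ connectedComponent x₀ := by
        have e : connectedComponent x₀ = connectedComponent c := connectedComponent_eq hcC
        rw [e, ← h]; exact mem_connectedComponent
      exact lt_irrefl y (hy y hyC)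
    · -- x's component above C : x ∈ rightOf C
      have hxR : x ∈ rightOf (connectedComponent x₀) :=
        fun c hc => hbel c hc x mem_connectedComponent
      have hxD := hUD hx
      unfold Delta at hxD
      by_cases h1 : ell (connectedComponent x₀) = 0 ∧ rr (connectedComponent x₀) = 0
      · rw [if_pos h1] at hxD
        exact hne (connectedComponent_eq hxD).symm
      by_cases h2 : ell (connectedComponent x₀) ≠ 0 ∧ rr (connectedComponent x₀) = 0
      · rw [if_neg h1, if_pos h2] at hxD
        exact hxD.2 hxR
      have hrr : rr (connectedComponent x₀) ≠ 0 := by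
        intro h
        rcases eq_or_ne (ell (connectedComponent x₀)) 0 with hl | hl
        · exact h1 ⟨hl, h⟩
        · exact h2 ⟨hl, h⟩
      obtain ⟨c, hcC, hcCl⟩ := Set.nonempty_of_ncard_ne_zero hrr
      refine aux_not_finite hU.2 (hCU hcC) hcCl ?_ hfin
      intro y hy h
      have hyC : y ∈ connectedComponent x₀ := by
        have e : connectedComponent x₀ = connectedComponent c := connectedComponent_eq hcC
        rw [e, ← h]; exact mem_connectedComponent
      exact lt_irrefl y (hy y hyC)
  · -- Part (2)
    intro U hUDD hinfU
    obtain ⟨hU, -⟩ := hUDD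
    by_cases hop : ∃ x ∈ U, IsOpen (connectedComponent x)
    · obtain ⟨x, hxU, hox⟩ := hop
      refine ⟨connectedComponent x, U \ connectedComponent x,
        ⟨⟨isClosed_connectedComponent, hox⟩, Or.inl ⟨x, rfl⟩⟩, ?_, ?_, ?_⟩
      · refine ⟨⟨hU.1.sdiff hox, hU.2.sdiff isClosed_connectedComponent⟩, Or.inr ?_⟩
        have hsub : {C : Set X | ∃ y ∈ U, C = connectedComponent y} \ {connectedComponent x}
            ⊆ {C : Set X | ∃ y ∈ U \ connectedComponent x, C = connectedComponent y} := by
          rintro D ⟨⟨z, hzU, rfl⟩, hne⟩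
          refine ⟨z, ⟨hzU, ?_⟩, rfl⟩
          intro hz
          exact hne (Set.mem_singleton_iff.2 (connectedComponent_eq hz).symm)
        exact ((hinfU.diff (Set.finite_singleton _)).mono hsub)
      · exact Set.inter_diff_self _ _
      · exact Set.union_diff_cancel (hU.connectedComponent_subset hxU)
    · push_neg at hop
      -- no component meeting U is open; U is disconnected
      obtain ⟨C₁, hC₁, C₂, hC₂, hC12⟩ := hinfU.nontrivial
      obtain ⟨a, haU, rfl⟩ := hC₁
      obtain ⟨b, hbU, rfl⟩ := hC₂
      have hdisc : ¬ IsPreconnected U := by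
        intro hpre
        exact hC12 (connectedComponent_eq (hpre.subset_connectedComponent haU hbU))
      rw [IsPreconnected] at hdisc
      push_neg at hdisc
      obtain ⟨u, v, hu, hv, hcov, hune, hvne, hdisj⟩ := hdisc
      have hdisj' : U ∩ (u ∩ v) = ∅ := hdisj
      have hU1eq : U ∩ u = U \ v := by
        ext z
        constructor
        · rintro ⟨hzU, hzu⟩
          refine ⟨hzU, fun hzv => ?_⟩
          have hmem : z ∈ U ∩ (u ∩ v) := ⟨hzU, hzu, hzv⟩
          rw [hdisj'] at hmem; exact hmem
        · rintro ⟨hzU, hzv⟩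
          exact ⟨hzU, (hcov hzU).resolve_right hzv⟩
      have hU2eq : U \ u = U ∩ v := by
        ext z
        constructor
        · rintro ⟨hzU, hzu⟩
          exact ⟨hzU, (hcov hzU).resolve_left hzu⟩
        · rintro ⟨hzU, hzv⟩
          refine ⟨hzU, fun hzu => ?_⟩
          have hmem : z ∈ U ∩ (u ∩ v) := ⟨hzU, hzu, hzv⟩
          rw [hdisj'] at hmem; exact hmem
      have hU1clopen : IsClopen (U ∩ u) := by
        refine ⟨?_, hU.2.inter hu⟩
        rw [hU1eq]
        exact hU.1.sdiff hv
      have hU2clopen : IsClopen (U \ u) := by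
        refine ⟨hU.1.sdiff hu, ?_⟩
        rw [hU2eq]
        exact hU.2.inter hv
      have hU2ne : (U \ u).Nonempty := hU2eq ▸ hvne
      refine ⟨U ∩ u, U \ u,
        ⟨hU1clopen, Or.inr (aux_infinite_comps hU1clopen hune
          (fun z hz => hop z hz.1))⟩,
        ⟨hU2clopen, Or.inr (aux_infinite_comps hU2clopen hU2ne
          (fun z hz => hop z hz.1))⟩, ?_, ?_⟩
      · ext z
        simp only [Set.mem_inter_iff, Set.mem_diff, Set.mem_empty_iff_false, iff_false]
        tauto
      · ext z
        simp only [Set.mem_union, Set.mem_inter_iff, Set.mem_diff]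
        tauto
end

section
/- Let (X,≤) be a metrizable suborderable Hausdorff space with compatible linear order ≤ and compatible convex metric ρ, having infinitely many connected components. Let ε > 0, Z ∈ D[X,2ε], and let C be a connected component of Z with diam(C) ≥ 2ε. Then Z has a partition U ⊆ D[X,ε] which is a discrete family in X, with |U| ≠ 2, such that: (i) for every U ∈ U with U ∩ C = ∅, either u < c for all u ∈ U, c ∈ C, or c < u for all u ∈ U, c ∈ C; (ii) |{U ∈ U : U < C}| ≥ 6·ℓ(C) and |{U ∈ U : C < U}| ≥ 6·r(C); and moreover diam(U) ≤ 2ε for every U ∈ U with U ∩ C = ∅. -/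
open Topology

set_option linter.unusedSectionVars false
set_option linter.unusedVariables false
set_option maxHeartbeats 1000000

section Helpers
open Set

variable {X : Type*} [MetricSpace X] [LinearOrder X]

private lemma dist_anti (hconv : ∀ x a b y : X, x ≤ a → a ≤ b → b ≤ y → dist a b ≤ dist x y)
    {s t a : X} (hst : s ≤ t) (hta : t ≤ a) : dist t a ≤ dist s a :=
  hconv s t a a hst hta le_rfl

private lemma diam_le_anchor (hconv : ∀ x a b y : X, x ≤ a → a ≤ b → b ≤ y → dist a b ≤ dist x y)
    {P : Set X} {z a : X} {r : ℝ}
    (hz : ∀ t ∈ P, z ≤ t) (ha : ∀ t ∈ P, t ≤ a) (hr : dist z a ≤ r) :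
    EMetric.diam P ≤ ENNReal.ofReal r := by
  apply EMetric.diam_le
  intro x hx y hy
  rcases le_total x y with h | h
  · rw [edist_dist]
    exact ENNReal.ofReal_le_ofReal ((hconv z x y a (hz x hx) h (ha y hy)).trans hr)
  · rw [edist_comm, edist_dist]
    exact ENNReal.ofReal_le_ofReal ((hconv z y x a (hz y hy) h (ha x hx)).trans hr)

private lemma diam_le_upper (hconv : ∀ x a b y : X, x ≤ a → a ≤ b → b ≤ y → dist a b ≤ dist x y)
    {P : Set X} {a : X} {r : ℝ}
    (ha : ∀ t ∈ P, t ≤ a) (hd : ∀ t ∈ P, dist t a ≤ r) :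
    EMetric.diam P ≤ ENNReal.ofReal r := by
  apply EMetric.diam_le
  intro x hx y hy
  rcases le_total x y with h | h
  · rw [edist_dist]
    exact ENNReal.ofReal_le_ofReal ((hconv x x y a le_rfl h (ha y hy)).trans (hd x hx))
  · rw [edist_comm, edist_dist]
    exact ENNReal.ofReal_le_ofReal ((hconv y y x a le_rfl h (ha x hx)).trans (hd y hy))

private lemma preconn_mem_of_between (hIio : ∀ a : X, IsOpen (Set.Iio a))
    (hIoi : ∀ a : X, IsOpen (Set.Ioi a)) {K : Set X} (hK : IsPreconnected K)
    {p q t : X} (hp : p ∈ K) (hq : q ∈ K) (hpt : p ≤ t) (htq : t ≤ q) : t ∈ K := by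
  by_contra ht
  have hcov : K ⊆ Set.Iio t ∪ Set.Ioi t := by
    intro s hs
    rcases lt_trichotomy s t with h | h | h
    · exact Or.inl h
    · exact absurd (h ▸ hs) ht
    · exact Or.inr h
  obtain ⟨s, _, hs1, hs2⟩ := hK (Set.Iio t) (Set.Ioi t) (hIio t) (hIoi t) hcov
    ⟨p, hp, lt_of_le_of_ne hpt fun h => ht (h ▸ hp)⟩
    ⟨q, hq, lt_of_le_of_ne htq fun h => ht (h.symm ▸ hq)⟩
  exact absurd (hs1.trans hs2) (lt_irrefl s)

private lemma preconn_side (hIio : ∀ a : X, IsOpen (Set.Iio a))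
    (hIoi : ∀ a : X, IsOpen (Set.Ioi a)) {K : Set X} (hK : IsPreconnected K) {t : X}
    (ht : t ∉ K) : (∀ k ∈ K, t < k) ∨ (∀ k ∈ K, k < t) := by
  by_contra h
  push_neg at h
  obtain ⟨⟨k₁, hk₁, hk₁'⟩, k₂, hk₂, hk₂'⟩ := h
  exact ht (preconn_mem_of_between hIio hIoi hK hk₁ hk₂ hk₁' hk₂')

private lemma connComp_subset_clopen {Z : Set X} (hZ : IsClopen Z) {x : X} (hx : x ∈ Z) :
    connectedComponent x ⊆ Z :=
  isPreconnected_connectedComponent.subset_isClopen hZ ⟨x, mem_connectedComponent, hx⟩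

private lemma connCompIn_of_comp_subset {P : Set X} {x : X} (h : connectedComponent x ⊆ P) :
    connectedComponentIn P x = connectedComponent x :=
  subset_antisymm
    (isPreconnected_connectedComponentIn.subset_connectedComponent
      (mem_connectedComponentIn (h mem_connectedComponent)))
    (isPreconnected_connectedComponent.subset_connectedComponentIn mem_connectedComponent h)

private lemma connCompIn_clopen {Z : Set X} (hZ : IsClopen Z) {x : X} (hx : x ∈ Z) :
    connectedComponentIn Z x = connectedComponent x :=
  connCompIn_of_comp_subset (connComp_subset_clopen hZ hx)

private lemma comp_open_of_finite {P : Set X} (hP : IsClopen P)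
    (hfin : {K : Set X | ∃ x ∈ P, K = connectedComponent x}.Finite) {x : X} (hx : x ∈ P) :
    IsOpen (connectedComponent x) := by
  have heq : connectedComponent x =
      P \ ⋃₀ {K : Set X | (∃ y ∈ P, K = connectedComponent y) ∧ K ≠ connectedComponent x} := by
    apply subset_antisymm
    · intro t ht
      refine ⟨connComp_subset_clopen hP hx ht, ?_⟩
      rintro ⟨K, ⟨⟨y, _, rfl⟩, hne⟩, htK⟩
      exact hne ((connectedComponent_eq htK).trans (connectedComponent_eq ht).symm)
    · rintro t ⟨htP, hnt⟩
      by_contra htx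
      exact hnt ⟨connectedComponent t, ⟨⟨t, htP, rfl⟩,
        fun h => htx (h ▸ mem_connectedComponent)⟩, mem_connectedComponent⟩
  rw [heq]
  apply hP.2.sdiff
  rw [Set.sUnion_eq_biUnion]
  exact (hfin.subset (fun K hK => hK.1)).isClosed_biUnion
    (by rintro K ⟨⟨y, _, rfl⟩, _⟩; exact isClosed_connectedComponent)

private lemma subset_Delta_self {C : Set X} {ε : ℝ} (hε : 0 < ε) : C ⊆ Delta C ε := by
  intro c hc
  have hball : c ∈ ballAround C (ε / 2) := ⟨c, hc, by simpa using half_pos hε⟩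
  have hleft : c ∉ leftOf C := fun h => lt_irrefl c (h c hc)
  have hright : c ∉ rightOf C := fun h => lt_irrefl c (h c hc)
  unfold Delta
  split_ifs
  · exact hc
  · exact ⟨hball, hright⟩
  · exact ⟨hball, hleft⟩
  · exact hball

private lemma comp_mem_DXeps {ε : ℝ} (hε : 0 < ε) {x : X} (hK : IsClopen (connectedComponent x)) :
    connectedComponent x ∈ DXeps X ε := by
  constructor
  · exact ⟨hK, Or.inl ⟨x, rfl⟩⟩
  · by_cases hd : EMetric.diam (connectedComponent x) < ENNReal.ofReal ε
    · exact Or.inl hd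
    · exact Or.inr ⟨connectedComponent x, ⟨⟨x, mem_connectedComponent,
        (connCompIn_of_comp_subset subset_rfl).symm⟩, not_lt.mp hd⟩, subset_Delta_self hε⟩

open scoped Classical in
private noncomputable def refineP (P : Set X) : Set (Set X) :=
  if {K : Set X | ∃ x ∈ P, K = connectedComponent x}.Infinite then {P}
  else {K : Set X | ∃ x ∈ P, K = connectedComponent x}

private lemma refineP_spec {ε : ℝ} (hε : 0 < ε) {P : Set X} (hP : IsClopen P)
    (hd : EMetric.diam P < ENNReal.ofReal ε) :
    (∀ v ∈ refineP P, v ∈ DXeps X ε ∧ v.Nonempty ∧ v ⊆ P) ∧ ⋃₀ refineP P = P ∧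
      (∀ u ∈ refineP P, ∀ v ∈ refineP P, u ≠ v → u ∩ v = ∅) := by
  classical
  unfold refineP
  split_ifs with hinf
  · refine ⟨?_, by simp, ?_⟩
    · rintro v hv
      rcases hv with rfl
      refine ⟨⟨⟨hP, Or.inr hinf⟩, Or.inl hd⟩, ?_, subset_rfl⟩
      obtain ⟨K, hK⟩ := hinf.nonempty
      obtain ⟨y, hy, _⟩ := hK
      exact ⟨y, hy⟩
    · rintro u hu v hv hne
      rcases hu with rfl; rcases hv with rfl
      exact absurd rfl hne
  · refine ⟨?_, ?_, ?_⟩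
    · rintro v ⟨x, hx, rfl⟩
      have hsub : connectedComponent x ⊆ P := connComp_subset_clopen hP hx
      have hopen : IsOpen (connectedComponent x) :=
        comp_open_of_finite hP (Set.not_infinite.mp hinf) hx
      exact ⟨comp_mem_DXeps hε ⟨isClosed_connectedComponent, hopen⟩,
        ⟨x, mem_connectedComponent⟩, hsub⟩
    · apply subset_antisymm
      · rintro t ⟨K, ⟨x, hx, rfl⟩, htK⟩
        exact connComp_subset_clopen hP hx htK
      · intro t ht
        exact ⟨connectedComponent t, ⟨t, ht, rfl⟩, mem_connectedComponent⟩
    · rintro u ⟨x, _, rfl⟩ v ⟨y, _, rfl⟩ hne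
      rw [Set.eq_empty_iff_forall_notMem]
      rintro t ⟨htx, hty⟩
      exact hne ((connectedComponent_eq htx).trans (connectedComponent_eq hty).symm)



private lemma cut_core (hIio : ∀ a : X, IsOpen (Set.Iio a)) (hIoi : ∀ a : X, IsOpen (Set.Ioi a)) (hbase : ∀ (x : X) (U : Set X), IsOpen U → x ∈ U →
      ∃ V : Set X, IsOpen V ∧ x ∈ V ∧ V ⊆ U ∧ V.OrdConnected)
    {x y : X} (hxy : x < y) {U₁ U₂ : Set X} (hU₁ : IsOpen U₁) (hU₂ : IsOpen U₂)
    (hcover : Set.Icc x y ⊆ U₁ ∪ U₂) (hdisj : Set.Icc x y ∩ (U₁ ∩ U₂) = ∅)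
    (hx : x ∈ U₁) (hB : (Set.Icc x y ∩ U₂).Nonempty) :
    ∃ V : Set X, IsClopen V ∧ (∀ s t : X, s ≤ t → t ∈ V → s ∈ V) ∧ x ∈ V ∧ V ⊆ Set.Iio y := by
  have hdisj' : ∀ t, t ∈ Set.Icc x y → t ∈ U₁ → t ∈ U₂ → False := by
    intro t h1 h2 h3
    have : t ∈ Set.Icc x y ∩ (U₁ ∩ U₂) := ⟨h1, h2, h3⟩
    rw [hdisj] at this
    exact this
  set A : Set X := Set.Icc x y ∩ U₁ with hA
  set D : Set X := {t | t ∈ Set.Icc x y ∧ Set.Icc x t ⊆ A} with hD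
  have hxA : x ∈ A := ⟨⟨le_rfl, hxy.le⟩, hx⟩
  have hyD : y ∉ D := by
    intro hy
    obtain ⟨u, hu1, hu2⟩ := hB
    exact hdisj' u hu1 (hy.2 ⟨hu1.1, hu1.2⟩).2 hu2
  have hDlt : ∀ t ∈ D, t < y := fun t ht =>
    lt_of_le_of_ne ht.1.2 fun h => hyD (h ▸ ht)
  have hDdown : ∀ s t : X, x ≤ s → s ≤ t → t ∈ D → s ∈ D := by
    intro s t hxs hst ht
    exact ⟨⟨hxs, hst.trans ht.1.2⟩, fun u hu => ht.2 ⟨hu.1, hu.2.trans hst⟩⟩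
  refine ⟨Set.Iio x ∪ D, ⟨?_, ?_⟩, ?_, ?_, ?_⟩
  · -- closed
    rw [← isOpen_compl_iff]
    rw [isOpen_iff_forall_mem_open]
    intro t ht
    simp only [Set.mem_compl_iff, Set.mem_union, not_or, Set.mem_Iio, not_lt] at ht
    obtain ⟨htx, htD⟩ := ht
    rcases lt_or_ge y t with hyt | hty
    · refine ⟨Set.Ioi y, ?_, (hIoi _), hyt⟩
      intro s hs
      simp only [Set.mem_compl_iff, Set.mem_union, not_or, Set.mem_Iio, not_lt]
      exact ⟨(hxy.trans hs).le, fun hD' => absurd (hDlt s hD') (not_lt.mpr hs.le)⟩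
    · have htIcc : t ∈ Set.Icc x y := ⟨htx, hty⟩
      have : ¬ Set.Icc x t ⊆ A := fun h => htD ⟨htIcc, h⟩
      obtain ⟨u, hu, huA⟩ := Set.not_subset.mp this
      have huIcc : u ∈ Set.Icc x y := ⟨hu.1, hu.2.trans hty⟩
      have huU₂ : u ∈ U₂ := by
        rcases hcover huIcc with h | h
        · exact absurd (⟨huIcc, h⟩ : u ∈ A) huA
        · exact h
      rcases lt_or_ge u t with hut | htu
      · refine ⟨Set.Ioi u, ?_, (hIoi _), hut⟩
        intro s hs
        simp only [Set.mem_compl_iff, Set.mem_union, not_or, Set.mem_Iio, not_lt]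
        refine ⟨hu.1.trans hs.le, fun hD' => ?_⟩
        exact huA (hD'.2 ⟨hu.1, hs.le⟩)
      · have hut : u = t := le_antisymm hu.2 htu
        subst hut
        have hxu : x < u := by
          rcases lt_or_eq_of_le htx with h | h
          · exact h
          · exact absurd huU₂ fun h2 => hdisj' u huIcc (h ▸ hx) h2
        obtain ⟨N, hNopen, htN, hNsub, _⟩ := hbase u U₂ hU₂ huU₂
        refine ⟨N ∩ Set.Ioi x, ?_, hNopen.inter (hIoi _), htN, hxu⟩
        rintro s ⟨hsN, hsx⟩
        simp only [Set.mem_compl_iff, Set.mem_union, not_or, Set.mem_Iio, not_lt]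
        refine ⟨hsx.le, fun hD' => ?_⟩
        have hsA : s ∈ A := hD'.2 ⟨hsx.le, le_rfl⟩
        exact hdisj' s hsA.1 hsA.2 (hNsub hsN)
  · -- open
    rw [isOpen_iff_forall_mem_open]
    intro t ht
    rcases ht with htx | htD
    · exact ⟨Set.Iio x, fun s hs => Or.inl hs, (hIio _), htx⟩
    · have htA : t ∈ A := htD.2 ⟨htD.1.1, le_rfl⟩
      obtain ⟨N, hNopen, htN, hNsub, hNoc⟩ := hbase t U₁ hU₁ htA.2
      refine ⟨N ∩ Set.Iio y, ?_, hNopen.inter (hIio _), htN, hDlt t htD⟩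
      rintro s ⟨hsN, hsy⟩
      rcases lt_or_ge s x with hsx | hxs
      · exact Or.inl hsx
      · refine Or.inr ⟨⟨hxs, hsy.le⟩, ?_⟩
        intro u hu
        rcases le_or_gt u t with hut | htu
        · exact htD.2 ⟨hu.1, hut⟩
        · have huN : u ∈ N := hNoc.out htN hsN ⟨htu.le, hu.2⟩
          exact ⟨⟨hu.1, hu.2.trans hsy.le⟩, hNsub huN⟩
  · -- down-set
    intro s t hst ht
    rcases ht with htx | htD
    · exact Or.inl (lt_of_le_of_lt hst htx)
    · rcases lt_or_ge s x with hsx | hxs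
      · exact Or.inl hsx
      · exact Or.inr (hDdown s t hxs hst htD)
  · -- x ∈ V
    refine Or.inr ⟨⟨le_rfl, hxy.le⟩, fun u hu => ?_⟩
    have : u = x := le_antisymm hu.2 hu.1
    exact this ▸ hxA
  · -- ⊆ Iio y
    rintro t (htx | htD)
    · exact htx.trans hxy
    · exact hDlt t htD

private lemma cut_lemma (hIio : ∀ a : X, IsOpen (Set.Iio a)) (hIoi : ∀ a : X, IsOpen (Set.Ioi a)) (hbase : ∀ (x : X) (U : Set X), IsOpen U → x ∈ U →
      ∃ V : Set X, IsOpen V ∧ x ∈ V ∧ V ⊆ U ∧ V.OrdConnected)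
    {x y : X} (hxy : x < y) (hcomp : y ∉ connectedComponent x) :
    ∃ V : Set X, IsClopen V ∧ (∀ s t : X, s ≤ t → t ∈ V → s ∈ V) ∧ x ∈ V ∧ V ⊆ Set.Iio y := by
  have hnc : ¬ IsPreconnected (Set.Icc x y) := by
    intro h
    exact hcomp (h.subset_connectedComponent ⟨le_rfl, hxy.le⟩ ⟨hxy.le, le_rfl⟩)
  rw [IsPreconnected] at hnc
  push_neg at hnc
  obtain ⟨U₁, U₂, hU₁, hU₂, hcover, hne₁, hne₂, hdisj⟩ := hnc
  have hxmem : x ∈ U₁ ∪ U₂ := hcover ⟨le_rfl, hxy.le⟩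
  rcases hxmem with hx1 | hx2
  · exact cut_core hIio hIoi hbase hxy hU₁ hU₂ hcover hdisj hx1 hne₂
  · refine cut_core hIio hIoi hbase hxy hU₂ hU₁ ?_ ?_ hx2 hne₁
    · rwa [Set.union_comm]
    · rwa [Set.inter_comm U₂ U₁]

private lemma diam_le_pairs {P : Set X} {r : ℝ}
    (h : ∀ t ∈ P, ∀ s ∈ P, t ≤ s → dist t s ≤ r) :
    EMetric.diam P ≤ ENNReal.ofReal r := by
  apply EMetric.diam_le
  intro t ht s hs
  rcases le_total t s with hle | hle
  · rw [edist_dist]; exact ENNReal.ofReal_le_ofReal (h t ht s hs hle)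
  · rw [edist_comm, edist_dist]; exact ENNReal.ofReal_le_ofReal (h s hs t ht hle)

private lemma bottom_lemma
    (hconv : ∀ x a b y : X, x ≤ a → a ≤ b → b ≤ y → dist a b ≤ dist x y)
    (hIio : ∀ a : X, IsOpen (Set.Iio a)) (hIoi : ∀ a : X, IsOpen (Set.Ioi a))
    (hbase : ∀ (x : X) (U : Set X), IsOpen U → x ∈ U →
      ∃ V : Set X, IsOpen V ∧ x ∈ V ∧ V ⊆ U ∧ V.OrdConnected)
    {ε : ℝ} (hε : 0 < ε) {Z : Set X} (hZ : IsClopen Z) {a : X}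
    {P : Set X} (hP : IsClopen P) (hPZ : P ⊆ Z) (hPa : ∀ t ∈ P, t < a)
    (hPdown : ∀ s ∈ Z, ∀ t ∈ P, s ≤ t → s ∈ P)
    (hdist : ∀ t ∈ Z, t < a → dist t a < ε) :
    ∃ 𝒱 : Set (Set X), (∀ v ∈ 𝒱, v ∈ DXeps X ε ∧ v.Nonempty ∧ v ⊆ P) ∧ ⋃₀ 𝒱 = P ∧
      (∀ u ∈ 𝒱, ∀ v ∈ 𝒱, u ≠ v → u ∩ v = ∅) := by
  classical
  have hgP : ∀ t ∈ P, dist t a < ε := fun t ht => hdist t (hPZ ht) (hPa t ht)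
  by_cases hA : EMetric.diam P < ENNReal.ofReal ε
  · obtain ⟨h1, h2, h3⟩ := refineP_spec hε hP hA
    exact ⟨refineP P, h1, h2, h3⟩
  · have hF1 : ∀ r : ℝ, r < ε → ∃ t ∈ P, r < dist t a := by
      intro r hr
      by_contra h
      push_neg at h
      exact hA (lt_of_le_of_lt (diam_le_upper hconv (fun t ht => (hPa t ht).le) h)
        ((ENNReal.ofReal_lt_ofReal_iff hε).mpr hr))
    have hPne : P.Nonempty := by
      obtain ⟨t, ht, _⟩ := hF1 (ε / 2) (by linarith)
      exact ⟨t, ht⟩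
    by_cases hB1 : ∃ x ∈ P, ∀ t ∈ P, ∃ k ∈ connectedComponent x, k ≤ t
    · -- bottom component exists
      obtain ⟨x, hxP, hxbot⟩ := hB1
      have hKP : connectedComponent x ⊆ P := connComp_subset_clopen hP hxP
      have hKnb : ∀ t ∈ P, t ∉ connectedComponent x → ∀ k ∈ connectedComponent x, k < t := by
        intro t htP htK
        rcases preconn_side hIio hIoi isPreconnected_connectedComponent htK with h | h
        · exfalso
          obtain ⟨k, hk, hkt⟩ := hxbot t htP
          exact absurd (h k hk) (not_lt.mpr hkt)
        · exact h
      by_cases hKopen : IsOpen (connectedComponent x)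
      · -- K clopen
        have hKcl : IsClopen (connectedComponent x) := ⟨isClosed_connectedComponent, hKopen⟩
        have hrest : IsClopen (P \ connectedComponent x) := hP.diff hKcl
        have hrd : EMetric.diam (P \ connectedComponent x) < ENNReal.ofReal ε := by
          refine lt_of_le_of_lt (diam_le_anchor hconv (z := x) (a := a) ?_ ?_ le_rfl) ?_
          · intro t ht; exact (hKnb t ht.1 ht.2 x mem_connectedComponent).le
          · intro t ht; exact (hPa t ht.1).le
          · exact (ENNReal.ofReal_lt_ofReal_iff hε).mpr (hgP x hxP)
        obtain ⟨hs1, hs2, hs3⟩ := refineP_spec hε hrest hrd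
        refine ⟨insert (connectedComponent x) (refineP (P \ connectedComponent x)), ?_, ?_, ?_⟩
        · rintro v (rfl | hv)
          · exact ⟨comp_mem_DXeps hε hKcl, ⟨x, mem_connectedComponent⟩, hKP⟩
          · obtain ⟨h1, h2, h3⟩ := hs1 v hv
            exact ⟨h1, h2, h3.trans Set.diff_subset⟩
        · rw [Set.sUnion_insert, hs2]
          exact Set.union_diff_cancel hKP
        · rintro u hu v hv hne
          rcases hu with rfl | hu <;> rcases hv with rfl | hv
          · exact absurd rfl hne
          · apply Set.eq_empty_of_subset_empty
            rintro t ⟨h1, h2⟩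
            exact (((hs1 v hv).2.2 h2).2 h1).elim
          · apply Set.eq_empty_of_subset_empty
            rintro t ⟨h1, h2⟩
            exact (((hs1 u hu).2.2 h1).2 h2).elim
          · exact hs3 u hu v hv hne
      · -- K not clopen : Y-construction
        have hpex : ∃ p ∈ connectedComponent x, ∀ O : Set X, IsOpen O → p ∈ O →
            ∃ s, (s ∈ Z ∧ s ∉ connectedComponent x) ∧ s ∈ O := by
          by_contra h
          push_neg at h
          apply hKopen
          rw [isOpen_iff_forall_mem_open]
          intro p hp
          obtain ⟨O, hO, hpO, hOem⟩ := h p hp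
          refine ⟨O ∩ Z, ?_, hO.inter hZ.2, hpO, hPZ (hKP hp)⟩
          rintro s ⟨hsO, hsZ⟩
          by_contra hsK
          exact hOem s ⟨hsZ, hsK⟩ hsO
        obtain ⟨p, hpK, hpcl⟩ := hpex
        have hout : ∀ s, (s ∈ Z ∧ s ∉ connectedComponent x) →
            (∀ k ∈ connectedComponent x, k < s) ∨ False ∨
            (s ∈ P ∧ False) → True := fun _ _ _ => trivial
        have hside : ∀ s, s ∈ Z → s ∉ connectedComponent x →
            (∀ k ∈ connectedComponent x, s < k) → False := by
          intro s hsZ hsK h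
          have hsP : s ∈ P := hPdown s hsZ x hxP (h x mem_connectedComponent).le
          exact absurd (hKnb s hsP hsK x mem_connectedComponent)
            (not_lt.mpr (h x mem_connectedComponent).le)
        have habove : ∀ s, s ∈ Z → s ∉ connectedComponent x →
            ∀ k ∈ connectedComponent x, k < s := by
          intro s hsZ hsK
          rcases preconn_side hIio hIoi isPreconnected_connectedComponent hsK with h | h
          · exact absurd (hside s hsZ hsK h) not_false
          · exact h
        have hpmax : ∀ k ∈ connectedComponent x, k ≤ p := by
          intro k hk
          by_contra hkp
          push_neg at hkp
          obtain ⟨s, ⟨hsZ, hsK⟩, hsO⟩ := hpcl (Set.Iio k) (hIio k) hkp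
          exact absurd (habove s hsZ hsK k hk) (not_lt.mpr (le_of_lt hsO))
        have hracc : ∀ δ : ℝ, 0 < δ → ∃ s, s ∈ Z ∧ s ∉ connectedComponent x ∧
            (∀ k ∈ connectedComponent x, k < s) ∧ dist s p < δ := by
          intro δ hδ
          obtain ⟨s, ⟨hsZ, hsK⟩, hsO⟩ :=
            hpcl (Metric.ball p δ) Metric.isOpen_ball (Metric.mem_ball_self hδ)
          exact ⟨s, hsZ, hsK, habove s hsZ hsK, by rwa [Metric.mem_ball] at hsO⟩
        have hpair : ∀ δ : ℝ, 0 < δ → ∃ s1 s2 : X, s1 ∈ Z ∧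
            (∀ k ∈ connectedComponent x, k < s1) ∧ dist s1 p < δ ∧
            (∀ k ∈ connectedComponent x, k < s2) ∧ dist s2 p < δ ∧ s1 < s2 ∧
            s2 ∉ connectedComponent s1 := by
          intro δ hδ
          obtain ⟨s1, hs1Z, hs1K, hs1gt, hs1d⟩ := hracc δ hδ
          have hsecond : ∃ s2, s2 ∈ Z ∧ s2 ∉ connectedComponent x ∧
              (∀ k ∈ connectedComponent x, k < s2) ∧ dist s2 p < δ ∧
              s2 ∉ connectedComponent s1 := by
            by_contra h
            push_neg at h
            have hpcl2 : p ∈ closure (connectedComponent s1) := by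
              rw [Metric.mem_closure_iff]
              intro δ' hδ'
              obtain ⟨s, hsZ, hsK, hsgt, hsd⟩ := hracc (min δ δ') (lt_min hδ hδ')
              refine ⟨s, h s hsZ hsK hsgt (hsd.trans_le (min_le_left _ _)), ?_⟩
              rw [dist_comm]
              exact hsd.trans_le (min_le_right _ _)
            rw [isClosed_connectedComponent.closure_eq] at hpcl2
            have heq : connectedComponent s1 = connectedComponent x :=
              (connectedComponent_eq hpcl2).trans (connectedComponent_eq hpK).symm
            exact hs1K (heq ▸ mem_connectedComponent)
          obtain ⟨s2, hs2Z, _, hs2gt, hs2d, hs2c⟩ := hsecond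
          have hne : s1 ≠ s2 := fun h => hs2c (h ▸ mem_connectedComponent)
          rcases lt_or_gt_of_ne hne with h | h
          · exact ⟨s1, s2, hs1Z, hs1gt, hs1d, hs2gt, hs2d, h, hs2c⟩
          · refine ⟨s2, s1, hs2Z, hs2gt, hs2d, hs1gt, hs1d, h, ?_⟩
            intro hmem
            have : s2 ∈ connectedComponent s1 := by
              rw [← connectedComponent_eq hmem]
              exact mem_connectedComponent
            exact hs2c this
        have hdP : EMetric.diam P ≤ ENNReal.ofReal ε :=
          diam_le_upper hconv (fun t ht => (hPa t ht).le) (fun t ht => (hgP t ht).le)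
        have hKfin : EMetric.diam (connectedComponent x) ≠ ⊤ := by
          intro h
          have hle := (EMetric.diam_mono hKP).trans hdP
          rw [show Metric.ediam (connectedComponent x) = ⊤ from h, top_le_iff] at hle
          exact ENNReal.ofReal_ne_top hle
        set dK : ℝ := (EMetric.diam (connectedComponent x)).toReal with hdKdef
        have hdK0 : 0 ≤ dK := ENNReal.toReal_nonneg
        set δ : ℝ := if EMetric.diam (connectedComponent x) < ENNReal.ofReal ε
          then (ε - dK) / 2 else ε / 2 with hδdef
        have hδpos : 0 < δ ∧ δ ≤ ε / 2 := by
          rw [hδdef]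
          split_ifs with h
          · have : dK < ε := ENNReal.toReal_lt_of_lt_ofReal h
            constructor <;> linarith
          · exact ⟨by linarith, le_rfl⟩
        obtain ⟨s1, s2, hs1Z, hs1gt, hs1d, hs2gt, hs2d, hs12, hs2c⟩ := hpair δ hδpos.1
        obtain ⟨V, hVcl, hVdown, hs1V, hVsub⟩ := cut_lemma hIio hIoi hbase hs12 hs2c
        have hYcl : IsClopen (P ∩ V) := hP.inter hVcl
        have hKY : connectedComponent x ⊆ P ∩ V :=
          fun k hk => ⟨hKP hk, hVdown k s1 (hs1gt k hk).le hs1V⟩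
        have hYlt : ∀ t ∈ P ∩ V, t < s2 := fun t ht => hVsub ht.2
        have hYgt : ∀ t ∈ P ∩ V, t ∉ connectedComponent x → p < t :=
          fun t ht htK => hKnb t ht.1 htK p hpK
        have hYinf : {K' : Set X | ∃ y ∈ P ∩ V, K' = connectedComponent y}.Infinite := by
          by_contra h
          rw [Set.not_infinite] at h
          exact hKopen (comp_open_of_finite hYcl h (hKY mem_connectedComponent))
        have hdistK : ∀ t ∈ connectedComponent x, ∀ s ∈ connectedComponent x,
            dist t s ≤ dK := by
          intro t ht s hs
          rw [dist_edist]
          exact ENNReal.toReal_mono hKfin (EMetric.edist_le_diam_of_mem ht hs)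
        have hpairbound : ∀ t ∈ P ∩ V, ∀ s ∈ P ∩ V, t ≤ s → dist t s ≤ dK + δ := by
          intro t ht s hs hts
          by_cases htK : t ∈ connectedComponent x <;> by_cases hsK : s ∈ connectedComponent x
          · linarith [hdistK t htK s hsK, hδpos.1]
          · have h1 : dist t s ≤ dist t s2 := hconv t t s s2 le_rfl hts (hYlt s hs).le
            have h2 : dist t s2 ≤ dist t p + dist p s2 := dist_triangle t p s2
            have h3 : dist t p ≤ dK := hdistK t htK p hpK
            have h4 : dist p s2 ≤ δ := by rw [dist_comm]; exact hs2d.le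
            linarith
          · exact absurd (hYgt t ht htK) (not_lt.mpr (hts.trans (hpmax s hsK)))
          · have h1 : dist t s ≤ dist p s2 :=
              hconv p t s s2 (hYgt t ht htK).le hts (hYlt s hs).le
            have h2 : dist p s2 ≤ δ := by rw [dist_comm]; exact hs2d.le
            linarith
        have hYmem : P ∩ V ∈ DXeps X ε := by
          refine ⟨⟨hYcl, Or.inr hYinf⟩, ?_⟩
          by_cases hdKlt : EMetric.diam (connectedComponent x) < ENNReal.ofReal ε
          · left
            refine lt_of_le_of_lt (diam_le_pairs hpairbound) ?_
            have h1 : dK < ε := ENNReal.toReal_lt_of_lt_ofReal hdKlt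
            have h2 : δ = (ε - dK) / 2 := by rw [hδdef, if_pos hdKlt]
            exact (ENNReal.ofReal_lt_ofReal_iff hε).mpr (by rw [h2]; linarith)
          · right
            have hδhalf : δ = ε / 2 := by rw [hδdef, if_neg hdKlt]
            refine ⟨connectedComponent x, ⟨⟨x, hKY mem_connectedComponent,
              (connCompIn_of_comp_subset hKY).symm⟩, not_lt.mp hdKlt⟩, ?_⟩
            have hell : ell (connectedComponent x) = 0 := by
              have hem : closure (leftOf (connectedComponent x)) ∩ connectedComponent x = ∅ := by
                apply Set.eq_empty_of_subset_empty
                rintro q ⟨hqcl, hqK⟩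
                rw [mem_closure_iff] at hqcl
                obtain ⟨w, hwZ, hwL⟩ := hqcl Z hZ.2 (hPZ (hKP hqK))
                have hwK : w ∉ connectedComponent x := fun h => lt_irrefl w (hwL w h)
                exact hside w hwZ hwK hwL
              rw [ell, hem, Set.ncard_empty]
            have hrr : rr (connectedComponent x) ≠ 0 := by
              have hset : connectedComponent x ∩ closure (rightOf (connectedComponent x))
                  = {p} := by
                apply subset_antisymm
                · rintro q ⟨hqK, hqcl⟩
                  rcases lt_or_eq_of_le (hpmax q hqK) with hlt | heq
                  · exfalso
                    rw [mem_closure_iff] at hqcl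
                    obtain ⟨w, hwlt, hwR⟩ := hqcl (Set.Iio p) (hIio p) hlt
                    exact absurd (hwR p hpK) (not_lt.mpr (le_of_lt hwlt))
                  · exact heq ▸ rfl
                · rintro q hq
                  rw [Set.mem_singleton_iff] at hq
                  subst hq
                  refine ⟨hpK, ?_⟩
                  rw [mem_closure_iff]
                  intro O hO hpO
                  obtain ⟨s, ⟨hsZ, hsK⟩, hsO⟩ := hpcl O hO hpO
                  exact ⟨s, hsO, habove s hsZ hsK⟩
              rw [rr, hset, Set.ncard_singleton]
              exact one_ne_zero
            have hDelta : Delta (connectedComponent x) ε =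
                ballAround (connectedComponent x) (ε / 2) ∩
                  (leftOf (connectedComponent x))ᶜ := by
              rw [Delta, if_neg (by tauto), if_neg (by tauto), if_pos ⟨hell, hrr⟩]
            rw [hDelta]
            intro t ht
            by_cases htK : t ∈ connectedComponent x
            · exact ⟨⟨t, htK, by simpa using half_pos hε⟩,
                fun h => lt_irrefl t (h t htK)⟩
            · constructor
              · refine ⟨p, hpK, ?_⟩
                have h1 : dist p t ≤ dist p s2 :=
                  hconv p p t s2 le_rfl (hYgt t ht htK).le (hYlt t ht).le
                have h2 : dist p s2 < ε / 2 := by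
                  rw [dist_comm, ← hδhalf]; exact hs2d
                rw [dist_comm]
                exact lt_of_le_of_lt h1 h2
              · intro h
                exact absurd (h x mem_connectedComponent)
                  (not_lt.mpr (le_of_lt (hKnb t ht.1 htK x mem_connectedComponent)))
        have hrestcl : IsClopen (P \ V) := hP.diff hVcl
        have hrestanch : ∀ t ∈ P \ V, s1 < t := by
          rintro t ⟨htP, htV⟩
          by_contra h
          push_neg at h
          exact htV (hVdown t s1 h hs1V)
        have hrestd : EMetric.diam (P \ V) < ENNReal.ofReal ε := by
          by_cases hne : (P \ V).Nonempty
          · obtain ⟨t0, ht0⟩ := hne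
            have hs1a : s1 < a := (hrestanch t0 ht0).trans (hPa t0 ht0.1)
            refine lt_of_le_of_lt (diam_le_anchor hconv (z := s1) (a := a) ?_ ?_ le_rfl) ?_
            · exact fun t ht => (hrestanch t ht).le
            · exact fun t ht => (hPa t ht.1).le
            · exact (ENNReal.ofReal_lt_ofReal_iff hε).mpr (hdist s1 hs1Z hs1a)
          · rw [Set.not_nonempty_iff_eq_empty] at hne
            rw [hne]
            exact lt_of_eq_of_lt Metric.ediam_empty (ENNReal.ofReal_pos.mpr hε)
        obtain ⟨hr1, hr2, hr3⟩ := refineP_spec hε hrestcl hrestd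
        refine ⟨insert (P ∩ V) (refineP (P \ V)), ?_, ?_, ?_⟩
        · rintro v (rfl | hv)
          · exact ⟨hYmem, ⟨x, hKY mem_connectedComponent⟩, Set.inter_subset_left⟩
          · obtain ⟨h1, h2, h3⟩ := hr1 v hv
            exact ⟨h1, h2, h3.trans Set.diff_subset⟩
        · rw [Set.sUnion_insert, hr2]
          exact Set.inter_union_diff P V
        · rintro u hu v hv hne
          rcases hu with rfl | hu <;> rcases hv with rfl | hv
          · exact absurd rfl hne
          · apply Set.eq_empty_of_subset_empty
            rintro t ⟨h1, h2⟩
            exact (((hr1 v hv).2.2 h2).2 h1.2).elim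
          · apply Set.eq_empty_of_subset_empty
            rintro t ⟨h1, h2⟩
            exact (((hr1 u hu).2.2 h1).2 h2.2).elim
          · exact hr3 u hu v hv hne
    · -- no bottom component : infinite descending chain
      push_neg at hB1
      have hstep : ∀ (j : ℕ) (x : X), x ∈ P → ∃ y, ∃ V : Set X,
          (y ∈ P ∧ y < x ∧ ε - 1 / ((j : ℝ) + 1) < dist y a) ∧
          IsClopen V ∧ (∀ s t : X, s ≤ t → t ∈ V → s ∈ V) ∧ y ∈ V ∧ V ⊆ Set.Iio x := by
        intro j x hx
        obtain ⟨t, htP, htlt⟩ := hB1 x hx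
        have htlt' : ∀ k ∈ connectedComponent x, t < k := htlt
        have hrlt : max (dist t a) (ε - 1 / ((j : ℝ) + 1)) < ε := by
          apply max_lt (hgP t htP)
          have h0 : (0:ℝ) < 1 / ((j : ℝ) + 1) := by positivity
          linarith
        obtain ⟨y, hyP, hyd⟩ := hF1 _ hrlt
        have h1 : dist t a < dist y a := lt_of_le_of_lt (le_max_left _ _) hyd
        have h2 : ε - 1 / ((j : ℝ) + 1) < dist y a := lt_of_le_of_lt (le_max_right _ _) hyd
        have hyt : y < t := by
          by_contra h
          push_neg at h
          exact absurd (dist_anti hconv h (hPa y hyP).le) (not_le.mpr h1)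
        have hyx : y < x := hyt.trans (htlt' x mem_connectedComponent)
        have hxcomp : x ∉ connectedComponent y := by
          intro h
          have hyx' : y ∈ connectedComponent x := by
            rw [← connectedComponent_eq h]
            exact mem_connectedComponent
          exact lt_irrefl y (hyt.trans (htlt' y hyx'))
        obtain ⟨V, h1V, h2V, h3V, h4V⟩ := cut_lemma hIio hIoi hbase hyx hxcomp
        exact ⟨y, V, ⟨hyP, hyx, h2⟩, h1V, h2V, h3V, h4V⟩
      obtain ⟨y0, hy0⟩ := hPne
      let next : ℕ → {q : X // q ∈ P} → {q : X // q ∈ P} × Set X := fun j q =>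
        ⟨⟨(hstep j q.1 q.2).choose, (hstep j q.1 q.2).choose_spec.choose_spec.1.1⟩,
          (hstep j q.1 q.2).choose_spec.choose⟩
      let F : ℕ → {q : X // q ∈ P} := fun j => Nat.rec ⟨y0, hy0⟩ (fun i ih => (next i ih).1) j
      let y : ℕ → X := fun j => (F j).1
      let V : ℕ → Set X := fun j => (next j (F j)).2
      have hyP' : ∀ j, y j ∈ P := fun j => (F j).2
      have hspec : ∀ j : ℕ, (y (j+1) ∈ P ∧ y (j+1) < y j ∧
          ε - 1 / ((j : ℝ) + 1) < dist (y (j+1)) a) ∧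
          IsClopen (V j) ∧ (∀ s t : X, s ≤ t → t ∈ V j → s ∈ V j) ∧ y (j+1) ∈ V j ∧
          V j ⊆ Set.Iio (y j) :=
        fun j => (hstep j (y j) (hyP' j)).choose_spec.choose_spec
      let N : ℕ → Set X := fun j => Nat.rec Set.univ (fun i ih => ih ∩ V i) j
      have hNcl : ∀ j, IsClopen (N j) := by
        intro j
        induction j with
        | zero => exact isClopen_univ
        | succ i ih => exact ih.inter (hspec i).2.1
      have hNmem : ∀ j t, (∀ i, i < j → t ∈ V i) → t ∈ N j := by
        intro j
        induction j with
        | zero => intro t _; trivial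
        | succ i ih =>
          intro t h
          exact ⟨ih t (fun k hk => h k (Nat.lt_succ_of_lt hk)), h i (Nat.lt_succ_self i)⟩
      have hNsub : ∀ j i, i < j → N j ⊆ V i := by
        intro j
        induction j with
        | zero => intro i hi; exact absurd hi (Nat.not_lt_zero i)
        | succ k ih =>
          intro i hi
          rcases Nat.lt_succ_iff_lt_or_eq.mp hi with h | rfl
          · exact fun t ht => ih i h ht.1
          · exact fun t ht => ht.2
      let Q : ℕ → Set X := fun j => (P ∩ N j) \ V j
      have hQcl : ∀ j, IsClopen (Q j) := fun j => (hP.inter (hNcl j)).diff (hspec j).2.1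
      have hQanch : ∀ j, ∀ t ∈ Q j, y (j+1) < t := by
        intro j t ht
        by_contra h
        push_neg at h
        exact ht.2 ((hspec j).2.2.1 t (y (j+1)) h (hspec j).2.2.2.1)
      have hQd : ∀ j, EMetric.diam (Q j) < ENNReal.ofReal ε := by
        intro j
        refine lt_of_le_of_lt (diam_le_anchor hconv (z := y (j+1)) (a := a) ?_ ?_ le_rfl) ?_
        · exact fun t ht => (hQanch j t ht).le
        · exact fun t ht => (hPa t ht.1.1).le
        · exact (ENNReal.ofReal_lt_ofReal_iff hε).mpr (hgP _ (hyP' (j+1)))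
      have hQdisj : ∀ i j, i < j → Q i ∩ Q j = ∅ := by
        intro i j hij
        apply Set.eq_empty_of_subset_empty
        rintro t ⟨hti, htj⟩
        exact (hti.2 (hNsub j i hij htj.1.2)).elim
      have hQunion : (⋃ j, Q j) = P := by
        apply subset_antisymm
        · exact Set.iUnion_subset fun j t ht => ht.1.1
        · intro t htP
          have hex : ∃ j, t ∉ V j := by
            by_contra h
            push_neg at h
            obtain ⟨n, hn⟩ := exists_nat_one_div_lt (sub_pos.mpr (hgP t htP))
            have h1 : t < y (n+1) := (hspec (n+1)).2.2.2.2 (h (n+1))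
            have h2 : dist (y (n+1)) a ≤ dist t a :=
              dist_anti hconv h1.le (hPa (y (n+1)) (hyP' (n+1))).le
            have h3 : ε - 1 / ((n : ℝ) + 1) < dist t a := lt_of_lt_of_le (hspec n).1.2.2 h2
            linarith
          refine Set.mem_iUnion.mpr ⟨Nat.find hex, ⟨⟨htP, hNmem (Nat.find hex) t ?_⟩,
            Nat.find_spec hex⟩⟩
          intro i hi
          by_contra h
          exact Nat.find_min hex hi h
      refine ⟨{v | ∃ j, v ∈ refineP (Q j)}, ?_, ?_, ?_⟩
      · rintro v ⟨j, hv⟩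
        obtain ⟨h1, h2, h3⟩ := (refineP_spec hε (hQcl j) (hQd j)).1 v hv
        exact ⟨h1, h2, h3.trans (fun t ht => ht.1.1)⟩
      · apply subset_antisymm
        · rintro t ⟨v, ⟨j, hv⟩, htv⟩
          exact (((refineP_spec hε (hQcl j) (hQd j)).1 v hv).2.2 htv).1.1
        · intro t ht
          rw [← hQunion] at ht
          obtain ⟨j, htj⟩ := Set.mem_iUnion.mp ht
          have hu := (refineP_spec hε (hQcl j) (hQd j)).2.1
          rw [← hu] at htj
          obtain ⟨v, hv, htv⟩ := htj
          exact ⟨v, ⟨j, hv⟩, htv⟩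
      · rintro u ⟨i, hu⟩ v ⟨j, hv⟩ hne
        rcases Nat.lt_trichotomy i j with h | rfl | h
        · apply Set.eq_empty_of_subset_empty
          rintro t ⟨h1, h2⟩
          exact (hQdisj i j h) ▸
            (⟨((refineP_spec hε (hQcl i) (hQd i)).1 u hu).2.2 h1,
              ((refineP_spec hε (hQcl j) (hQd j)).1 v hv).2.2 h2⟩ : t ∈ Q i ∩ Q j)
        · exact (refineP_spec hε (hQcl i) (hQd i)).2.2 u hu v hv hne
        · apply Set.eq_empty_of_subset_empty
          rintro t ⟨h1, h2⟩
          exact (hQdisj j i h) ▸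
            (⟨((refineP_spec hε (hQcl j) (hQd j)).1 v hv).2.2 h2,
              ((refineP_spec hε (hQcl i) (hQd i)).1 u hu).2.2 h1⟩ : t ∈ Q j ∩ Q i)

private lemma left_lemma
    (hconv : ∀ x a b y : X, x ≤ a → a ≤ b → b ≤ y → dist a b ≤ dist x y)
    (hIio : ∀ a : X, IsOpen (Set.Iio a)) (hIoi : ∀ a : X, IsOpen (Set.Ioi a))
    (hbase : ∀ (x : X) (U : Set X), IsOpen U → x ∈ U →
      ∃ V : Set X, IsOpen V ∧ x ∈ V ∧ V ⊆ U ∧ V.OrdConnected)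
    {ε : ℝ} (hε : 0 < ε) {Z : Set X} (hZ : IsClopen Z) {a : X} (haZ : a ∈ Z)
    (hacc : a ∈ closure (Set.Iio a))
    (hsep : ∀ t ∈ Z, t < a → t ∉ connectedComponent a)
    (hdist : ∀ t ∈ Z, t < a → dist t a < ε) :
    ∃ (W : Set X) (𝒱 : Set (Set X)),
      IsClopen W ∧ (∀ s t : X, s ≤ t → t ∈ W → s ∈ W) ∧ W ⊆ Set.Iio a ∧
      (∀ t ∈ Z, t < a → t ∉ W → dist t a < ε / 2) ∧
      (∀ v ∈ 𝒱, v ∈ DXeps X ε ∧ v.Nonempty ∧ v ⊆ Z ∩ W) ∧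
      ⋃₀ 𝒱 = Z ∩ W ∧ (∀ u ∈ 𝒱, ∀ v ∈ 𝒱, u ≠ v → u ∩ v = ∅) ∧
      6 ≤ 𝒱.encard := by
  classical
  have hstep : ∀ W : Set X, IsClopen W → (∀ s t : X, s ≤ t → t ∈ W → s ∈ W) →
      W ⊆ Set.Iio a → ∃ x W', (x ∈ Z ∧ x < a ∧ x ∉ W ∧ dist x a < ε / 2) ∧
        (IsClopen W' ∧ (∀ s t : X, s ≤ t → t ∈ W' → s ∈ W') ∧ W' ⊆ Set.Iio a ∧
        W ⊆ W' ∧ x ∈ W') := by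
    intro W hWc hWd hWa
    have haW : a ∉ W := fun h => lt_irrefl a (hWa h)
    have hopen : IsOpen ((Z \ W) ∩ Metric.ball a (ε / 2)) :=
      ((hZ.diff hWc).2).inter Metric.isOpen_ball
    have hamem : a ∈ (Z \ W) ∩ Metric.ball a (ε / 2) :=
      ⟨⟨haZ, haW⟩, Metric.mem_ball_self (half_pos hε)⟩
    obtain ⟨x, hxO, hxlt⟩ := mem_closure_iff.mp hacc _ hopen hamem
    have hxZ : x ∈ Z := hxO.1.1
    have hxW : x ∉ W := hxO.1.2
    have hxd : dist x a < ε / 2 := by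
      have := hxO.2
      rwa [Metric.mem_ball] at this
    have hxa : x < a := hxlt
    have hcomp : a ∉ connectedComponent x := by
      intro h
      have : x ∈ connectedComponent a := by
        rw [← connectedComponent_eq h]
        exact mem_connectedComponent
      exact hsep x hxZ hxa this
    obtain ⟨V, hVc, hVd, hxV, hVsub⟩ := cut_lemma hIio hIoi hbase hxa hcomp
    refine ⟨x, W ∪ V, ⟨hxZ, hxa, hxW, hxd⟩, hWc.union hVc, ?_, ?_,
      Set.subset_union_left, Or.inr hxV⟩
    · rintro s t hst (h | h)
      · exact Or.inl (hWd s t hst h)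
      · exact Or.inr (hVd s t hst h)
    · rintro t (h | h)
      · exact hWa h
      · exact hVsub h
  have hstep' : ∀ q : {W : Set X // IsClopen W ∧ (∀ s t : X, s ≤ t → t ∈ W → s ∈ W) ∧
      W ⊆ Set.Iio a}, ∃ x : X,
      ∃ q' : {W : Set X // IsClopen W ∧ (∀ s t : X, s ≤ t → t ∈ W → s ∈ W) ∧
        W ⊆ Set.Iio a},
      (x ∈ Z ∧ x < a ∧ x ∉ q.1 ∧ dist x a < ε / 2) ∧ q.1 ⊆ q'.1 ∧ x ∈ q'.1 := by
    intro q
    obtain ⟨x, W', h1, h2, h3, h4, h5⟩ := hstep q.1 q.2.1 q.2.2.1 q.2.2.2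
    exact ⟨x, ⟨W', h2, h3, h4⟩, h1, h5.1, h5.2⟩
  let nxt : {W : Set X // IsClopen W ∧ (∀ s t : X, s ≤ t → t ∈ W → s ∈ W) ∧
      W ⊆ Set.Iio a} → X × {W : Set X // IsClopen W ∧
      (∀ s t : X, s ≤ t → t ∈ W → s ∈ W) ∧ W ⊆ Set.Iio a} :=
    fun q => ⟨(hstep' q).choose, (hstep' q).choose_spec.choose⟩
  let G : ℕ → {W : Set X // IsClopen W ∧ (∀ s t : X, s ≤ t → t ∈ W → s ∈ W) ∧
      W ⊆ Set.Iio a} := fun n => Nat.rec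
    ⟨∅, isClopen_empty, fun s t _ h => absurd h (Set.notMem_empty t),
      fun t h => absurd h (Set.notMem_empty t)⟩ (fun _ ih => (nxt ih).2) n
  let W : ℕ → Set X := fun n => (G n).1
  let xx : ℕ → X := fun n => (nxt (G n)).1
  have hWc : ∀ n, IsClopen (W n) := fun n => (G n).2.1
  have hWd : ∀ n, ∀ s t : X, s ≤ t → t ∈ W n → s ∈ W n := fun n => (G n).2.2.1
  have hWa : ∀ n, W n ⊆ Set.Iio a := fun n => (G n).2.2.2
  have hsp : ∀ n, (xx n ∈ Z ∧ xx n < a ∧ xx n ∉ W n ∧ dist (xx n) a < ε / 2) ∧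
      W n ⊆ W (n + 1) ∧ xx n ∈ W (n + 1) :=
    fun n => (hstep' (G n)).choose_spec.choose_spec
  have hWmono : ∀ m n : ℕ, m ≤ n → W m ⊆ W n := by
    intro m n h
    induction n, h using Nat.le_induction with
    | base => exact subset_rfl
    | succ k _ ih => exact ih.trans (hsp k).2.1
  -- pieces
  let Pc : ℕ → Set X := fun m => Z ∩ (W (m + 2) \ W (m + 1))
  have hPcc : ∀ m, IsClopen (Pc m) := fun m => hZ.inter ((hWc (m + 2)).diff (hWc (m + 1)))
  have hPcanch : ∀ m, ∀ t ∈ Pc m, xx m < t := by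
    intro m t ht
    by_contra h
    push_neg at h
    exact ht.2.2 (hWd (m + 1) t (xx m) h (hsp m).2.2)
  have hPcd : ∀ m, EMetric.diam (Pc m) < ENNReal.ofReal ε := by
    intro m
    refine lt_of_le_of_lt (diam_le_anchor hconv (z := xx m) (a := a) ?_ ?_ le_rfl) ?_
    · exact fun t ht => (hPcanch m t ht).le
    · exact fun t ht => (hWa (m + 2) ht.2.1).le
    · exact (ENNReal.ofReal_lt_ofReal_iff hε).mpr ((hsp m).1.2.2.2.trans (by linarith))
  have hxxPc : ∀ m, xx (m + 1) ∈ Pc m :=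
    fun m => ⟨(hsp (m + 1)).1.1, (hsp (m + 1)).2.2, (hsp (m + 1)).1.2.2.1⟩
  have hPcsub : ∀ m, Pc m ⊆ Z ∩ W (m + 2) := fun m t ht => ⟨ht.1, ht.2.1⟩
  have hPcdisj : ∀ m m' : ℕ, m < m' → Pc m ∩ Pc m' = ∅ := by
    intro m m' h
    apply Set.eq_empty_of_subset_empty
    rintro t ⟨h1, h2⟩
    exact (h2.2.2 (hWmono (m + 2) (m' + 1) (by omega) h1.2.1)).elim
  -- bottom
  obtain ⟨𝒱b, hb1, hb2, hb3⟩ := bottom_lemma hconv hIio hIoi hbase hε hZ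
    (hZ.inter (hWc 1)) Set.inter_subset_left
    (fun t ht => hWa 1 ht.2)
    (fun s hs t ht hst => ⟨hs, hWd 1 s t hst ht.2⟩) hdist
  -- splitting of W (n+1)
  have hsplit : ∀ n : ℕ, ∀ t, t ∈ W (n + 1) → t ∈ W 1 ∨ ∃ m, m < n ∧ t ∈ W (m + 2) \ W (m + 1) := by
    intro n
    induction n with
    | zero => exact fun t ht => Or.inl ht
    | succ k ih =>
      intro t ht
      by_cases h : t ∈ W (k + 1)
      · rcases ih t h with h' | ⟨m, h1, h2⟩
        · exact Or.inl h'
        · exact Or.inr ⟨m, Nat.lt_succ_of_lt h1, h2⟩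
      · exact Or.inr ⟨k, Nat.lt_succ_self k, ht, h⟩
  refine ⟨W 7, 𝒱b ∪ {v | ∃ m, m < 6 ∧ v ∈ refineP (Pc m)}, hWc 7, hWd 7, hWa 7, ?_, ?_, ?_, ?_, ?_⟩
  · -- tail
    intro t htZ hta htW
    have hxx6 : xx 6 < t := by
      by_contra h
      push_neg at h
      exact htW (hWd 7 t (xx 6) h (hsp 6).2.2)
    exact lt_of_le_of_lt (dist_anti hconv hxx6.le hta.le) (hsp 6).1.2.2.2
  · -- membership
    rintro v (hv | ⟨m, hm, hv⟩)
    · obtain ⟨h1, h2, h3⟩ := hb1 v hv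
      exact ⟨h1, h2, h3.trans (fun t ht => ⟨ht.1, hWmono 1 7 (by omega) ht.2⟩)⟩
    · obtain ⟨h1, h2, h3⟩ := (refineP_spec hε (hPcc m) (hPcd m)).1 v hv
      refine ⟨h1, h2, h3.trans ?_⟩
      intro t ht
      exact ⟨ht.1, hWmono (m + 2) 7 (by omega) ht.2.1⟩
  · -- union
    apply subset_antisymm
    · rintro t ⟨v, hv | ⟨m, hm, hv⟩, htv⟩
      · have := (hb1 v hv).2.2 htv
        exact ⟨this.1, hWmono 1 7 (by omega) this.2⟩
      · have := ((refineP_spec hε (hPcc m) (hPcd m)).1 v hv).2.2 htv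
        exact ⟨this.1, hWmono (m + 2) 7 (by omega) this.2.1⟩
    · rintro t ⟨htZ, htW⟩
      rcases hsplit 6 t htW with h | ⟨m, hm, h⟩
      · have : t ∈ ⋃₀ 𝒱b := by rw [hb2]; exact ⟨htZ, h⟩
        obtain ⟨v, hv, htv⟩ := this
        exact ⟨v, Or.inl hv, htv⟩
      · have : t ∈ ⋃₀ refineP (Pc m) := by
          rw [(refineP_spec hε (hPcc m) (hPcd m)).2.1]
          exact ⟨htZ, h⟩
        obtain ⟨v, hv, htv⟩ := this
        exact ⟨v, Or.inr ⟨m, hm, hv⟩, htv⟩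
  · -- pairwise disjoint
    have hbotsub : ∀ v ∈ 𝒱b, v ⊆ Z ∩ W 1 := fun v hv => (hb1 v hv).2.2
    have hchainsub : ∀ m, m < 6 → ∀ v ∈ refineP (Pc m), v ⊆ Pc m :=
      fun m hm v hv => ((refineP_spec hε (hPcc m) (hPcd m)).1 v hv).2.2
    have hbotchain : ∀ m, (Z ∩ W 1) ∩ Pc m = ∅ := by
      intro m
      apply Set.eq_empty_of_subset_empty
      rintro t ⟨h1, h2⟩
      exact (h2.2.2 (hWmono 1 (m + 1) (by omega) h1.2)).elim
    rintro u (hu | ⟨m, hm, hu⟩) v (hv | ⟨m', hm', hv⟩) hne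
    · exact hb3 u hu v hv hne
    · apply Set.eq_empty_of_subset_empty
      rintro t ⟨h1, h2⟩
      exact (hbotchain m') ▸ (⟨hbotsub u hu h1, hchainsub m' hm' v hv h2⟩ :
        t ∈ (Z ∩ W 1) ∩ Pc m')
    · apply Set.eq_empty_of_subset_empty
      rintro t ⟨h1, h2⟩
      exact (hbotchain m) ▸ (⟨hbotsub v hv h2, hchainsub m hm u hu h1⟩ :
        t ∈ (Z ∩ W 1) ∩ Pc m)
    · rcases Nat.lt_trichotomy m m' with h | rfl | h
      · apply Set.eq_empty_of_subset_empty
        rintro t ⟨h1, h2⟩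
        exact (hPcdisj m m' h) ▸ (⟨hchainsub m hm u hu h1, hchainsub m' hm' v hv h2⟩ :
          t ∈ Pc m ∩ Pc m')
      · exact (refineP_spec hε (hPcc m) (hPcd m)).2.2 u hu v hv hne
      · apply Set.eq_empty_of_subset_empty
        rintro t ⟨h1, h2⟩
        exact (hPcdisj m' m h) ▸ (⟨hchainsub m' hm' v hv h2, hchainsub m hm u hu h1⟩ :
          t ∈ Pc m' ∩ Pc m)
  · -- cardinality
    have hpick : ∀ i : Fin 6, ∃ v, v ∈ refineP (Pc i.1) ∧ xx (i.1 + 1) ∈ v := by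
      intro i
      have : xx (i.1 + 1) ∈ ⋃₀ refineP (Pc i.1) := by
        rw [(refineP_spec hε (hPcc i.1) (hPcd i.1)).2.1]
        exact hxxPc i.1
      obtain ⟨v, hv, htv⟩ := this
      exact ⟨v, hv, htv⟩
    let f : Fin 6 → Set X := fun i => (hpick i).choose
    have hfmem : ∀ i, f i ∈ refineP (Pc i.1) ∧ xx (i.1 + 1) ∈ f i :=
      fun i => (hpick i).choose_spec
    have hfsub : ∀ i, f i ⊆ Pc i.1 :=
      fun i => ((refineP_spec hε (hPcc i.1) (hPcd i.1)).1 _ (hfmem i).1).2.2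
    have hinj : Function.Injective f := by
      intro i j hij
      by_contra hne
      have hij' : i.1 ≠ j.1 := fun h => hne (Fin.ext h)
      have h1 : xx (j.1 + 1) ∈ Pc i.1 := hfsub i (hij ▸ (hfmem j).2)
      have h2 : xx (j.1 + 1) ∈ Pc j.1 := hfsub j (hfmem j).2
      rcases Nat.lt_or_ge i.1 j.1 with h | h
      · exact Set.eq_empty_iff_forall_notMem.mp (hPcdisj i.1 j.1 h) _ ⟨h1, h2⟩
      · have hlt : j.1 < i.1 := lt_of_le_of_ne h (Ne.symm hij')
        exact Set.eq_empty_iff_forall_notMem.mp (hPcdisj j.1 i.1 hlt) _ ⟨h2, h1⟩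
    have hrange : Set.range f ⊆ 𝒱b ∪ {v | ∃ m, m < 6 ∧ v ∈ refineP (Pc m)} := by
      rintro v ⟨i, rfl⟩
      exact Or.inr ⟨i.1, i.2, (hfmem i).1⟩
    have hcard : (Set.range f).encard = 6 := by
      rw [← Set.image_univ, Set.InjOn.encard_image hinj.injOn, Set.encard_univ]
      simp
    rw [← hcard]
    exact Set.encard_mono hrange

private lemma ell_dual (C : Set X) : ell (X := Xᵒᵈ) C = rr C := by
  show (closure (leftOf (X := Xᵒᵈ) C) ∩ C).ncard = (C ∩ closure (rightOf C)).ncard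
  rw [Set.inter_comm]; rfl

private lemma rr_dual (C : Set X) : rr (X := Xᵒᵈ) C = ell C := by
  show (C ∩ closure (rightOf (X := Xᵒᵈ) C)).ncard = (closure (leftOf C) ∩ C).ncard
  rw [Set.inter_comm]; rfl

private lemma Delta_dual (C : Set X) (ε : ℝ) :
    Delta (X := Xᵒᵈ) C ε = Delta C ε := by
  have hb : ballAround (X := Xᵒᵈ) C (ε / 2) = ballAround C (ε / 2) := rfl
  have hl : leftOf (X := Xᵒᵈ) C = rightOf C := rfl
  have hr : rightOf (X := Xᵒᵈ) C = leftOf C := rfl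
  by_cases h1 : ell C = 0 <;> by_cases h2 : rr C = 0 <;>
    simp [Delta, ell_dual, rr_dual, hb, hl, hr, h1, h2] <;> rfl

private lemma DXeps_dual (ε : ℝ) (u : Set Xᵒᵈ) (h : u ∈ DXeps Xᵒᵈ ε) :
    u ∈ DXeps X ε := by
  obtain ⟨h1, h2 | ⟨C, hC, hsub⟩⟩ := h
  · exact ⟨h1, Or.inl h2⟩
  · refine ⟨h1, Or.inr ⟨C, hC, ?_⟩⟩
    rwa [Delta_dual (X := X) C ε] at hsub

private lemma right_lemma
    (hconv : ∀ x a b y : X, x ≤ a → a ≤ b → b ≤ y → dist a b ≤ dist x y)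
    (hIio : ∀ a : X, IsOpen (Set.Iio a)) (hIoi : ∀ a : X, IsOpen (Set.Ioi a))
    (hbase : ∀ (x : X) (U : Set X), IsOpen U → x ∈ U →
      ∃ V : Set X, IsOpen V ∧ x ∈ V ∧ V ⊆ U ∧ V.OrdConnected)
    {ε : ℝ} (hε : 0 < ε) {Z : Set X} (hZ : IsClopen Z) {b : X} (hbZ : b ∈ Z)
    (hacc : b ∈ closure (Set.Ioi b))
    (hsep : ∀ t ∈ Z, b < t → t ∉ connectedComponent b)
    (hdist : ∀ t ∈ Z, b < t → dist t b < ε) :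
    ∃ (W : Set X) (𝒱 : Set (Set X)),
      IsClopen W ∧ (∀ s t : X, t ≤ s → t ∈ W → s ∈ W) ∧ W ⊆ Set.Ioi b ∧
      (∀ t ∈ Z, b < t → t ∉ W → dist t b < ε / 2) ∧
      (∀ v ∈ 𝒱, v ∈ DXeps X ε ∧ v.Nonempty ∧ v ⊆ Z ∩ W) ∧
      ⋃₀ 𝒱 = Z ∩ W ∧ (∀ u ∈ 𝒱, ∀ v ∈ 𝒱, u ≠ v → u ∩ v = ∅) ∧
      6 ≤ 𝒱.encard := by
  have hconv' : ∀ x a b' y : Xᵒᵈ, x ≤ a → a ≤ b' → b' ≤ y → dist a b' ≤ dist x y := by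
    intro x a b' y hxa hab hby
    rw [dist_comm a b', dist_comm x y]
    exact hconv y b' a x hby hab hxa
  have hbase' : ∀ (x : Xᵒᵈ) (U : Set Xᵒᵈ), IsOpen U → x ∈ U →
      ∃ V : Set Xᵒᵈ, IsOpen V ∧ x ∈ V ∧ V ⊆ U ∧ V.OrdConnected := by
    intro x U hU hx
    obtain ⟨V, hV1, hV2, hV3, hV4⟩ := hbase (OrderDual.ofDual x) U hU hx
    exact ⟨V, hV1, hV2, hV3, hV4.dual⟩
  obtain ⟨W, 𝒱, h1, h2, h3, h4, h5, h6, h7, h8⟩ := left_lemma (X := Xᵒᵈ)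
    hconv' (fun c => hIoi (OrderDual.ofDual c)) (fun c => hIio (OrderDual.ofDual c))
    hbase' hε hZ hbZ hacc hsep hdist
  exact ⟨W, 𝒱, h1, h2, h3, h4,
    fun v hv => ⟨DXeps_dual ε v (h5 v hv).1, (h5 v hv).2.1, (h5 v hv).2.2⟩,
    h6, h7, h8⟩

end Helpers


/-- Lemma 4.5: in a metrizable suborderable space `(X, ≤)` with compatible
convex metric and infinitely many connected components, let `ε > 0`,
`Z ∈ D[X, 2ε]` and let `C` be a connected component of `Z` with
`diam C ≥ 2ε`. Then `Z` has a partition `𝒰 ⊆ D[X, ε]`, discrete in `X`, with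
`|𝒰| ≠ 2`, such that (i) every `U ∈ 𝒰` disjoint from `C` satisfies `U < C` or
`C < U`; (ii) at least `6ℓ(C)` members of `𝒰` lie below `C` and at least
`6r(C)` members lie above `C`; and every `U ∈ 𝒰` disjoint from `C` has
diameter at most `2ε`. -/
theorem stmt15 {X : Type*} [MetricSpace X] [LinearOrder X]
    (hconv : ∀ x a b y : X, x ≤ a → a ≤ b → b ≤ y → dist a b ≤ dist x y)
    (hIio : ∀ a : X, IsOpen (Set.Iio a)) (hIoi : ∀ a : X, IsOpen (Set.Ioi a))
    (hbase : ∀ (x : X) (U : Set X), IsOpen U → x ∈ U →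
      ∃ V : Set X, IsOpen V ∧ x ∈ V ∧ V ⊆ U ∧ V.OrdConnected)
    (hinf : (Set.range fun x : X => connectedComponent x).Infinite)
    (ε : ℝ) (hε : 0 < ε) (Z : Set X) (hZ : Z ∈ DXeps X (2 * ε))
    (C : Set X) (x₀ : X) (hx₀ : x₀ ∈ Z) (hC : C = connectedComponentIn Z x₀)
    (hdiam : ENNReal.ofReal (2 * ε) ≤ EMetric.diam C) :
    ∃ 𝒰 : Set (Set X),
      (∀ u ∈ 𝒰, u ∈ DXeps X ε) ∧ ⋃₀ 𝒰 = Z ∧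
      (∀ u ∈ 𝒰, ∀ v ∈ 𝒰, u ≠ v → u ∩ v = ∅) ∧
      (∀ x : X, ∃ N ∈ nhds x, {u | u ∈ 𝒰 ∧ (u ∩ N).Nonempty}.Subsingleton) ∧
      𝒰.encard ≠ 2 ∧
      (∀ u ∈ 𝒰, u ∩ C = ∅ → setBelow u C ∨ setBelow C u) ∧
      (6 * (ell C : ℕ∞) ≤ {u | u ∈ 𝒰 ∧ setBelow u C}.encard) ∧
      (6 * (rr C : ℕ∞) ≤ {u | u ∈ 𝒰 ∧ setBelow C u}.encard) ∧
      (∀ u ∈ 𝒰, u ∩ C = ∅ → EMetric.diam u ≤ ENNReal.ofReal (2 * ε)) := by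
    classical
  obtain ⟨hZDD, hZdiam⟩ := hZ
  have hZc : IsClopen Z := hZDD.1
  have hCcomp : C = connectedComponent x₀ := by
    rw [hC]; exact connCompIn_clopen hZc hx₀
  have hx₀C : x₀ ∈ C := hCcomp ▸ mem_connectedComponent
  have hCZ : C ⊆ Z := hCcomp ▸ connComp_subset_clopen hZc hx₀
  have hCpre : IsPreconnected C := hCcomp ▸ isPreconnected_connectedComponent
  have hεε : ENNReal.ofReal ε ≤ EMetric.diam C :=
    (ENNReal.ofReal_le_ofReal (by linarith)).trans hdiam
  -- Z ⊆ Delta C (2ε)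
  have hsub : Z ⊆ Delta C (2 * ε) := by
    rcases hZdiam with hd | ⟨C', ⟨⟨x', hx'Z, hC'⟩, hC'diam⟩, hsub'⟩
    · exact absurd (hdiam.trans (EMetric.diam_mono hCZ)) (not_le.mpr hd)
    · have hC'comp : C' = connectedComponent x' := by
        rw [hC']; exact connCompIn_clopen hZc hx'Z
      have hC'pre : IsPreconnected C' := hC'comp ▸ isPreconnected_connectedComponent
      have hCC' : C = C' := by
        by_contra hne
        have hdisj : ∀ t, t ∈ C → t ∈ C' → False := by
          intro t h1 h2
          apply hne
          rw [hCcomp, hC'comp,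
            connectedComponent_eq (show t ∈ connectedComponent x₀ from hCcomp ▸ h1),
            connectedComponent_eq (show t ∈ connectedComponent x' from hC'comp ▸ h2)]
        have hCball : ∀ t ∈ C, ∃ c ∈ C', dist t c < ε := by
          intro t ht
          have h := hsub' (hCZ ht)
          rw [Delta] at h
          split_ifs at h with h1 h2 h3
          · exact absurd (hdisj t ht h) not_false
          · obtain ⟨c, hc, hd⟩ := h.1
            exact ⟨c, hc, by linarith⟩
          · obtain ⟨c, hc, hd⟩ := h.1
            exact ⟨c, hc, by linarith⟩
          · obtain ⟨c, hc, hd⟩ := h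
            exact ⟨c, hc, by linarith⟩
        have hside : (∀ t ∈ C, ∀ c ∈ C', t < c) ∨ (∀ t ∈ C, ∀ c ∈ C', c < t) := by
          by_contra h
          push_neg at h
          obtain ⟨⟨t1, ht1, c1, hc1, h1⟩, t2, ht2, c2, hc2, h2⟩ := h
          have ht2' : ∀ c ∈ C', t2 < c := by
            rcases preconn_side hIio hIoi hC'pre (fun h => hdisj t2 ht2 h) with h' | h'
            · exact h'
            · exact absurd (h' c2 hc2) (not_lt.mpr h2)
          have hc1C : c1 ∈ C :=
            preconn_mem_of_between hIio hIoi hCpre ht2 ht1 (ht2' c1 hc1).le h1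
          exact hdisj c1 hc1C hc1
        have hdC : EMetric.diam C ≤ ENNReal.ofReal ε := by
          rcases hside with hs | hs
          · apply diam_le_pairs
            intro t ht s hs' hts
            obtain ⟨c, hc, hd⟩ := hCball t ht
            exact (hconv t t s c le_rfl hts (hs s hs' c hc).le).trans hd.le
          · apply diam_le_pairs
            intro t ht s hs' hts
            obtain ⟨c, hc, hd⟩ := hCball s hs'
            rw [dist_comm s c] at hd
            exact (hconv c t s s (hs t ht c hc).le hts le_rfl).trans hd.le
        exact absurd ((ENNReal.ofReal_le_ofReal_iff (by linarith)).mp (hdiam.trans hdC))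
          (by linarith)
      rw [← hCC'] at hsub'
      exact hsub'
  have hCside : ∀ t ∈ Z, t ∉ C → (∀ c ∈ C, t < c) ∨ (∀ c ∈ C, c < t) :=
    fun t _ ht => preconn_side hIio hIoi hCpre ht
  by_cases hnot00 : ell C = 0 ∧ rr C = 0
  · -- trivial case : Z = C
    have hDeq : Delta C (2 * ε) = C := by rw [Delta, if_pos hnot00]
    have hZC : Z = C := subset_antisymm (hDeq ▸ hsub) hCZ
    have hDeq' : Delta C ε = C := by rw [Delta, if_pos hnot00]
    refine ⟨{Z}, ?_, by simp, ?_, ?_, by simp, ?_, ?_, ?_, ?_⟩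
    · intro u hu
      rw [Set.mem_singleton_iff] at hu
      subst hu
      refine ⟨hZDD, Or.inr ⟨C, ⟨⟨x₀, hx₀, hC⟩, hεε⟩, ?_⟩⟩
      rw [hDeq']
      exact hZC.le
    · intro u hu v hv hne
      rw [Set.mem_singleton_iff] at hu hv
      exact absurd (hu.trans hv.symm) hne
    · intro x
      refine ⟨Set.univ, Filter.univ_mem, ?_⟩
      rintro u ⟨hu, _⟩ v ⟨hv, _⟩
      rw [Set.mem_singleton_iff] at hu hv
      rw [hu, hv]
    · intro u hu heq
      rw [Set.mem_singleton_iff] at hu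
      subst hu
      exact absurd (Set.eq_empty_iff_forall_notMem.mp heq x₀ ⟨hx₀, hx₀C⟩) not_false
    · rw [hnot00.1]
      simp
    · rw [hnot00.2]
      simp
    · intro u hu heq
      rw [Set.mem_singleton_iff] at hu
      subst hu
      exact absurd (Set.eq_empty_iff_forall_notMem.mp heq x₀ ⟨hx₀, hx₀C⟩) not_false
  · -- main case
    have hZball : ∀ t ∈ Z, ∃ c ∈ C, dist t c < ε := by
      intro t ht
      have h := hsub ht
      rw [Delta] at h
      split_ifs at h with h1 h2
      · obtain ⟨c, hc, hd⟩ := h.1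
        exact ⟨c, hc, by linarith⟩
      · obtain ⟨c, hc, hd⟩ := h.1
        exact ⟨c, hc, by linarith⟩
      · obtain ⟨c, hc, hd⟩ := h
        exact ⟨c, hc, by linarith⟩
    -- left package
    obtain ⟨Wl, 𝒱l, hA1, hA2, hA3, hA4, hA5, hA6, hA7, hA8, hA9⟩ :
        ∃ (Wl : Set X) (𝒱l : Set (Set X)),
          IsClopen Wl ∧ Wl ⊆ leftOf C ∧
          (∀ v ∈ 𝒱l, v ∈ DXeps X ε ∧ v.Nonempty ∧ v ⊆ Z ∩ Wl) ∧
          ⋃₀ 𝒱l = Z ∩ Wl ∧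
          (∀ u ∈ 𝒱l, ∀ v ∈ 𝒱l, u ≠ v → u ∩ v = ∅) ∧
          (∀ t ∈ Z, t ∈ leftOf C → t ∉ Wl → ∃ c ∈ C, dist t c < ε / 2) ∧
          (ell C ≠ 0 → 6 ≤ 𝒱l.encard) ∧
          (ell C = 0 ∨ ell C = 1) ∧
          (ell C = 0 → ∀ t ∈ Z, t ∉ leftOf C) := by
      by_cases hell : ell C = 0
      · have hrr : rr C ≠ 0 := fun h => hnot00 ⟨hell, h⟩
        have hDeq : Delta C (2 * ε) = ballAround C (2 * ε / 2) ∩ (leftOf C)ᶜ := by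
          rw [Delta, if_neg (by tauto), if_neg (by tauto), if_pos ⟨hell, hrr⟩]
        have hno : ∀ t ∈ Z, t ∉ leftOf C := by
          intro t ht
          have := hsub ht
          rw [hDeq] at this
          exact this.2
        refine ⟨∅, ∅, isClopen_empty, by simp, by simp, by simp, by simp, ?_, ?_,
          Or.inl hell, fun _ => hno⟩
        · exact fun t htZ htL _ => absurd htL (hno t htZ)
        · exact fun h => absurd hell h
      · -- active left side
        obtain ⟨a, hacl, haC⟩ := Set.nonempty_of_ncard_ne_zero hell
        have hmin : ∀ q, q ∈ closure (leftOf C) → q ∈ C → ∀ c ∈ C, q ≤ c := by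
          intro q hqcl hqC c hc
          by_contra hlt
          push_neg at hlt
          obtain ⟨w, hw1, hw2⟩ := mem_closure_iff.mp hqcl (Set.Ioi c) (hIoi c) hlt
          exact absurd (hw2 c hc) (not_lt.mpr (le_of_lt hw1))
        have hamin : ∀ c ∈ C, a ≤ c := hmin a hacl haC
        have hleftIio : leftOf C = Set.Iio a := by
          apply subset_antisymm
          · exact fun t ht => ht a haC
          · exact fun t ht c hc => lt_of_lt_of_le ht (hamin c hc)
        have hellval : ell C = 1 := by
          have : closure (leftOf C) ∩ C = {a} := by
            apply subset_antisymm
            · rintro q ⟨hq1, hq2⟩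
              exact le_antisymm (hmin q hq1 hq2 a haC) (hamin q hq2)
            · rintro q hq
              rw [Set.mem_singleton_iff] at hq
              subst hq
              exact ⟨hacl, haC⟩
          rw [ell, this, Set.ncard_singleton]
        have hconnA : connectedComponent a = C := by
          have h1 : connectedComponent x₀ = connectedComponent a :=
            connectedComponent_eq (hCcomp ▸ haC)
          rw [← h1, ← hCcomp]
        have hsepl : ∀ t ∈ Z, t < a → t ∉ connectedComponent a := by
          intro t _ hta h
          rw [hconnA] at h
          exact absurd (hamin t h) (not_le.mpr hta)
        have hdistl : ∀ t ∈ Z, t < a → dist t a < ε := by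
          intro t ht hta
          obtain ⟨c, hc, hd⟩ := hZball t ht
          exact lt_of_le_of_lt (hconv t t a c le_rfl hta.le (hamin c hc)) hd
        obtain ⟨W, 𝒱, h1, h2, h3, h4, h5, h6, h7, h8⟩ := left_lemma hconv hIio hIoi hbase
          hε hZc (hCZ haC) (by rw [← hleftIio]; exact hacl) hsepl hdistl
        refine ⟨W, 𝒱, h1, ?_, h5, h6, h7, ?_, fun _ => h8, Or.inr hellval,
          fun h => absurd h hell⟩
        · rw [hleftIio]; exact h3
        · intro t htZ htL htW
          have htL' : t < a := by rw [hleftIio] at htL; exact htL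
          exact ⟨a, haC, h4 t htZ htL' htW⟩
    -- right package
    obtain ⟨Wr, 𝒱r, hB1, hB2, hB3, hB4, hB5, hB6, hB7, hB8, hB9⟩ :
        ∃ (Wr : Set X) (𝒱r : Set (Set X)),
          IsClopen Wr ∧ Wr ⊆ rightOf C ∧
          (∀ v ∈ 𝒱r, v ∈ DXeps X ε ∧ v.Nonempty ∧ v ⊆ Z ∩ Wr) ∧
          ⋃₀ 𝒱r = Z ∩ Wr ∧
          (∀ u ∈ 𝒱r, ∀ v ∈ 𝒱r, u ≠ v → u ∩ v = ∅) ∧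
          (∀ t ∈ Z, t ∈ rightOf C → t ∉ Wr → ∃ c ∈ C, dist t c < ε / 2) ∧
          (rr C ≠ 0 → 6 ≤ 𝒱r.encard) ∧
          (rr C = 0 ∨ rr C = 1) ∧
          (rr C = 0 → ∀ t ∈ Z, t ∉ rightOf C) := by
      by_cases hrr : rr C = 0
      · have hell : ell C ≠ 0 := fun h => hnot00 ⟨h, hrr⟩
        have hDeq : Delta C (2 * ε) = ballAround C (2 * ε / 2) ∩ (rightOf C)ᶜ := by
          rw [Delta, if_neg (by tauto), if_pos ⟨hell, hrr⟩]
        have hno : ∀ t ∈ Z, t ∉ rightOf C := by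
          intro t ht
          have := hsub ht
          rw [hDeq] at this
          exact this.2
        refine ⟨∅, ∅, isClopen_empty, by simp, by simp, by simp, by simp, ?_, ?_,
          Or.inl hrr, fun _ => hno⟩
        · exact fun t htZ htL _ => absurd htL (hno t htZ)
        · exact fun h => absurd hrr h
      · -- active right side
        obtain ⟨b, hbC, hbcl⟩ := Set.nonempty_of_ncard_ne_zero hrr
        have hmax : ∀ q, q ∈ C → q ∈ closure (rightOf C) → ∀ c ∈ C, c ≤ q := by
          intro q hqC hqcl c hc
          by_contra hlt
          push_neg at hlt
          obtain ⟨w, hw1, hw2⟩ := mem_closure_iff.mp hqcl (Set.Iio c) (hIio c) hlt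
          exact absurd (hw2 c hc) (not_lt.mpr (le_of_lt hw1))
        have hbmax : ∀ c ∈ C, c ≤ b := hmax b hbC hbcl
        have hrightIoi : rightOf C = Set.Ioi b := by
          apply subset_antisymm
          · exact fun t ht => ht b hbC
          · exact fun t ht c hc => lt_of_le_of_lt (hbmax c hc) ht
        have hrrval : rr C = 1 := by
          have : C ∩ closure (rightOf C) = {b} := by
            apply subset_antisymm
            · rintro q ⟨hq1, hq2⟩
              exact le_antisymm (hbmax q hq1) (hmax q hq1 hq2 b hbC)
            · rintro q hq
              rw [Set.mem_singleton_iff] at hq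
              subst hq
              exact ⟨hbC, hbcl⟩
          rw [rr, this, Set.ncard_singleton]
        have hconnB : connectedComponent b = C := by
          have h1 : connectedComponent x₀ = connectedComponent b :=
            connectedComponent_eq (hCcomp ▸ hbC)
          rw [← h1, ← hCcomp]
        have hsepr : ∀ t ∈ Z, b < t → t ∉ connectedComponent b := by
          intro t _ hbt h
          rw [hconnB] at h
          exact absurd (hbmax t h) (not_le.mpr hbt)
        have hdistr : ∀ t ∈ Z, b < t → dist t b < ε := by
          intro t ht hbt
          obtain ⟨c, hc, hd⟩ := hZball t ht
          rw [dist_comm t c] at hd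
          rw [dist_comm t b]
          exact lt_of_le_of_lt (hconv c b t t (hbmax c hc) hbt.le le_rfl) hd
        obtain ⟨W, 𝒱, h1, h2, h3, h4, h5, h6, h7, h8⟩ := right_lemma hconv hIio hIoi hbase
          hε hZc (hCZ hbC) (by rw [← hrightIoi]; exact hbcl) hsepr hdistr
        refine ⟨W, 𝒱, h1, ?_, h5, h6, h7, ?_, fun _ => h8, Or.inr hrrval,
          fun h => absurd h hrr⟩
        · rw [hrightIoi]; exact h3
        · intro t htZ htR htW
          have htR' : b < t := by rw [hrightIoi] at htR; exact htR
          exact ⟨b, hbC, h4 t htZ htR' htW⟩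
    -- assembly
    have hCWl : ∀ c ∈ C, c ∉ Wl := fun c hc h => lt_irrefl c (hA2 h c hc)
    have hCWr : ∀ c ∈ C, c ∉ Wr := fun c hc h => lt_irrefl c (hB2 h c hc)
    have hCV₀ : C ⊆ Z \ (Wl ∪ Wr) := by
      intro c hc
      exact ⟨hCZ hc, fun h => h.elim (hCWl c hc) (hCWr c hc)⟩
    have hV₀c : IsClopen (Z \ (Wl ∪ Wr)) := hZc.diff (hA1.union hB1)
    have hx₀V₀ : x₀ ∈ Z \ (Wl ∪ Wr) := hCV₀ hx₀C
    have hlmem : ∀ v ∈ 𝒱l, v ⊆ Z ∩ Wl := fun v hv => (hA3 v hv).2.2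
    have hrmem : ∀ v ∈ 𝒱r, v ⊆ Z ∩ Wr := fun v hv => (hB3 v hv).2.2
    have hlr : ∀ t, t ∈ Wl → t ∈ Wr → False := fun t h1 h2 =>
      lt_irrefl t ((hA2 h1 x₀ hx₀C).trans (hB2 h2 x₀ hx₀C))
    have hV₀mem : Z \ (Wl ∪ Wr) ∈ DXeps X ε := by
      constructor
      · refine ⟨hV₀c, Or.inr ?_⟩
        by_contra h
        rw [Set.not_infinite] at h
        have hCopen : IsOpen C := by
          rw [hCcomp]
          exact comp_open_of_finite hV₀c h hx₀V₀
        rcases (not_and_or.mp hnot00) with h' | h'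
        · obtain ⟨a, hacl, haC⟩ := Set.nonempty_of_ncard_ne_zero h'
          obtain ⟨w, hw1, hw2⟩ := mem_closure_iff.mp hacl C hCopen haC
          exact lt_irrefl w (hw2 w hw1)
        · obtain ⟨b, hbC, hbcl⟩ := Set.nonempty_of_ncard_ne_zero h'
          obtain ⟨w, hw1, hw2⟩ := mem_closure_iff.mp hbcl C hCopen hbC
          exact lt_irrefl w (hw2 w hw1)
      · refine Or.inr ⟨C, ⟨⟨x₀, hx₀V₀, ?_⟩, hεε⟩, ?_⟩
        · rw [hCcomp]
          exact (connCompIn_of_comp_subset (hCcomp ▸ hCV₀)).symm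
        · intro t ht
          by_cases htC : t ∈ C
          · exact subset_Delta_self hε htC
          · rcases hCside t ht.1 htC with hL | hR
            · have hball : ∃ c ∈ C, dist t c < ε / 2 :=
                hA6 t ht.1 hL (fun h => ht.2 (Or.inl h))
              rw [Delta]
              split_ifs with h1 h2
              · exact ⟨hball, fun hco => absurd (hco x₀ hx₀C)
                  (not_lt.mpr (hL x₀ hx₀C).le)⟩
              · exact absurd hL (hA9 h2.1 t ht.1)
              · exact hball
            · have hball : ∃ c ∈ C, dist t c < ε / 2 :=
                hB6 t ht.1 hR (fun h => ht.2 (Or.inr h))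
              rw [Delta]
              split_ifs with h1 h2
              · exact absurd hR (hB9 h1.2 t ht.1)
              · exact ⟨hball, fun hco => absurd (hco x₀ hx₀C)
                  (not_lt.mpr (hR x₀ hx₀C).le)⟩
              · exact hball
    set 𝒰 : Set (Set X) := insert (Z \ (Wl ∪ Wr)) (𝒱l ∪ 𝒱r) with h𝒰
    have hmemZ : ∀ u ∈ 𝒰, u ⊆ Z ∧ IsOpen u := by
      rintro u (rfl | hu | hu)
      · exact ⟨Set.diff_subset, hV₀c.2⟩
      · exact ⟨(hlmem u hu).trans Set.inter_subset_left, ((hA3 u hu).1.1.1).2⟩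
      · exact ⟨(hrmem u hu).trans Set.inter_subset_left, ((hB3 u hu).1.1.1).2⟩
    have hdisj𝒰 : ∀ u ∈ 𝒰, ∀ v ∈ 𝒰, u ≠ v → u ∩ v = ∅ := by
      have hVl : ∀ v ∈ 𝒱l, (Z \ (Wl ∪ Wr)) ∩ v = ∅ := by
        intro v hv
        apply Set.eq_empty_of_subset_empty
        rintro t ⟨h1, h2⟩
        exact (h1.2 (Or.inl (hlmem v hv h2).2)).elim
      have hVr : ∀ v ∈ 𝒱r, (Z \ (Wl ∪ Wr)) ∩ v = ∅ := by
        intro v hv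
        apply Set.eq_empty_of_subset_empty
        rintro t ⟨h1, h2⟩
        exact (h1.2 (Or.inr (hrmem v hv h2).2)).elim
      have hlrdisj : ∀ u ∈ 𝒱l, ∀ v ∈ 𝒱r, u ∩ v = ∅ := by
        intro u hu v hv
        apply Set.eq_empty_of_subset_empty
        rintro t ⟨h1, h2⟩
        exact (hlr t (hlmem u hu h1).2 (hrmem v hv h2).2).elim
      rintro u (rfl | hu | hu) v (rfl | hv | hv) hne
      · exact absurd rfl hne
      · exact hVl v hv
      · exact hVr v hv
      · rw [Set.inter_comm]; exact hVl u hu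
      · exact hA5 u hu v hv hne
      · exact hlrdisj u hu v hv
      · rw [Set.inter_comm]; exact hVr u hu
      · rw [Set.inter_comm]; exact hlrdisj v hv u hu
      · exact hB5 u hu v hv hne
    have hcover : ⋃₀ 𝒰 = Z := by
      rw [h𝒰, Set.sUnion_insert, Set.sUnion_union, hA4, hB4]
      apply subset_antisymm
      · rintro t (ht | ht | ht)
        · exact ht.1
        · exact ht.1
        · exact ht.1
      · intro t ht
        by_cases h1 : t ∈ Wl
        · exact Or.inr (Or.inl ⟨ht, h1⟩)
        · by_cases h2 : t ∈ Wr
          · exact Or.inr (Or.inr ⟨ht, h2⟩)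
          · exact Or.inl ⟨ht, fun h => h.elim h1 h2⟩
    have hsetBl : ∀ v ∈ 𝒱l, setBelow v C := by
      intro v hv t ht c hc
      exact hA2 (hlmem v hv ht).2 c hc
    have hsetBr : ∀ v ∈ 𝒱r, setBelow C v := by
      intro v hv c hc t ht
      exact hB2 (hrmem v hv ht).2 c hc
    have hV₀l : Z \ (Wl ∪ Wr) ∉ 𝒱l := fun h => hx₀V₀.2 (Or.inl (hlmem _ h hx₀V₀).2)
    have hV₀r : Z \ (Wl ∪ Wr) ∉ 𝒱r := fun h => hx₀V₀.2 (Or.inr (hrmem _ h hx₀V₀).2)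
    have hbig : (7 : ℕ∞) ≤ 𝒰.encard := by
      rcases not_and_or.mp hnot00 with h' | h'
      · have h6 := hA7 h'
        have hins : (insert (Z \ (Wl ∪ Wr)) 𝒱l).encard = 𝒱l.encard + 1 :=
          Set.encard_insert_of_notMem hV₀l
        have hsub𝒰 : insert (Z \ (Wl ∪ Wr)) 𝒱l ⊆ 𝒰 := by
          intro u hu
          rcases Set.mem_insert_iff.mp hu with rfl | hu
          · exact Set.mem_insert _ _
          · exact Set.mem_insert_of_mem _ (Or.inl hu)
        calc (7 : ℕ∞) = 6 + 1 := by norm_num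
          _ ≤ 𝒱l.encard + 1 := add_le_add_left h6 1
          _ = (insert (Z \ (Wl ∪ Wr)) 𝒱l).encard := hins.symm
          _ ≤ 𝒰.encard := Set.encard_mono hsub𝒰
      · have h6 := hB7 h'
        have hins : (insert (Z \ (Wl ∪ Wr)) 𝒱r).encard = 𝒱r.encard + 1 :=
          Set.encard_insert_of_notMem hV₀r
        have hsub𝒰 : insert (Z \ (Wl ∪ Wr)) 𝒱r ⊆ 𝒰 := by
          intro u hu
          rcases Set.mem_insert_iff.mp hu with rfl | hu
          · exact Set.mem_insert _ _
          · exact Set.mem_insert_of_mem _ (Or.inr hu)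
        calc (7 : ℕ∞) = 6 + 1 := by norm_num
          _ ≤ 𝒱r.encard + 1 := add_le_add_left h6 1
          _ = (insert (Z \ (Wl ∪ Wr)) 𝒱r).encard := hins.symm
          _ ≤ 𝒰.encard := Set.encard_mono hsub𝒰
    refine ⟨𝒰, ?_, hcover, hdisj𝒰, ?_, ?_, ?_, ?_, ?_, ?_⟩
    · rintro u (rfl | hu | hu)
      · exact hV₀mem
      · exact (hA3 u hu).1
      · exact (hB3 u hu).1
    · intro x
      by_cases hx : x ∈ Z
      · have hx' : x ∈ ⋃₀ 𝒰 := hcover.symm ▸ hx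
        obtain ⟨u₀, hu₀, hxu₀⟩ := hx'
        refine ⟨u₀, ((hmemZ u₀ hu₀).2).mem_nhds hxu₀, ?_⟩
        rintro u ⟨hu, t, ht1, ht2⟩ v ⟨hv, s, hs1, hs2⟩
        have hu' : u = u₀ := by
          by_contra h
          exact Set.eq_empty_iff_forall_notMem.mp (hdisj𝒰 u hu u₀ hu₀ h) t ⟨ht1, ht2⟩
        have hv' : v = u₀ := by
          by_contra h
          exact Set.eq_empty_iff_forall_notMem.mp (hdisj𝒰 v hv u₀ hu₀ h) s ⟨hs1, hs2⟩
        rw [hu', hv']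
      · refine ⟨Zᶜ, (hZc.1.isOpen_compl).mem_nhds hx, ?_⟩
        rintro u ⟨hu, t, ht1, ht2⟩ v hv
        exact absurd ((hmemZ u hu).1 ht1) ht2
    · intro heq
      rw [heq] at hbig
      norm_num at hbig
    · rintro u (rfl | hu | hu) heq
      · exact absurd (heq ▸ (⟨hCV₀ hx₀C, hx₀C⟩ : x₀ ∈ (Z \ (Wl ∪ Wr)) ∩ C))
          (Set.notMem_empty x₀)
      · exact Or.inl (hsetBl u hu)
      · exact Or.inr (hsetBr u hu)
    · rcases hA8 with h0 | h1
      · rw [h0]; simp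
      · have h6 := hA7 (by rw [h1]; exact one_ne_zero)
        have hsubset : 𝒱l ⊆ {u | u ∈ 𝒰 ∧ setBelow u C} :=
          fun v hv => ⟨Set.mem_insert_of_mem _ (Or.inl hv), hsetBl v hv⟩
        have heq6 : 6 * ((ell C : ℕ) : ℕ∞) = 6 := by rw [h1]; norm_num
        rw [heq6]
        exact le_trans h6 (Set.encard_mono hsubset)
    · rcases hB8 with h0 | h1
      · rw [h0]; simp
      · have h6 := hB7 (by rw [h1]; exact one_ne_zero)
        have hsubset : 𝒱r ⊆ {u | u ∈ 𝒰 ∧ setBelow C u} :=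
          fun v hv => ⟨Set.mem_insert_of_mem _ (Or.inr hv), hsetBr v hv⟩
        have heq6 : 6 * ((rr C : ℕ) : ℕ∞) = 6 := by rw [h1]; norm_num
        rw [heq6]
        exact le_trans h6 (Set.encard_mono hsubset)
    · rintro u (rfl | hu | hu) heq
      · exact absurd (heq ▸ (⟨hCV₀ hx₀C, hx₀C⟩ : x₀ ∈ (Z \ (Wl ∪ Wr)) ∩ C))
          (Set.notMem_empty x₀)
      · have hsub' : u ⊆ Z ∩ Wl := hlmem u hu
        have hb : EMetric.diam u ≤ ENNReal.ofReal ε := by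
          apply diam_le_pairs
          intro t ht s hs hts
          obtain ⟨c, hc, hd⟩ := hZball t (hsub' ht).1
          exact (hconv t t s c le_rfl hts (hA2 (hsub' hs).2 c hc).le).trans hd.le
        exact hb.trans (ENNReal.ofReal_le_ofReal (by linarith))
      · have hsub' : u ⊆ Z ∩ Wr := hrmem u hu
        have hb : EMetric.diam u ≤ ENNReal.ofReal ε := by
          apply diam_le_pairs
          intro t ht s hs hts
          obtain ⟨c, hc, hd⟩ := hZball s (hsub' hs).1
          rw [dist_comm s c] at hd
          exact (hconv c t s s (hB2 (hsub' ht).2 c hc).le hts le_rfl).trans hd.le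
        exact hb.trans (ENNReal.ofReal_le_ofReal (by linarith))
end
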